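/- arXiv:1003.5346 — 5 statements merged into one kernel-verified Lean document; each statement's English description precedes it below -/
import Mathlib

section
/- Let P be a nonnegative stable n×n matrix and z ∈ ℝ^n with Pz ≤ z. If z_S ≥ 0 for some set S ⊆ {1,…,n} containing at least one element of each critical class of P, then z ≥ 0. -/
noncomputable section
open Filter Topology Set
open scoped Classical

/-- A square real matrix is *stable* if all of its orbits are bounded. -/
def MatStable {ι : Type*} [Fintype ι] [DecidableEq ι] (P : Matrix ι ι ℝ) : Prop :=
  ∀ x : ι → ℝ, ∃ c : ℝ, ∀ k : ℕ, ‖(P ^ k).mulVec x‖ ≤ c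

/-- Spectral radius of a real square matrix, via its complex spectrum. -/
def SpecRad {ι : Type*} [Fintype ι] (Q : Matrix ι ι ℝ) : ℝ :=
  haveI := Classical.decEq ι
  sSup {r : ℝ | ∃ μ : ℂ, μ ∈ spectrum ℂ (Q.map (fun a => (a : ℂ))) ∧ r = ‖μ‖}

/-- `i` has access to `j` in the digraph of the nonnegative matrix `P`. -/
def AccessM {n : ℕ} (P : Matrix (Fin n) (Fin n) ℝ) : Fin n → Fin n → Prop :=
  Relation.ReflTransGen (fun i j => 0 < P i j)

/-- `C` is a class of `P` (an equivalence class of mutual access). -/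
def IsClass {n : ℕ} (P : Matrix (Fin n) (Fin n) ℝ) (C : Set (Fin n)) : Prop :=
  ∃ i, C = {j | AccessM P i j ∧ AccessM P j i}

/-- Spectral radius of the principal submatrix `P_{CC}`. -/
def SpecRadOn {n : ℕ} (P : Matrix (Fin n) (Fin n) ℝ) (C : Set (Fin n)) : ℝ :=
  haveI : Fintype C := Fintype.ofFinite _
  SpecRad (Matrix.of fun i j : C => P i.1 j.1)

/-- A critical class of a stable nonnegative matrix. -/
def IsCriticalClass {n : ℕ} (P : Matrix (Fin n) (Fin n) ℝ) (C : Set (Fin n)) : Prop :=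
  IsClass P C ∧ SpecRadOn P C = 1

/-- The set of critical nodes of `P`. -/
def CriticalNodes {n : ℕ} (P : Matrix (Fin n) (Fin n) ℝ) : Set (Fin n) :=
  {i | ∃ C, IsCriticalClass P C ∧ i ∈ C}

/-- The subdifferential of `f` at `v` relative to the domain `D`. -/
def Subdiff {m n : ℕ} (f : (Fin m → ℝ) → (Fin n → ℝ)) (D : Set (Fin m → ℝ))
    (v : Fin m → ℝ) : Set (Matrix (Fin n) (Fin m) ℝ) :=
  {M | ∀ x ∈ D, M.mulVec (x - v) ≤ f x - f v}

lemma myEig_mem_spectrum {ι : Type*} [Fintype ι] [DecidableEq ι] (A : Matrix ι ι ℂ) {μ : ℂ}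
    {x : ι → ℂ} (hx : x ≠ 0) (hAx : A.mulVec x = μ • x) : μ ∈ spectrum ℂ A := by
  rw [spectrum.mem_iff]
  intro hUnit
  rw [Matrix.isUnit_iff_isUnit_det, isUnit_iff_ne_zero] at hUnit
  apply hUnit
  rw [← Matrix.exists_mulVec_eq_zero_iff]
  refine ⟨x, hx, ?_⟩
  have h : (algebraMap ℂ (Matrix ι ι ℂ) μ) = μ • (1 : Matrix ι ι ℂ) := Algebra.algebraMap_eq_smul_one μ
  rw [h, Matrix.sub_mulVec, Matrix.smul_mulVec, Matrix.one_mulVec, hAx, sub_self]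

lemma mySpectrum_eig {ι : Type*} [Fintype ι] [DecidableEq ι] (A : Matrix ι ι ℂ) {μ : ℂ}
    (h : μ ∈ spectrum ℂ A) : ∃ x : ι → ℂ, x ≠ 0 ∧ A.mulVec x = μ • x := by
  rw [spectrum.mem_iff] at h
  have hdet : (algebraMap ℂ (Matrix ι ι ℂ) μ - A).det = 0 := by
    by_contra hd
    exact h ((Matrix.isUnit_iff_isUnit_det _).2 (isUnit_iff_ne_zero.2 hd))
  rw [← Matrix.exists_mulVec_eq_zero_iff] at hdet
  obtain ⟨x, hx, hx0⟩ := hdet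
  refine ⟨x, hx, ?_⟩
  have h2 : (algebraMap ℂ (Matrix ι ι ℂ) μ) = μ • (1 : Matrix ι ι ℂ) := Algebra.algebraMap_eq_smul_one μ
  rw [h2, Matrix.sub_mulVec, Matrix.smul_mulVec, Matrix.one_mulVec, sub_eq_zero] at hx0
  exact hx0.symm

lemma myPow_mulVec_eig {ι : Type*} [Fintype ι] [DecidableEq ι] (A : Matrix ι ι ℂ) {μ : ℂ}
    {x : ι → ℂ} (hAx : A.mulVec x = μ • x) (k : ℕ) : (A ^ k).mulVec x = μ ^ k • x := by
  induction k with
  | zero => simp [Matrix.one_mulVec]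
  | succ k ih =>
      rw [pow_succ', ← Matrix.mulVec_mulVec, ih, Matrix.mulVec_smul, hAx, smul_smul, ← pow_succ]

lemma myEig_abs_le_one {ι : Type*} [Fintype ι] [DecidableEq ι] (A : Matrix ι ι ℂ) (c : ℝ)
    (hA : ∀ (k : ℕ) (i j : ι), ‖(A ^ k) i j‖ ≤ c) {μ : ℂ}
    (hμ : μ ∈ spectrum ℂ A) : ‖μ‖ ≤ 1 := by
  obtain ⟨x, hx, hAx⟩ := mySpectrum_eig A hμ
  obtain ⟨i, hi⟩ : ∃ i, x i ≠ 0 := by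
    by_contra h
    push_neg at h
    exact hx (funext h)
  by_contra hlt
  push_neg at hlt
  set B : ℝ := (∑ j, c * ‖x j‖) / ‖x i‖ with hB
  have hxi : 0 < ‖x i‖ := by exact norm_pos_iff.2 hi
  have hbound : ∀ k : ℕ, (‖μ‖) ^ k ≤ B := by
    intro k
    have h1 : ((A ^ k).mulVec x) i = μ ^ k * x i := by
      rw [myPow_mulVec_eig A hAx k]; simp
    have h2 : ‖μ ^ k * x i‖ ≤ ∑ j, c * ‖x j‖ := by
      rw [← h1]
      refine le_trans (norm_sum_le _ _) ?_
      refine Finset.sum_le_sum fun j _ => ?_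
      rw [norm_mul]
      exact mul_le_mul_of_nonneg_right (hA k i j) (norm_nonneg _)
    rw [norm_mul, norm_pow] at h2
    rw [hB, le_div_iff₀ hxi]
    exact h2
  obtain ⟨k, hk⟩ := ((tendsto_pow_atTop_atTop_of_one_lt hlt).eventually_gt_atTop B).exists
  exact absurd (hbound k) (not_le.2 hk)

lemma mySpecRad_eq_one {ι : Type*} [Fintype ι] (A : Matrix ι ι ℝ) (c : ℝ)
    (pseq : ℕ → Matrix ι ι ℝ) (h0 : ∀ x : ι → ℝ, (pseq 0).mulVec x = x)
    (hrec : ∀ k, pseq (k + 1) = pseq k * A)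
    (hpow : ∀ (k : ℕ) (i j : ι), |pseq k i j| ≤ c) {v : ι → ℝ} (i0 : ι) (hv0 : v i0 ≠ 0)
    (heig : A.mulVec v = v) : SpecRad A = 1 := by
  letI := Classical.decEq ι
  have hps : ∀ k, pseq k = A ^ k := by
    intro k
    induction k with
    | zero =>
        ext i j
        have h := congrFun (h0 (Pi.single j 1)) i
        rw [Matrix.mulVec_single] at h
        simp only [Pi.smul_apply, Matrix.col_apply, op_smul_eq_mul, mul_one] at h
        rw [pow_zero, h, Matrix.one_apply, Pi.single_apply]
    | succ k ih => rw [hrec k, ih, pow_succ]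
  have hpow' : ∀ (k : ℕ) (i j : ι), |(A ^ k) i j| ≤ c := by
    intro k i j; rw [← hps k]; exact hpow k i j
  rw [SpecRad]
  set Ac : Matrix ι ι ℂ := A.map (fun a => (a : ℂ)) with hAc
  have hAcpow : ∀ k : ℕ, Ac ^ k = (A ^ k).map (fun a => (a : ℂ)) := by
    intro k
    have h : Ac = Complex.ofRealHom.mapMatrix A := rfl
    rw [h, ← map_pow]
    rfl
  have hbnd : ∀ (k : ℕ) (i j : ι), ‖(Ac ^ k) i j‖ ≤ c := by
    intro k i j
    rw [hAcpow k]
    simpa [Matrix.map_apply, Complex.norm_real, Real.norm_eq_abs] using hpow' k i j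
  have heigc : Ac.mulVec (fun i => (v i : ℂ)) = (1 : ℂ) • (fun i => (v i : ℂ)) := by
    funext i
    have h0' : A.mulVec v i = v i := congrFun heig i
    simp only [Matrix.mulVec, dotProduct, Matrix.map_apply, one_smul, hAc, Pi.smul_apply,
      smul_eq_mul, one_mul]
    rw [show ∑ j, ((A i j : ℂ) * (v j : ℂ)) = ((∑ j, A i j * v j : ℝ) : ℂ) by push_cast; ring_nf]
    rw [show (∑ j, A i j * v j) = A.mulVec v i from rfl, h0']
  have hvne : (fun i => (v i : ℂ)) ≠ 0 := by
    intro h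
    exact hv0 (by simpa using congrFun h i0)
  have h1mem : (1 : ℝ) ∈ {r : ℝ | ∃ μ : ℂ, μ ∈ spectrum ℂ Ac ∧ r = ‖μ‖} :=
    ⟨1, myEig_mem_spectrum Ac hvne heigc, by simp⟩
  have hub : ∀ r ∈ {r : ℝ | ∃ μ : ℂ, μ ∈ spectrum ℂ Ac ∧ r = ‖μ‖}, r ≤ 1 := by
    rintro r ⟨μ, hμ, rfl⟩
    exact myEig_abs_le_one Ac c hbnd hμ
  exact le_antisymm (csSup_le ⟨1, h1mem⟩ hub) (le_csSup ⟨1, hub⟩ h1mem)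

lemma myMulVec_apply' {ι : Type*} [Fintype ι] (P : Matrix ι ι ℝ) (x : ι → ℝ) (i : ι) :
    P.mulVec x i = ∑ j, P i j * x j := rfl

lemma myMulVec_apply {n : ℕ} (P : Matrix (Fin n) (Fin n) ℝ) (x : Fin n → ℝ) (i : Fin n) :
    P.mulVec x i = ∑ j, P i j * x j := rfl

lemma myMulVec_mono {n : ℕ} (P : Matrix (Fin n) (Fin n) ℝ) (hpos : ∀ i j, 0 ≤ P i j)
    {x y : Fin n → ℝ} (h : x ≤ y) : P.mulVec x ≤ P.mulVec y := by
  intro i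
  rw [myMulVec_apply, myMulVec_apply]
  exact Finset.sum_le_sum fun j _ => mul_le_mul_of_nonneg_left (h j) (hpos i j)

lemma myPowPos {n : ℕ} (P : Matrix (Fin n) (Fin n) ℝ) (hpos : ∀ i j, 0 ≤ P i j) :
    ∀ (k : ℕ) (i j : Fin n), 0 ≤ (P ^ k) i j := by
  intro k
  induction k with
  | zero => intro i j; rw [pow_zero, Matrix.one_apply]; positivity
  | succ k ih =>
      intro i j
      rw [pow_succ, Matrix.mul_apply]
      exact Finset.sum_nonneg fun a _ => mul_nonneg (ih i a) (hpos a j)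

lemma myEntryBound {n : ℕ} (P : Matrix (Fin n) (Fin n) ℝ) (hstab : MatStable P) :
    ∃ c : ℝ, 0 ≤ c ∧ ∀ (k : ℕ) (i j : Fin n), |(P ^ k) i j| ≤ c := by
  choose cs hcs using fun j => hstab (Pi.single j 1)
  refine ⟨∑ j, |cs j|, Finset.sum_nonneg fun j _ => abs_nonneg _, fun k i j => ?_⟩
  have h1 : (P ^ k).mulVec (Pi.single j 1) i = (P ^ k) i j := by
    rw [Matrix.mulVec_single]; simp
  have h2 : |(P ^ k) i j| ≤ ‖(P ^ k).mulVec (Pi.single j 1)‖ := by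
    rw [← h1, ← Real.norm_eq_abs]
    exact norm_le_pi_norm _ i
  refine h2.trans ((hcs j k).trans ?_)
  calc cs j ≤ |cs j| := le_abs_self _
    _ ≤ ∑ j', |cs j'| := Finset.single_le_sum (fun j' _ => abs_nonneg (cs j')) (Finset.mem_univ j)

/-- if P is a nonnegative stable matrix, P z ≤ z, and z is nonnegative
on a set S meeting every critical class, then z is nonnegative. -/
theorem stmt10 {n : ℕ} (P : Matrix (Fin n) (Fin n) ℝ)
    (hpos : ∀ i j, 0 ≤ P i j) (hstab : MatStable P)
    (z : Fin n → ℝ) (hz : P.mulVec z ≤ z)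
    (S : Set (Fin n)) (hS : ∀ C : Set (Fin n), IsCriticalClass P C → (C ∩ S).Nonempty)
    (hzS : ∀ i ∈ S, 0 ≤ z i) :
    0 ≤ z := by
  by_contra hcon
  obtain ⟨i₁, hi₁⟩ : ∃ i, z i < 0 := by
    rw [Pi.le_def] at hcon
    push_neg at hcon
    obtain ⟨i, hi⟩ := hcon
    exact ⟨i, by simpa using hi⟩
  -- the negative part of z
  clear hcon
  set u : Fin n → ℝ := fun i => max (-z i) 0 with hu_def
  have hu0 : ∀ i, 0 ≤ u i := fun i => le_max_right _ _
  have huS : ∀ i ∈ S, u i = 0 := by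
    intro i hi
    exact max_eq_right (neg_nonpos.2 (hzS i hi))
  have hui₁ : 0 < u i₁ := lt_max_iff.2 (Or.inl (by linarith))
  have huP : ∀ i, u i ≤ P.mulVec u i := by
    intro i
    have h1 : 0 ≤ P.mulVec u i := by
      rw [myMulVec_apply]
      exact Finset.sum_nonneg fun j _ => mul_nonneg (hpos i j) (hu0 j)
    have h2 : -z i ≤ P.mulVec u i := by
      have hb : ∀ j, P i j * (-z j) ≤ P i j * u j := fun j =>
        mul_le_mul_of_nonneg_left (le_max_left _ _) (hpos i j)
      have : -(P.mulVec z i) ≤ P.mulVec u i := by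
        rw [myMulVec_apply, myMulVec_apply, ← Finset.sum_neg_distrib]
        exact Finset.sum_le_sum fun j _ => by rw [← mul_neg]; exact hb j
      linarith [hz i]
    exact max_le h2 h1
  obtain ⟨c, hc0, hcP⟩ := myEntryBound P hstab
  have hPk0 := myPowPos P hpos
  -- the orbit of u
  set y : ℕ → Fin n → ℝ := fun k => (P ^ k).mulVec u with hy_def
  have hy0 : y 0 = u := by rw [hy_def]; simp [Matrix.one_mulVec]
  have hysucc : ∀ k, y (k + 1) = P.mulVec (y k) := by
    intro k
    rw [hy_def]
    simp only []
    rw [Matrix.mulVec_mulVec, ← pow_succ']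
  have hymono : ∀ k, y k ≤ y (k + 1) := by
    intro k
    induction k with
    | zero => rw [hy0, hysucc 0, hy0]; exact huP
    | succ k ih =>
        have h := myMulVec_mono P hpos ih
        rw [← hysucc k, ← hysucc (k+1)] at h
        exact h
  have hymono' : ∀ i, Monotone fun k => y k i :=
    fun i => monotone_nat_of_le_succ fun k => hymono k i
  have hybdd : ∀ i, BddAbove (range fun k => y k i) := by
    intro i
    obtain ⟨cu, hcu⟩ := hstab u
    refine ⟨cu, ?_⟩
    rintro r ⟨k, rfl⟩
    calc y k i ≤ |y k i| := le_abs_self _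
      _ ≤ ‖y k‖ := by rw [← Real.norm_eq_abs]; exact norm_le_pi_norm _ i
      _ ≤ cu := hcu k
  set v : Fin n → ℝ := fun i => ⨆ k, y k i with hv_def
  have hytv : ∀ i, Tendsto (fun k => y k i) atTop (𝓝 (v i)) :=
    fun i => tendsto_atTop_ciSup (hymono' i) (hybdd i)
  have hylev : ∀ k i, y k i ≤ v i := fun k i => le_ciSup (hybdd i) k
  have hyk0 : ∀ k i, 0 ≤ y k i := by
    intro k i
    show 0 ≤ (P ^ k).mulVec u i
    rw [myMulVec_apply]
    exact Finset.sum_nonneg fun j _ => mul_nonneg (hPk0 k i j) (hu0 j)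
  have huv : ∀ i, u i ≤ v i := fun i => hy0 ▸ hylev 0 i
  have hv0 : ∀ i, 0 ≤ v i := fun i => le_trans (hu0 i) (huv i)
  have hPv : ∀ i, P.mulVec v i = v i := by
    intro i
    have h1 : Tendsto (fun k => P.mulVec (y k) i) atTop (𝓝 (P.mulVec v i)) := by
      simp only [myMulVec_apply]
      exact tendsto_finset_sum _ fun j _ => ((hytv j).const_mul (P i j))
    have h2 : Tendsto (fun k => y (k + 1) i) atTop (𝓝 (v i)) :=
      (hytv i).comp (tendsto_add_atTop_nat 1)
    have h3 : (fun k => P.mulVec (y k) i) = fun k => y (k + 1) i := by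
      funext k; rw [hysucc k]
    rw [h3] at h1
    exact tendsto_nhds_unique h1 h2
  -- support of v is predecessor-closed
  have hvpred : ∀ i j, 0 < P i j → 0 < v j → 0 < v i := by
    intro i j hij hvj
    have h1 : P i j * v j ≤ ∑ a, P i a * v a :=
      Finset.single_le_sum (fun a _ => mul_nonneg (hpos i a) (hv0 a)) (Finset.mem_univ j)
    have h2 : 0 < P i j * v j := mul_pos hij hvj
    calc (0:ℝ) < P i j * v j := h2
      _ ≤ ∑ a, P i a * v a := h1
      _ = P.mulVec v i := (myMulVec_apply P v i).symm
      _ = v i := hPv i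
  have hvacc : ∀ i j, AccessM P i j → 0 < v j → 0 < v i := by
    intro i j hacc hvj
    induction hacc using Relation.ReflTransGen.head_induction_on with
    | refl => exact hvj
    | head hedge _ ih => exact hvpred _ _ hedge ih
  -- choose i0 in the support of v with minimal reach
  set reachCard : Fin n → ℕ := fun i => (Finset.univ.filter (fun j => AccessM P i j)).card
    with hreach_def
  have hFne : (Finset.univ.filter (fun i => 0 < v i)).Nonempty :=
    ⟨i₁, by simp only [Finset.mem_filter, Finset.mem_univ, true_and]; exact lt_of_lt_of_le hui₁ (huv i₁)⟩
  obtain ⟨i0, hi0F, hi0min⟩ := Finset.exists_min_image _ reachCard hFne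
  have hvi0 : 0 < v i0 := by
    simpa only [Finset.mem_filter, Finset.mem_univ, true_and] using hi0F
  have hfinal : ∀ j, 0 < v j → AccessM P i0 j → AccessM P j i0 := by
    intro j hvj hacc
    by_contra hno
    have hsub : (Finset.univ.filter (fun a => AccessM P j a)) ⊆
        (Finset.univ.filter (fun a => AccessM P i0 a)) := by
      intro a ha
      simp only [Finset.mem_filter, Finset.mem_univ, true_and] at ha ⊢
      exact hacc.trans ha
    have hss : (Finset.univ.filter (fun a => AccessM P j a)) ⊂
        (Finset.univ.filter (fun a => AccessM P i0 a)) := by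
      refine (Finset.ssubset_iff_of_subset hsub).2 ⟨i0, ?_, ?_⟩
      · simp only [Finset.mem_filter, Finset.mem_univ, true_and]
        exact Relation.ReflTransGen.refl
      · simp only [Finset.mem_filter, Finset.mem_univ, true_and]
        exact hno
    have hlt : reachCard j < reachCard i0 := Finset.card_lt_card hss
    have hmem : j ∈ Finset.univ.filter (fun i => 0 < v i) := by
      simp only [Finset.mem_filter, Finset.mem_univ, true_and]; exact hvj
    exact absurd (hi0min j hmem) (not_le.2 hlt)
  -- the class of i0
  set C : Set (Fin n) := {j | AccessM P i0 j ∧ AccessM P j i0} with hC_def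
  letI : Fintype C := Fintype.ofFinite _
  have hi0C : i0 ∈ C := ⟨Relation.ReflTransGen.refl, Relation.ReflTransGen.refl⟩
  have hCF : ∀ j ∈ C, 0 < v j := fun j hj => hvacc j i0 hj.2 hvi0
  have hclose : ∀ i ∈ C, ∀ j, 0 < P i j → 0 < v j → j ∈ C := by
    intro i hi j hij hvj
    have hacc : AccessM P i0 j := hi.1.trans (Relation.ReflTransGen.single hij)
    exact ⟨hacc, hfinal j hvj hacc⟩
  have hclose' : ∀ i ∈ C, ∀ j, j ∉ C → P i j * v j = 0 := by
    intro i hi j hj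
    rcases eq_or_lt_of_le (hpos i j) with h | h
    · rw [← h, zero_mul]
    · rcases eq_or_lt_of_le (hv0 j) with h2 | h2
      · rw [← h2, mul_zero]
      · exact absurd (hclose i hi j h h2) hj
  have hvCeig : ∀ i ∈ C, ∑ j ∈ C.toFinset, P i j * v j = v i := by
    intro i hi
    rw [show v i = P.mulVec v i from (hPv i).symm, myMulVec_apply]
    exact Finset.sum_subset (Finset.subset_univ _)
      (fun j _ hj => hclose' i hi j (fun hc => hj (Set.mem_toFinset.mpr hc)))
  have hyCdyn : ∀ k, ∀ i ∈ C, y (k + 1) i = ∑ j ∈ C.toFinset, P i j * y k j := by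
    intro k i hi
    rw [hysucc k, myMulVec_apply]
    refine (Finset.sum_subset (Finset.subset_univ _) (fun j _ hj => ?_)).symm
    have hj' : j ∉ C := fun hc => hj (Set.mem_toFinset.mpr hc)
    rcases eq_or_lt_of_le (hpos i j) with h | h
    · rw [← h, zero_mul]
    · have hvj : v j = 0 := by
        rcases eq_or_lt_of_le (hv0 j) with h2 | h2
        · exact h2.symm
        · exact absurd (hclose i hi j h h2) hj'
      have : y k j = 0 := le_antisymm (hvj ▸ hylev k j) (hyk0 k j)
      rw [this, mul_zero]
  -- C is a critical class
  have hcrit : IsCriticalClass P C := by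
    constructor
    · exact ⟨i0, rfl⟩
    · show SpecRadOn P C = 1
      rw [SpecRadOn]
      set Q : Matrix C C ℝ := Matrix.of (fun i j : C => P i.1 j.1) with hQ_def
      have hQpow : ∀ (k : ℕ) (i j : C), 0 ≤ (Q ^ k) i j ∧ (Q ^ k) i j ≤ (P ^ k) i.1 j.1 := by
        intro k
        induction k with
        | zero =>
            intro i j
            rw [pow_zero, pow_zero, Matrix.one_apply, Matrix.one_apply]
            by_cases h : i = j
            · subst h; simp
            · rw [if_neg h, if_neg (fun hh => h (Subtype.ext hh))]
              simp
        | succ k ih =>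
            intro i j
            rw [pow_succ, pow_succ, Matrix.mul_apply, Matrix.mul_apply]
            constructor
            · exact Finset.sum_nonneg fun a _ => mul_nonneg (ih i a).1
                (by simpa [hQ_def] using hpos a.1 j.1)
            · have step1 : ∑ a : C, (Q ^ k) i a * Q a j ≤ ∑ a : C, (P ^ k) i.1 a.1 * P a.1 j.1 :=
                Finset.sum_le_sum fun a _ => mul_le_mul (ih i a).2 (le_refl _)
                  (by simpa [hQ_def] using hpos a.1 j.1) (hPk0 k i.1 a.1)
              have step2 : ∑ a : C, (P ^ k) i.1 a.1 * P a.1 j.1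
                  = ∑ a ∈ C.toFinset, (P ^ k) i.1 a * P a j.1 := by
                rw [Finset.sum_subtype C.toFinset (fun x => Set.mem_toFinset) 
                  (fun a => (P ^ k) i.1 a * P a j.1)]
              have step3 : ∑ a ∈ C.toFinset, (P ^ k) i.1 a * P a j.1
                  ≤ ∑ a, (P ^ k) i.1 a * P a j.1 :=
                Finset.sum_le_sum_of_subset_of_nonneg (Finset.subset_univ _)
                  (fun a _ _ => mul_nonneg (hPk0 k i.1 a) (hpos a j.1))
              calc ∑ a : C, (Q ^ k) i a * Q a j ≤ ∑ a : C, (P ^ k) i.1 a.1 * P a.1 j.1 := step1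
                _ = ∑ a ∈ C.toFinset, (P ^ k) i.1 a * P a j.1 := step2
                _ ≤ ∑ a, (P ^ k) i.1 a * P a j.1 := step3
      have hQbnd : ∀ (k : ℕ) (i j : C), |(Q ^ k) i j| ≤ c := by
        intro k i j
        rw [abs_of_nonneg (hQpow k i j).1]
        exact le_trans (hQpow k i j).2 (le_trans (le_abs_self _) (hcP k i.1 j.1))
      have hQeig : Q.mulVec (fun i : C => v i.1) = fun i : C => v i.1 := by
        funext i
        rw [myMulVec_apply']
        have : ∑ j : C, Q i j * v j.1 = ∑ j ∈ C.toFinset, P i.1 j * v j := by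
          rw [Finset.sum_subtype C.toFinset (fun x => Set.mem_toFinset) (fun j => P i.1 j * v j)]
          rfl
        rw [this, hvCeig i.1 i.2]
      exact mySpecRad_eq_one Q c (fun k => Q ^ k) (fun x => by show (Q ^ 0).mulVec x = x; rw [pow_zero, Matrix.one_mulVec])
        (fun k => pow_succ Q k) hQbnd (⟨i0, hi0C⟩ : C) (ne_of_gt hvi0) hQeig
  obtain ⟨s, hsC, hsS⟩ := hS C hcrit
  have hus : u s = 0 := huS s hsS
  have hvs : 0 < v s := hCF s hsC
  -- iterated left multiplication by P restricted to C, started from the delta at s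
  set T : (Fin n → ℝ) → (Fin n → ℝ) :=
    fun x j => if j ∈ C then ∑ i ∈ C.toFinset, x i * P i j else 0 with hT_def
  set R : ℕ → Fin n → ℝ := fun k => T^[k] (fun j => if j = s then 1 else 0) with hR_def
  have hR0 : R 0 = fun j => if j = s then 1 else 0 := rfl
  have hRsucc : ∀ k, R (k + 1) = T (R k) := by
    intro k
    show T^[k+1] _ = _
    rw [Function.iterate_succ_apply']
  have hRnn : ∀ k j, 0 ≤ R k j := by
    intro k
    induction k with
    | zero =>
        intro j
        rw [hR0]
        dsimp only
        split <;> norm_num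
    | succ k ih =>
        intro j
        rw [hRsucc k]
        show (0:ℝ) ≤ if j ∈ C then ∑ i ∈ C.toFinset, R k i * P i j else 0
        split
        · exact Finset.sum_nonneg fun i _ => mul_nonneg (ih i) (hpos i j)
        · exact le_refl 0
  have hRle : ∀ k j, R k j ≤ (P ^ k) s j := by
    intro k
    induction k with
    | zero =>
        intro j
        rw [hR0, pow_zero, Matrix.one_apply]
        dsimp only
        by_cases h : j = s
        · rw [if_pos h, if_pos h.symm]
        · rw [if_neg h, if_neg (fun hh => h hh.symm)]
    | succ k ih =>
        intro j
        rw [hRsucc k, pow_succ, Matrix.mul_apply]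
        show (if j ∈ C then ∑ i ∈ C.toFinset, R k i * P i j else 0) ≤ _
        split
        · calc ∑ i ∈ C.toFinset, R k i * P i j
              ≤ ∑ i ∈ C.toFinset, (P ^ k) s i * P i j :=
                Finset.sum_le_sum fun i _ => mul_le_mul_of_nonneg_right (ih i) (hpos i j)
            _ ≤ ∑ i, (P ^ k) s i * P i j :=
                Finset.sum_le_sum_of_subset_of_nonneg (Finset.subset_univ _)
                  (fun i _ _ => mul_nonneg (hPk0 k s i) (hpos i j))
        · exact Finset.sum_nonneg fun i _ => mul_nonneg (hPk0 k s i) (hpos i j)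
  have hRbnd : ∀ k j, R k j ≤ c := fun k j => (hRle k j).trans ((le_abs_self _).trans (hcP k s j))
  have hRv : ∀ k, ∑ j ∈ C.toFinset, R k j * v j = v s := by
    intro k
    induction k with
    | zero =>
        rw [hR0]
        simp only [ite_mul, one_mul, zero_mul, Finset.sum_ite_eq', Set.mem_toFinset]
        rw [if_pos hsC]
    | succ k ih =>
        have h1 : ∑ j ∈ C.toFinset, R (k+1) j * v j
            = ∑ j ∈ C.toFinset, (∑ i ∈ C.toFinset, R k i * P i j) * v j := by
          refine Finset.sum_congr rfl fun j hj => ?_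
          rw [hRsucc k]
          show (if j ∈ C then ∑ i ∈ C.toFinset, R k i * P i j else 0) * v j = _
          rw [if_pos (Set.mem_toFinset.mp hj)]
        have h2 : ∑ j ∈ C.toFinset, (∑ i ∈ C.toFinset, R k i * P i j) * v j
            = ∑ i ∈ C.toFinset, R k i * ∑ j ∈ C.toFinset, P i j * v j := by
          simp only [Finset.sum_mul, Finset.mul_sum, mul_assoc]
          exact Finset.sum_comm
        have h3 : ∑ i ∈ C.toFinset, R k i * ∑ j ∈ C.toFinset, P i j * v j
            = ∑ i ∈ C.toFinset, R k i * v i :=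
          Finset.sum_congr rfl fun i hi => by rw [hvCeig i (Set.mem_toFinset.mp hi)]
        rw [h1, h2, h3, ih]
  -- Cesàro averages of R
  set Φ : ℕ → Fin n → ℝ := fun N j => (∑ k ∈ Finset.range N, R k j) / N with hPhi_def
  have hΦmem : ∀ N, Φ N ∈ Icc (0 : Fin n → ℝ) (fun _ => c) := by
    intro N
    constructor
    · intro j
      exact div_nonneg (Finset.sum_nonneg fun k _ => hRnn k j) (Nat.cast_nonneg N)
    · intro j
      show (∑ k ∈ Finset.range N, R k j) / N ≤ c
      rcases Nat.eq_zero_or_pos N with h | h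
      · subst h; simp [hc0]
      · rw [div_le_iff₀ (by exact_mod_cast h)]
        calc ∑ k ∈ Finset.range N, R k j ≤ ∑ _k ∈ Finset.range N, c :=
              Finset.sum_le_sum fun k _ => hRbnd k j
          _ = N * c := by rw [Finset.sum_const, Finset.card_range, nsmul_eq_mul]
          _ = c * N := mul_comm _ _
  obtain ⟨φ, hφIcc, g, hg, hgt⟩ := (isCompact_Icc).tendsto_subseq hΦmem
  have hφt : ∀ j, Tendsto (fun m => Φ (g m) j) atTop (𝓝 (φ j)) :=
    fun j => tendsto_pi_nhds.mp hgt j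
  have hφ0 : ∀ j, 0 ≤ φ j := fun j => hφIcc.1 j
  have hgm : ∀ m, m ≤ g m := fun m => hg.le_apply
  have hgtop : Tendsto (fun m => (g m : ℝ)) atTop atTop :=
    tendsto_natCast_atTop_atTop.comp hg.tendsto_atTop
  have hφeig : ∀ j ∈ C, ∑ i ∈ C.toFinset, φ i * P i j = φ j := by
    intro j hjC
    have e2 : ∀ k, ∑ i ∈ C.toFinset, R k i * P i j = R (k+1) j := by
      intro k
      rw [hRsucc k]
      show _ = if j ∈ C then ∑ i ∈ C.toFinset, R k i * P i j else 0
      rw [if_pos hjC]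
    have hId : ∀ N : ℕ, ∑ i ∈ C.toFinset, Φ N i * P i j
        = Φ N j + (R N j - R 0 j) / N := by
      intro N
      have e1 : ∑ i ∈ C.toFinset, Φ N i * P i j
          = (∑ k ∈ Finset.range N, ∑ i ∈ C.toFinset, R k i * P i j) / N := by
        have t1 : ∀ i, Φ N i * P i j = (∑ k ∈ Finset.range N, R k i * P i j) / N := by
          intro i
          show (∑ k ∈ Finset.range N, R k i) / (N:ℝ) * P i j = _
          rw [div_mul_eq_mul_div, Finset.sum_mul]
        rw [Finset.sum_congr rfl fun i _ => t1 i, ← Finset.sum_div, Finset.sum_comm]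
      have e3 : ∑ k ∈ Finset.range N, R (k+1) j
          = ∑ k ∈ Finset.range N, R k j + R N j - R 0 j := by
        have ha := Finset.sum_range_succ' (fun k => R k j) N
        have hb := Finset.sum_range_succ (fun k => R k j) N
        linarith
      rw [e1, Finset.sum_congr rfl fun k _ => e2 k, e3]
      rw [show ∑ k ∈ Finset.range N, R k j + R N j - R 0 j
          = ∑ k ∈ Finset.range N, R k j + (R N j - R 0 j) by ring, add_div]
    have herr : Tendsto (fun m => (R (g m) j - R 0 j) / (g m : ℝ)) atTop (𝓝 0) := by
      have hb : ∀ m : ℕ, ‖(R (g m) j - R 0 j) / (g m : ℝ)‖ ≤ (c + 1) / (g m : ℝ) := by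
        intro m
        rw [Real.norm_eq_abs, abs_div, abs_of_nonneg (by positivity : (0:ℝ) ≤ (g m : ℝ))]
        rcases Nat.eq_zero_or_pos (g m) with h | h
        · rw [h]; simp
        · have hnum : |R (g m) j - R 0 j| ≤ c + 1 := by
            have h1 : |R (g m) j| ≤ c := abs_le.2 ⟨by linarith [hRnn (g m) j], hRbnd (g m) j⟩
            have h2 : |R 0 j| ≤ 1 := by
              rw [hR0]
              dsimp only
              split <;> norm_num
            calc |R (g m) j - R 0 j| ≤ |R (g m) j| + |R 0 j| := abs_sub _ _
              _ ≤ c + 1 := add_le_add h1 h2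
          have hgp : (0:ℝ) < (g m : ℝ) := by exact_mod_cast h
          exact (div_le_div_iff_of_pos_right hgp).mpr hnum
      exact squeeze_zero_norm hb (Tendsto.div_atTop tendsto_const_nhds hgtop)
    have hlim1 : Tendsto (fun m => ∑ i ∈ C.toFinset, Φ (g m) i * P i j) atTop
        (𝓝 (∑ i ∈ C.toFinset, φ i * P i j)) :=
      tendsto_finset_sum _ fun i _ => (hφt i).mul_const _
    have hlim2 : Tendsto (fun m => Φ (g m) j + (R (g m) j - R 0 j) / (g m : ℝ)) atTop
        (𝓝 (φ j + 0)) := (hφt j).add herr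
    rw [add_zero] at hlim2
    rw [show (fun m => ∑ i ∈ C.toFinset, Φ (g m) i * P i j)
        = fun m => Φ (g m) j + (R (g m) j - R 0 j) / (g m : ℝ) from funext fun m => hId (g m)]
      at hlim1
    exact tendsto_nhds_unique hlim1 hlim2
  have hφv : ∑ j ∈ C.toFinset, φ j * v j = v s := by
    have hId : ∀ N : ℕ, 1 ≤ N → ∑ j ∈ C.toFinset, Φ N j * v j = v s := by
      intro N hN
      have e1 : ∑ j ∈ C.toFinset, Φ N j * v j
          = (∑ k ∈ Finset.range N, ∑ j ∈ C.toFinset, R k j * v j) / N := by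
        have t1 : ∀ j, Φ N j * v j = (∑ k ∈ Finset.range N, R k j * v j) / N := by
          intro j
          show (∑ k ∈ Finset.range N, R k j) / (N:ℝ) * v j = _
          rw [div_mul_eq_mul_div, Finset.sum_mul]
        rw [Finset.sum_congr rfl fun j _ => t1 j, ← Finset.sum_div, Finset.sum_comm]
      rw [e1, Finset.sum_congr rfl fun k _ => hRv k, Finset.sum_const, Finset.card_range,
        nsmul_eq_mul]
      have hNne : (N:ℝ) ≠ 0 := by
        have : 0 < N := hN
        positivity
      exact mul_div_cancel_left₀ (v s) hNne
    have hlim : Tendsto (fun m => ∑ j ∈ C.toFinset, Φ (g m) j * v j) atTop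
        (𝓝 (∑ j ∈ C.toFinset, φ j * v j)) :=
      tendsto_finset_sum _ fun j _ => (hφt j).mul_const _
    have hconst : Tendsto (fun m => ∑ j ∈ C.toFinset, Φ (g m) j * v j) atTop (𝓝 (v s)) := by
      refine Tendsto.congr' ?_ tendsto_const_nhds
      filter_upwards [eventually_ge_atTop 1] with m hm
      exact (hId (g m) (le_trans hm (hgm m))).symm
    exact tendsto_nhds_unique hlim hconst
  obtain ⟨j0, hj0C, hφj0⟩ : ∃ j0 ∈ C.toFinset, 0 < φ j0 := by
    by_contra h
    push_neg at h
    have hz0 : ∑ j ∈ C.toFinset, φ j * v j = 0 :=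
      Finset.sum_eq_zero fun j hj => by
        rw [le_antisymm (h j hj) (hφ0 j), zero_mul]
    exact (ne_of_gt hvs) (by rw [← hφv, hz0])
  have haccC : ∀ a b : Fin n, AccessM P a b → a ∈ C → b ∈ C →
      Relation.ReflTransGen (fun x y => 0 < P x y ∧ x ∈ C ∧ y ∈ C) a b := by
    intro a b hab
    induction hab with
    | refl => intro _ _; exact Relation.ReflTransGen.refl
    | @tail b' c' hab' he ih =>
        intro haC hcC
        have hedge : AccessM P b' c' := Relation.ReflTransGen.single he
        have hbC : b' ∈ C := ⟨haC.1.trans hab', hedge.trans hcC.2⟩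
        exact (ih haC hbC).tail ⟨he, hbC, hcC⟩
  have hprop : ∀ a b : Fin n, Relation.ReflTransGen (fun x y => 0 < P x y ∧ x ∈ C ∧ y ∈ C) a b →
      0 < φ a → 0 < φ b := by
    intro a b h
    induction h with
    | refl => exact id
    | @tail b' c' _ he ih =>
        intro ha
        have hb := ih ha
        rw [← hφeig c' he.2.2]
        have hle : φ b' * P b' c' ≤ ∑ i ∈ C.toFinset, φ i * P i c' :=
          Finset.single_le_sum (fun i _ => mul_nonneg (hφ0 i) (hpos i c'))
            (Set.mem_toFinset.mpr he.2.1)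
        exact lt_of_lt_of_le (mul_pos hb he.1) hle
  have hφs : 0 < φ s := by
    have hj0C' : j0 ∈ C := Set.mem_toFinset.mp hj0C
    exact hprop j0 s (haccC j0 s (hj0C'.2.trans hsC.1) hj0C' hsC) hφj0
  have hak : ∀ k, ∑ j ∈ C.toFinset, φ j * y k j = ∑ j ∈ C.toFinset, φ j * u j := by
    intro k
    induction k with
    | zero => rw [hy0]
    | succ k ih =>
        have h1 : ∑ j ∈ C.toFinset, φ j * y (k+1) j
            = ∑ j ∈ C.toFinset, φ j * ∑ i ∈ C.toFinset, P j i * y k i :=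
          Finset.sum_congr rfl fun j hj => by rw [hyCdyn k j (Set.mem_toFinset.mp hj)]
        have h2 : ∑ j ∈ C.toFinset, φ j * ∑ i ∈ C.toFinset, P j i * y k i
            = ∑ i ∈ C.toFinset, (∑ j ∈ C.toFinset, φ j * P j i) * y k i := by
          simp only [Finset.mul_sum, Finset.sum_mul, mul_assoc]
          exact Finset.sum_comm
        have h3 : ∑ i ∈ C.toFinset, (∑ j ∈ C.toFinset, φ j * P j i) * y k i
            = ∑ i ∈ C.toFinset, φ i * y k i :=
          Finset.sum_congr rfl fun i hi => by rw [hφeig i (Set.mem_toFinset.mp hi)]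
        rw [h1, h2, h3, ih]
  have hveq : ∑ j ∈ C.toFinset, φ j * v j = ∑ j ∈ C.toFinset, φ j * u j := by
    have hlimk : Tendsto (fun k => ∑ j ∈ C.toFinset, φ j * y k j) atTop
        (𝓝 (∑ j ∈ C.toFinset, φ j * v j)) :=
      tendsto_finset_sum _ fun j _ => (hytv j).const_mul _
    have h2 : Tendsto (fun k => ∑ j ∈ C.toFinset, φ j * y k j) atTop
        (𝓝 (∑ j ∈ C.toFinset, φ j * u j)) := by
      rw [show (fun k => ∑ j ∈ C.toFinset, φ j * y k j)
          = fun _ => ∑ j ∈ C.toFinset, φ j * u j from funext hak]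
      exact tendsto_const_nhds
    exact tendsto_nhds_unique hlimk h2
  have hzero : ∑ j ∈ C.toFinset, φ j * (v j - u j) = 0 := by
    simp only [mul_sub, Finset.sum_sub_distrib]
    rw [hveq, sub_self]
  have hterm : φ s * (v s - u s) = 0 :=
    (Finset.sum_eq_zero_iff_of_nonneg
      (fun j _ => mul_nonneg (hφ0 j) (sub_nonneg.2 (huv j)))).1 hzero s
      (Set.mem_toFinset.mpr hsC)
  rw [hus, sub_zero] at hterm
  rcases mul_eq_zero.1 hterm with h | h
  · exact (ne_of_gt hφs) h
  · exact (ne_of_gt hvs) h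
end
end

section
/- Let f : D → D be a convex monotone map (D ⊆ ℝ^n open convex). If v and w are both tangentially stable fixed points of f, then the critical graphs of ∂f(v) and ∂f(w) coincide: G^c(∂f(v)) = G^c(∂f(w)). -/
noncomputable section
open Filter Topology Set
open scoped Classical

/-! ### Auxiliary machinery -/

set_option linter.unusedSectionVars false
set_option linter.unusedVariables false

namespace Stmt13Aux
open Matrix

variable {ι : Type*} [Fintype ι]

def mvIt (A : Matrix ι ι ℝ) (m : ℕ) (x : ι → ℝ) : ι → ℝ := (fun y => A *ᵥ y)^[m] x

def mvItC (M : Matrix ι ι ℂ) (m : ℕ) (z : ι → ℂ) : ι → ℂ := (fun y => M *ᵥ y)^[m] z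

def cSpec (A : Matrix ι ι ℝ) : Set ℂ :=
  haveI := Classical.decEq ι
  spectrum ℂ (A.map (fun a => (a : ℂ)))

lemma specRad_def (A : Matrix ι ι ℝ) :
    SpecRad A = sSup {r : ℝ | ∃ μ ∈ cSpec A, r = ‖μ‖} := rfl

lemma specRad_congr {i1 i2 : Fintype ι} (A : Matrix ι ι ℝ) :
    @SpecRad ι i1 A = @SpecRad ι i2 A := by
  cases Subsingleton.elim i1 i2; rfl

lemma cSpec_exists_eigenvector {A : Matrix ι ι ℝ} {μ : ℂ} (hμ : μ ∈ cSpec A) :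
    ∃ z : ι → ℂ, z ≠ 0 ∧ (A.map (fun a => (a : ℂ))) *ᵥ z = μ • z := by
  letI := Classical.decEq ι
  set M := A.map (fun a => (a : ℂ)) with hM
  have h1 : ¬ IsUnit (algebraMap ℂ (Matrix ι ι ℂ) μ - M) := spectrum.mem_iff.mp hμ
  have h2 : (algebraMap ℂ (Matrix ι ι ℂ) μ - M).det = 0 := by
    by_contra h
    exact h1 ((Matrix.isUnit_iff_isUnit_det _).mpr (isUnit_iff_ne_zero.mpr h))
  obtain ⟨z, hz0, hz⟩ := (Matrix.exists_mulVec_eq_zero_iff).mpr h2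
  refine ⟨z, hz0, ?_⟩
  have : (algebraMap ℂ (Matrix ι ι ℂ) μ - M) *ᵥ z = μ • z - M *ᵥ z := by
    rw [Matrix.sub_mulVec, Algebra.algebraMap_eq_smul_one, Matrix.smul_mulVec,
      Matrix.one_mulVec]
  rw [this] at hz
  linear_combination (norm := module) -hz

end Stmt13Aux

namespace Stmt13Aux
open Matrix

variable {ι : Type*} [Fintype ι]

lemma mvItC_succ' (M : Matrix ι ι ℂ) (m : ℕ) (z : ι → ℂ) :
    mvItC M (m+1) z = M *ᵥ (mvItC M m z) := Function.iterate_succ_apply' _ _ _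

lemma mvIt_succ' (A : Matrix ι ι ℝ) (m : ℕ) (x : ι → ℝ) :
    mvIt A (m+1) x = A *ᵥ (mvIt A m x) := Function.iterate_succ_apply' _ _ _

lemma eig_iterate {M : Matrix ι ι ℂ} {μ : ℂ} {z : ι → ℂ} (hz : M *ᵥ z = μ • z) (m : ℕ) :
    mvItC M m z = μ ^ m • z := by
  induction m with
  | zero => simp [mvItC]
  | succ m ih =>
    rw [mvItC_succ', ih, Matrix.mulVec_smul, hz, smul_smul, ← pow_succ]

lemma mulVec_mono' {A : Matrix ι ι ℝ} (hA : ∀ p q, 0 ≤ A p q) {x y : ι → ℝ} (h : x ≤ y) :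
    A *ᵥ x ≤ A *ᵥ y := fun p =>
  Finset.sum_le_sum fun q _ => mul_le_mul_of_nonneg_left (h q) (hA p q)

lemma mvIt_mono' {A : Matrix ι ι ℝ} (hA : ∀ p q, 0 ≤ A p q) (m : ℕ) {x y : ι → ℝ} (h : x ≤ y) :
    mvIt A m x ≤ mvIt A m y := by
  induction m with
  | zero => exact h
  | succ m ih => rw [mvIt_succ', mvIt_succ']; exact mulVec_mono' hA ih

lemma mvIt_smul' (A : Matrix ι ι ℝ) (m : ℕ) (c : ℝ) (x : ι → ℝ) :
    mvIt A m (c • x) = c • mvIt A m x := by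
  induction m with
  | zero => rfl
  | succ m ih => rw [mvIt_succ', ih, mvIt_succ', Matrix.mulVec_smul]

/-- modulus bound: `|mvItC M m z| ≤ mvIt A m |z|` entrywise when `M = A.map ofReal`, `A ≥ 0`. -/
lemma abs_mvItC_le {A : Matrix ι ι ℝ} (hA : ∀ p q, 0 ≤ A p q) (z : ι → ℂ) (m : ℕ) (p : ι) :
    ‖mvItC (A.map (fun a => (a : ℂ))) m z p‖ ≤
      mvIt A m (fun q => ‖z q‖) p := by
  induction m generalizing p with
  | zero => exact le_rfl
  | succ m ih =>
    rw [mvItC_succ', mvIt_succ']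
    calc ‖(A.map (fun a => (a : ℂ)) *ᵥ mvItC (A.map fun a => (a:ℂ)) m z) p‖
        = ‖∑ q, (A p q : ℂ) * mvItC (A.map fun a => (a:ℂ)) m z q‖ := rfl
      _ ≤ ∑ q, ‖(A p q : ℂ) * mvItC (A.map fun a => (a:ℂ)) m z q‖ :=
          norm_sum_le _ _
      _ ≤ ∑ q, A p q * mvIt A m (fun q' => ‖z q'‖) q := by
          refine Finset.sum_le_sum fun q _ => ?_
          rw [norm_mul, Complex.norm_real, Real.norm_eq_abs, abs_of_nonneg (hA p q)]
          exact mul_le_mul_of_nonneg_left (ih q) (hA p q)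
      _ = (A *ᵥ mvIt A m (fun q' => ‖z q'‖)) p := rfl

/-- Key eigenvalue bound: each spectral value is controlled by iterated row sums. -/
lemma abs_pow_le_rowSum {A : Matrix ι ι ℝ} (hA : ∀ p q, 0 ≤ A p q) {μ : ℂ}
    (hμ : μ ∈ cSpec A) :
    ∃ p, ∀ m, ‖μ‖ ^ m ≤ mvIt A m (fun _ => (1:ℝ)) p := by
  obtain ⟨z, hz0, hz⟩ := cSpec_exists_eigenvector hμ
  obtain ⟨q₀, hq₀⟩ : ∃ q, z q ≠ 0 := by
    by_contra h; push_neg at h; exact hz0 (funext h)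
  obtain ⟨p, -, hp⟩ := Finset.exists_max_image Finset.univ (fun q => ‖z q‖)
    ⟨q₀, Finset.mem_univ _⟩
  have hp0 : 0 < ‖z p‖ :=
    lt_of_lt_of_le (by simpa using hq₀) (hp q₀ (Finset.mem_univ _))
  refine ⟨p, fun m => ?_⟩
  have h1 : ‖μ‖ ^ m * ‖z p‖ ≤
      mvIt A m (fun q => ‖z q‖) p := by
    have := abs_mvItC_le hA z m p
    rwa [eig_iterate hz, Pi.smul_apply, smul_eq_mul, norm_mul, norm_pow] at this
  have h2 : mvIt A m (fun q => ‖z q‖) p ≤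
      ‖z p‖ * mvIt A m (fun _ => 1) p := by
    have hle : (fun q => ‖z q‖) ≤ ‖z p‖ • (fun _ => (1:ℝ)) := by
      intro q; simpa using hp q (Finset.mem_univ _)
    calc mvIt A m (fun q => ‖z q‖) p
        ≤ mvIt A m (‖z p‖ • fun _ => (1:ℝ)) p := mvIt_mono' hA m hle p
      _ = ‖z p‖ * mvIt A m (fun _ => 1) p := by rw [mvIt_smul']; rfl
  nlinarith [hp0]

lemma specRad_lt_one {A : Matrix ι ι ℝ} (hA : ∀ p q, 0 ≤ A p q) {m : ℕ} {θ : ℝ}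
    (hm : 1 ≤ m) (hθ0 : 0 ≤ θ) (hθ1 : θ < 1)
    (h : ∀ p, mvIt A m (fun _ => (1:ℝ)) p ≤ θ) : SpecRad A < 1 := by
  set t := θ ^ ((1:ℝ)/m) with ht
  have ht0 : 0 ≤ t := Real.rpow_nonneg hθ0 _
  have ht1 : t < 1 := Real.rpow_lt_one hθ0 hθ1 (by positivity)
  have hm0 : (m:ℝ) ≠ 0 := Nat.cast_ne_zero.mpr (by omega)
  have htm : t ^ m = θ := by
    rw [ht, ← Real.rpow_natCast (θ ^ ((1:ℝ)/m)) m, ← Real.rpow_mul hθ0, one_div,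
      inv_mul_cancel₀ hm0, Real.rpow_one]
  have hle : SpecRad A ≤ t := by
    rw [specRad_def]
    refine Real.sSup_le ?_ ht0
    rintro r ⟨μ, hμ, rfl⟩
    obtain ⟨p, hp⟩ := abs_pow_le_rowSum hA hμ
    have h1 : ‖μ‖ ^ m ≤ t ^ m := by
      calc ‖μ‖ ^ m ≤ mvIt A m (fun _ => 1) p := hp m
        _ ≤ θ := h p
        _ = t ^ m := htm.symm
    exact pow_le_pow_iff_left₀ (by positivity) ht0 (by omega) |>.mp h1
  exact lt_of_le_of_lt hle ht1

lemma specRad_le_one {A : Matrix ι ι ℝ} (hA : ∀ p q, 0 ≤ A p q) {c : ℝ}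
    (h : ∀ m p, mvIt A m (fun _ => (1:ℝ)) p ≤ c) : SpecRad A ≤ 1 := by
  rw [specRad_def]
  refine Real.sSup_le ?_ zero_le_one
  rintro r ⟨μ, hμ, rfl⟩
  by_contra hr
  push_neg at hr
  obtain ⟨p, hp⟩ := abs_pow_le_rowSum hA hμ
  obtain ⟨m, hm⟩ := ((tendsto_pow_atTop_atTop_of_one_lt hr).eventually_gt_atTop c).exists
  exact absurd ((hp m).trans (h m p)) (not_le.mpr hm)

end Stmt13Aux

namespace Stmt13Aux
open Matrix

variable {ι : Type*} [Fintype ι]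

lemma mvIt_nonneg' {A : Matrix ι ι ℝ} (hA : ∀ p q, 0 ≤ A p q) (m : ℕ) {x : ι → ℝ}
    (hx : 0 ≤ x) : 0 ≤ mvIt A m x := by
  induction m with
  | zero => exact hx
  | succ m ih =>
    rw [mvIt_succ']
    exact fun p => Finset.sum_nonneg fun q _ => mul_nonneg (hA p q) (ih q)

lemma specRad_nonneg (A : Matrix ι ι ℝ) : 0 ≤ SpecRad A := by
  rw [specRad_def]
  exact Real.sSup_nonneg (by rintro r ⟨μ, hμ, rfl⟩; positivity)

lemma mvItC_coe (A : Matrix ι ι ℝ) (x : ι → ℝ) (m : ℕ) :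
    mvItC (A.map (fun a => (a:ℂ))) m (fun l => (x l : ℂ))
      = fun q => ((mvIt A m x q : ℝ) : ℂ) := by
  induction m with
  | zero => rfl
  | succ m ih =>
    rw [mvItC_succ', ih, mvIt_succ']
    funext q
    have := RingHom.map_mulVec Complex.ofRealHom A (mvIt A m x) q
    exact this.symm

lemma mvItC_pow [DecidableEq ι] (M : Matrix ι ι ℂ) (m : ℕ) (z : ι → ℂ) :
    mvItC M m z = (M ^ m) *ᵥ z := by
  induction m with
  | zero => simp [mvItC]
  | succ m ih =>
    rw [mvItC_succ', ih, Matrix.mulVec_mulVec, ← pow_succ']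

open scoped ENNReal NNReal in
/-- Hard (Gelfand) direction : subunit spectral radius forces decay of iterated row sums. -/
lemma gel {A : Matrix ι ι ℝ} (hA : ∀ p q, 0 ≤ A p q) (h : SpecRad A < 1) (p : ι) :
    Tendsto (fun m => mvIt A m (fun _ => (1:ℝ)) p) atTop (𝓝 0) := by
  haveI : Nonempty ι := ⟨p⟩
  letI := Classical.decEq ι
  letI : NormedRing (Matrix ι ι ℂ) := Matrix.linftyOpNormedRing
  letI : NormedAlgebra ℂ (Matrix ι ι ℂ) := Matrix.linftyOpNormedAlgebra
  letI : CompleteSpace (Matrix ι ι ℂ) := FiniteDimensional.complete ℂ _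
  set M := A.map (fun a => (a : ℂ)) with hM
  have hbdd : BddAbove {r : ℝ | ∃ μ ∈ cSpec A, r = ‖μ‖} := by
    refine ⟨Finset.univ.sup' Finset.univ_nonempty (fun q => mvIt A 1 (fun _ => 1) q), ?_⟩
    rintro r ⟨μ, hμ, rfl⟩
    obtain ⟨q, hq⟩ := abs_pow_le_rowSum hA hμ
    have h1 := hq 1
    rw [pow_one] at h1
    exact h1.trans (Finset.le_sup' _ (Finset.mem_univ q))
  have habs : ∀ μ ∈ spectrum ℂ M, ‖μ‖ ≤ SpecRad A := by
    intro μ hμ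
    rw [specRad_def]
    exact le_csSup hbdd ⟨μ, hμ, rfl⟩
  have hρ : spectralRadius ℂ M < 1 := by
    have h1 : spectralRadius ℂ M ≤ ENNReal.ofReal (SpecRad A) := by
      rw [spectralRadius]
      refine iSup₂_le fun μ hμ => ?_
      rw [← ENNReal.ofReal_coe_nnreal, coe_nnnorm]
      exact ENNReal.ofReal_le_ofReal (by simpa using habs μ hμ)
    exact lt_of_le_of_lt h1 (ENNReal.ofReal_lt_one.mpr h)
  obtain ⟨c, hc1, hc2⟩ := ENNReal.lt_iff_exists_nnreal_btwn.mp hρ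
  have hG := spectrum.pow_nnnorm_pow_one_div_tendsto_nhds_spectralRadius M
  have hev : ∀ᶠ m : ℕ in atTop, (‖M ^ m‖₊ : ℝ≥0∞) ^ (1/(m:ℝ)) < (c : ℝ≥0∞) :=
    hG.eventually_lt_const hc1
  have hnorm : ∀ᶠ m : ℕ in atTop, ‖M ^ m‖ ≤ (c:ℝ)^m := by
    filter_upwards [hev, eventually_ge_atTop 1] with m hm hm1
    have hm0 : ((m:ℕ):ℝ) ≠ 0 := Nat.cast_ne_zero.mpr (by omega)
    have h1 : (‖M ^ m‖₊ : ℝ≥0∞) ≤ (c : ℝ≥0∞) ^ m := by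
      have h2 : ((‖M ^ m‖₊ : ℝ≥0∞) ^ (1/(m:ℝ))) ^ m ≤ (c : ℝ≥0∞) ^ m :=
        pow_le_pow_left₀ zero_le hm.le m
      calc (‖M ^ m‖₊ : ℝ≥0∞)
          = ((‖M ^ m‖₊ : ℝ≥0∞) ^ (1/(m:ℝ))) ^ m := by
            rw [← ENNReal.rpow_natCast ((‖M ^ m‖₊ : ℝ≥0∞) ^ (1/(m:ℝ))) m,
              ← ENNReal.rpow_mul, one_div, inv_mul_cancel₀ hm0, ENNReal.rpow_one]
        _ ≤ (c : ℝ≥0∞) ^ m := h2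
    rw [← ENNReal.coe_pow, ENNReal.coe_le_coe] at h1
    calc ‖M ^ m‖ = ((‖M ^ m‖₊ : ℝ≥0) : ℝ) := rfl
      _ ≤ (((c^m : ℝ≥0)) : ℝ) := NNReal.coe_le_coe.mpr h1
      _ = (c:ℝ)^m := by push_cast; ring
  have key : ∀ m, mvIt A m (fun _ => (1:ℝ)) p ≤ ‖M ^ m‖ := by
    intro m
    have h1 : ((mvIt A m (fun _ => (1:ℝ)) p : ℝ) : ℂ) = (M ^ m *ᵥ (fun _ => (1:ℂ))) p := by
      have h2 := congrFun (mvItC_coe A (fun _ => (1:ℝ)) m) p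
      rw [← h2, mvItC_pow]
      norm_num
      rfl
    calc mvIt A m (fun _ => 1) p ≤ |mvIt A m (fun _ => 1) p| := le_abs_self _
      _ = ‖((mvIt A m (fun _ => 1) p : ℝ) : ℂ)‖ := by rw [Complex.norm_real, Real.norm_eq_abs]
      _ = ‖(M ^ m *ᵥ fun _ => (1:ℂ)) p‖ := by rw [h1]
      _ ≤ ‖M ^ m *ᵥ (fun _ => (1:ℂ))‖ := norm_le_pi_norm _ p
      _ ≤ ‖M ^ m‖ * ‖(fun _ => (1:ℂ))‖ := Matrix.linfty_opNorm_mulVec _ _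
      _ = ‖M ^ m‖ := by rw [pi_norm_const]; simp
  have hc2' : (c:ℝ) < 1 := by exact_mod_cast hc2
  refine squeeze_zero' (Eventually.of_forall fun m => mvIt_nonneg' hA m (fun _ => zero_le_one) p)
    ?_ (tendsto_pow_atTop_nhds_zero_of_lt_one c.coe_nonneg hc2')
  filter_upwards [hnorm] with m hm
  exact (key m).trans hm

end Stmt13Aux

namespace Stmt13Aux
open Matrix

variable {ι : Type*} [Fintype ι]

lemma single_nonneg' [DecidableEq ι] (q : ι) : (0 : ι → ℝ) ≤ Pi.single q 1 := by
  intro l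
  simp only [Pi.single_apply, Pi.zero_apply]
  split <;> norm_num

lemma mvIt_add' (A : Matrix ι ι ℝ) (m₁ m₂ : ℕ) (x : ι → ℝ) :
    mvIt A (m₁ + m₂) x = mvIt A m₁ (mvIt A m₂ x) := Function.iterate_add_apply _ _ _ _

lemma mvIt_sum {κ : Type*} (A : Matrix ι ι ℝ) (m : ℕ) (s : Finset κ) (g : κ → ι → ℝ) :
    mvIt A m (∑ j ∈ s, g j) = ∑ j ∈ s, mvIt A m (g j) := by
  induction m with
  | zero => rfl
  | succ m ih =>
    rw [mvIt_succ', ih]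
    have h2 := map_sum (Matrix.mulVecLin A) (fun j => mvIt A m (g j)) s
    simp only [Matrix.mulVecLin_apply] at h2
    rw [h2]
    funext l
    rw [Finset.sum_apply, Finset.sum_apply]
    exact Finset.sum_congr rfl fun j _ => by rw [mvIt_succ']

lemma mvIt_mulconst (A : Matrix ι ι ℝ) (m : ℕ) (c : ℝ) (x : ι → ℝ) :
    mvIt A m (fun l => c * x l) = fun p => c * mvIt A m x p := by
  induction m with
  | zero => rfl
  | succ m ih =>
    rw [mvIt_succ', ih, mvIt_succ']
    funext p
    show ∑ l, A p l * (c * mvIt A m x l) = c * ∑ l, A p l * mvIt A m x l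
    rw [Finset.mul_sum]
    exact Finset.sum_congr rfl fun l _ => by ring

lemma ent_chain [DecidableEq ι] {A : Matrix ι ι ℝ} (hA : ∀ p q, 0 ≤ A p q)
    (m₁ m₂ : ℕ) (k c q : ι) :
    mvIt A m₁ (Pi.single c 1) k * mvIt A m₂ (Pi.single q 1) c ≤
      mvIt A (m₁ + m₂) (Pi.single q 1) k := by
  set a := mvIt A m₂ (Pi.single q 1) c with ha
  have h1 : (fun l => a * (Pi.single c 1 : ι → ℝ) l) ≤ mvIt A m₂ (Pi.single q 1) := by
    intro l
    rcases eq_or_ne l c with rfl | hl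
    · simp [ha]
    · simp only [Pi.single_apply, if_neg hl, mul_zero]
      exact mvIt_nonneg' hA m₂ (single_nonneg' q) l
  calc mvIt A m₁ (Pi.single c 1) k * a
      = mvIt A m₁ (fun l => a * (Pi.single c 1 : ι → ℝ) l) k := by
        rw [mvIt_mulconst]; ring
    _ ≤ mvIt A m₁ (mvIt A m₂ (Pi.single q 1)) k := mvIt_mono' hA m₁ h1 k
    _ = mvIt A (m₁ + m₂) (Pi.single q 1) k := (congrFun (mvIt_add' A m₁ m₂ _) k).symm

/-- CORE: an irreducible nonnegative matrix whose iterated diagonal entry tends to zero has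
spectral radius `< 1`. -/
lemma core [DecidableEq ι] {A : Matrix ι ι ℝ} (hA : ∀ p q, 0 ≤ A p q)
    (hirr : ∀ p q : ι, ∃ m, 0 < mvIt A m (Pi.single q 1) p) (k : ι)
    (hdiag : Tendsto (fun m => mvIt A m (Pi.single k 1) k) atTop (𝓝 0)) :
    SpecRad A < 1 := by
  have hent : ∀ p q : ι, Tendsto (fun m => mvIt A m (Pi.single q 1) p) atTop (𝓝 0) := by
    intro p q
    obtain ⟨m₁, hm₁⟩ := hirr k p
    obtain ⟨m₂, hm₂⟩ := hirr q k
    have key : ∀ m, mvIt A m (Pi.single q 1) p ≤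
        (mvIt A m₁ (Pi.single p 1) k * mvIt A m₂ (Pi.single k 1) q)⁻¹ *
          mvIt A (m₁ + (m + m₂)) (Pi.single k 1) k := by
      intro m
      have h1 : mvIt A m₁ (Pi.single p 1) k *
          (mvIt A m (Pi.single q 1) p * mvIt A m₂ (Pi.single k 1) q) ≤
          mvIt A (m₁ + (m + m₂)) (Pi.single k 1) k := by
        calc mvIt A m₁ (Pi.single p 1) k *
            (mvIt A m (Pi.single q 1) p * mvIt A m₂ (Pi.single k 1) q)
            ≤ mvIt A m₁ (Pi.single p 1) k * mvIt A (m + m₂) (Pi.single k 1) p := by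
              refine mul_le_mul_of_nonneg_left ?_ (mvIt_nonneg' hA m₁ (single_nonneg' p) k)
              exact ent_chain hA m m₂ p q k
          _ ≤ mvIt A (m₁ + (m + m₂)) (Pi.single k 1) k := ent_chain hA m₁ (m+m₂) k p k
      have ha : 0 < mvIt A m₁ (Pi.single p 1) k := hm₁
      have hb : 0 < mvIt A m₂ (Pi.single k 1) q := hm₂
      have h2 : mvIt A m (Pi.single q 1) p ≤
          mvIt A (m₁ + (m + m₂)) (Pi.single k 1) k /
            (mvIt A m₁ (Pi.single p 1) k * mvIt A m₂ (Pi.single k 1) q) := by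
        rw [le_div_iff₀ (mul_pos ha hb)]
        calc mvIt A m (Pi.single q 1) p *
            (mvIt A m₁ (Pi.single p 1) k * mvIt A m₂ (Pi.single k 1) q)
            = mvIt A m₁ (Pi.single p 1) k *
              (mvIt A m (Pi.single q 1) p * mvIt A m₂ (Pi.single k 1) q) := by ring
          _ ≤ _ := h1
      simpa [div_eq_inv_mul] using h2
    have hσ : Tendsto (fun m : ℕ => m₁ + (m + m₂)) atTop atTop := by
      apply tendsto_atTop_mono (f := fun m : ℕ => m)
        (fun m => by show m ≤ m₁ + (m + m₂); omega)
      exact tendsto_id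
    have hshift : Tendsto (fun m => mvIt A (m₁ + (m + m₂)) (Pi.single k 1) k) atTop (𝓝 0) :=
      hdiag.comp hσ
    have hrhs : Tendsto (fun m => (mvIt A m₁ (Pi.single p 1) k *
        mvIt A m₂ (Pi.single k 1) q)⁻¹ * mvIt A (m₁ + (m + m₂)) (Pi.single k 1) k)
        atTop (𝓝 0) := by
      simpa using hshift.const_mul ((mvIt A m₁ (Pi.single p 1) k *
        mvIt A m₂ (Pi.single k 1) q)⁻¹)
    exact squeeze_zero (fun m => mvIt_nonneg' hA m (single_nonneg' q) p) key hrhs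
  have hrow : ∀ p, Tendsto (fun m => mvIt A m (fun _ => (1:ℝ)) p) atTop (𝓝 0) := by
    intro p
    have hone : (fun _ : ι => (1:ℝ)) = ∑ q : ι, Pi.single q 1 := by
      funext l
      rw [Finset.sum_apply]
      simp [Pi.single_apply]
    have hsum : ∀ m, mvIt A m (fun _ => (1:ℝ)) p = ∑ q, mvIt A m (Pi.single q 1) p := by
      intro m
      rw [hone, mvIt_sum, Finset.sum_apply]
    simp only [hsum]
    simpa using tendsto_finset_sum Finset.univ (fun q _ => hent p q)
  have htot : Tendsto (fun m => ∑ p, mvIt A m (fun _ => (1:ℝ)) p) atTop (𝓝 0) := by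
    simpa using tendsto_finset_sum Finset.univ (fun p _ => hrow p)
  obtain ⟨m₀, hm₀⟩ := ((htot.eventually_lt_const (by norm_num : (0:ℝ) < 1/2)).and
    (eventually_ge_atTop 1)).exists
  refine specRad_lt_one (θ := 1/2) hA hm₀.2 (by norm_num) (by norm_num) (fun p => ?_)
  refine le_trans ?_ hm₀.1.le
  exact Finset.single_le_sum (f := fun p => mvIt A m₀ (fun _ => (1:ℝ)) p)
    (fun q _ => mvIt_nonneg' hA m₀ (fun _ => zero_le_one) q) (Finset.mem_univ p)

end Stmt13Aux

namespace Stmt13Aux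
open Matrix

variable {n : ℕ} {D : Set (Fin n → ℝ)} {f : (Fin n → ℝ) → (Fin n → ℝ)}
  {a : Fin n → ℝ} {g : (Fin n → ℝ) → (Fin n → ℝ)}

lemma evD (hDo : IsOpen D) (ha : a ∈ D) (y : Fin n → ℝ) :
    ∀ᶠ ε : ℝ in 𝓝[>] 0, a + ε • y ∈ D := by
  have hcont : Tendsto (fun ε : ℝ => a + ε • y) (𝓝 0) (𝓝 a) := by
    have h1 : Continuous fun ε : ℝ => a + ε • y := by continuity
    simpa using h1.tendsto 0
  exact (hcont.mono_left nhdsWithin_le_nhds).eventually_mem (hDo.mem_nhds ha)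

lemma subdiff_le_g (hDo : IsOpen D) (ha : a ∈ D)
    (hg : ∀ y : Fin n → ℝ,
      Tendsto (fun ε : ℝ => ε⁻¹ • (f (a + ε • y) - f a)) (𝓝[>] (0:ℝ)) (𝓝 (g y)))
    {P : Matrix (Fin n) (Fin n) ℝ} (hP : P ∈ Subdiff f D a) (y : Fin n → ℝ) :
    P *ᵥ y ≤ g y := by
  refine ge_of_tendsto (hg y) ?_
  filter_upwards [evD hDo ha y, self_mem_nhdsWithin] with ε hεD (hε : 0 < ε)
  intro k
  have h1 := hP _ hεD k
  have h2 : P *ᵥ (a + ε • y - a) = ε • (P *ᵥ y) := by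
    rw [add_sub_cancel_left, Matrix.mulVec_smul]
  rw [h2, Pi.smul_apply, smul_eq_mul] at h1
  calc (P *ᵥ y) k = ε⁻¹ * (ε * (P *ᵥ y) k) := by field_simp
    _ ≤ ε⁻¹ * ((f (a + ε • y) - f a) k) :=
        mul_le_mul_of_nonneg_left h1 (by positivity)
    _ = (ε⁻¹ • (f (a + ε • y) - f a)) k := rfl

lemma g_mono (hDo : IsOpen D) (ha : a ∈ D)
    (hmono : ∀ x ∈ D, ∀ y ∈ D, x ≤ y → f x ≤ f y)
    (hg : ∀ y : Fin n → ℝ,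
      Tendsto (fun ε : ℝ => ε⁻¹ • (f (a + ε • y) - f a)) (𝓝[>] (0:ℝ)) (𝓝 (g y)))
    {y y' : Fin n → ℝ} (h : y ≤ y') : g y ≤ g y' := by
  refine le_of_tendsto_of_tendsto (hg y) (hg y') ?_
  filter_upwards [evD hDo ha y, evD hDo ha y', self_mem_nhdsWithin] with ε h1 h2 (hε : 0 < ε)
  intro k
  have h3 : f (a + ε • y) ≤ f (a + ε • y') := by
    refine hmono _ h1 _ h2 fun j => ?_
    simp only [Pi.add_apply, Pi.smul_apply, smul_eq_mul]
    have := h j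
    nlinarith
  simp only [Pi.smul_apply, Pi.sub_apply, smul_eq_mul]
  have h4 := h3 k
  have h5 : (0:ℝ) ≤ ε⁻¹ := by positivity
  nlinarith

lemma g_le_chord (hDc : Convex ℝ D) (ha : a ∈ D)
    (hconv : ∀ i, ConvexOn ℝ D (fun x => f x i))
    (hg : ∀ y : Fin n → ℝ,
      Tendsto (fun ε : ℝ => ε⁻¹ • (f (a + ε • y) - f a)) (𝓝[>] (0:ℝ)) (𝓝 (g y)))
    {x : Fin n → ℝ} (hx : x ∈ D) : g (x - a) ≤ f x - f a := by
  refine le_of_tendsto (hg (x - a)) ?_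
  have hIoc : Set.Ioc (0:ℝ) 1 ∈ 𝓝[>] (0:ℝ) := Ioc_mem_nhdsGT_of_mem ⟨le_refl 0, zero_lt_one⟩
  filter_upwards [hIoc] with ε hε
  intro k
  have hrepr : a + ε • (x - a) = (1 - ε) • a + ε • x := by module
  have hcvx : f ((1 - ε) • a + ε • x) k ≤ (1 - ε) * f a k + ε * f x k := by
    have := (hconv k).2 ha hx (by linarith [hε.2] : (0:ℝ) ≤ 1 - ε) hε.1.le (by ring)
    simpa [smul_eq_mul] using this
  simp only [Pi.smul_apply, Pi.sub_apply, smul_eq_mul]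
  have h5 : f (a + ε • (x - a)) k ≤ (1 - ε) * f a k + ε * f x k := by
    rw [hrepr]; exact hcvx
  have hε0 : (0:ℝ) < ε := hε.1
  have h6 : ε⁻¹ * (f (a + ε • (x - a)) k - f a k) ≤ ε⁻¹ * (ε * (f x k - f a k)) := by
    refine mul_le_mul_of_nonneg_left ?_ (by positivity)
    nlinarith
  calc ε⁻¹ * (f (a + ε • (x - a)) k - f a k) ≤ ε⁻¹ * (ε * (f x k - f a k)) := h6
    _ = f x k - f a k := by field_simp

end Stmt13Aux

namespace Stmt13Aux
open Matrix

variable {n : ℕ} {D : Set (Fin n → ℝ)} {f : (Fin n → ℝ) → (Fin n → ℝ)}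
  {a : Fin n → ℝ} {g : (Fin n → ℝ) → (Fin n → ℝ)}

lemma tendsto_mul_nhdsGT {c : ℝ} (hc : 0 < c) :
    Tendsto (fun ε : ℝ => c * ε) (𝓝[>] 0) (𝓝[>] 0) := by
  apply tendsto_nhdsWithin_of_tendsto_nhds_of_eventually_within
  · have h1 : Continuous fun ε : ℝ => c * ε := by continuity
    have h2 := h1.tendsto 0
    simpa using h2.mono_left nhdsWithin_le_nhds
  · filter_upwards [self_mem_nhdsWithin] with ε (hε : 0 < ε)
    exact mul_pos hc hε

lemma g_zero
    (hg : ∀ y : Fin n → ℝ,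
      Tendsto (fun ε : ℝ => ε⁻¹ • (f (a + ε • y) - f a)) (𝓝[>] (0:ℝ)) (𝓝 (g y))) :
    g 0 = 0 := by
  refine tendsto_nhds_unique (hg 0) ?_
  have h1 : (fun ε : ℝ => ε⁻¹ • (f (a + ε • (0 : Fin n → ℝ)) - f a)) = fun _ => 0 := by
    funext ε; simp
  rw [h1]
  exact tendsto_const_nhds

lemma g_homog
    (hg : ∀ y : Fin n → ℝ,
      Tendsto (fun ε : ℝ => ε⁻¹ • (f (a + ε • y) - f a)) (𝓝[>] (0:ℝ)) (𝓝 (g y)))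
    {c : ℝ} (hc : 0 < c) (y : Fin n → ℝ) : g (c • y) = c • g y := by
  have h2 : Tendsto (fun ε : ℝ => ε⁻¹ • (f (a + ε • (c • y)) - f a)) (𝓝[>] (0:ℝ))
      (𝓝 (c • g y)) := by
    have h3 := ((hg y).comp (tendsto_mul_nhdsGT hc)).const_smul c
    refine h3.congr' ?_ |>.mono_right (le_of_eq rfl)
    filter_upwards [self_mem_nhdsWithin] with ε (hε : 0 < ε)
    show c • ((c * ε)⁻¹ • (f (a + (c * ε) • y) - f a)) = ε⁻¹ • (f (a + ε • (c • y)) - f a)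
    rw [smul_smul, show (c * ε) • y = ε • (c • y) by rw [smul_smul, mul_comm, ← smul_smul],
      show c * (c * ε)⁻¹ = ε⁻¹ by field_simp]
  exact tendsto_nhds_unique (hg (c • y)) h2

lemma g_subadd (hDo : IsOpen D) (ha : a ∈ D)
    (hconv : ∀ i, ConvexOn ℝ D (fun x => f x i))
    (hg : ∀ y : Fin n → ℝ,
      Tendsto (fun ε : ℝ => ε⁻¹ • (f (a + ε • y) - f a)) (𝓝[>] (0:ℝ)) (𝓝 (g y)))
    (y y' : Fin n → ℝ) : g (y + y') ≤ g y + g y' := by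
  have h2e := tendsto_mul_nhdsGT (show (0:ℝ) < 2 by norm_num)
  refine le_of_tendsto_of_tendsto (hg (y + y'))
    (((hg y).comp h2e).add ((hg y').comp h2e)) ?_
  filter_upwards [h2e.eventually (evD hDo ha y), h2e.eventually (evD hDo ha y'),
    self_mem_nhdsWithin] with ε h1 h2 (hε : 0 < ε)
  intro k
  simp only [Function.comp, Pi.add_apply, Pi.smul_apply, Pi.sub_apply, smul_eq_mul]
  have hmid : a + ε • (y + y') =
      (1/2 : ℝ) • (a + (2*ε) • y) + (1/2 : ℝ) • (a + (2*ε) • y') := by module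
  have hcvx : f (a + ε • (y + y')) k ≤
      (1/2) * f (a + (2*ε) • y) k + (1/2) * f (a + (2*ε) • y') k := by
    rw [hmid]
    have := (hconv k).2 h1 h2 (by norm_num : (0:ℝ) ≤ 1/2) (by norm_num : (0:ℝ) ≤ 1/2)
      (by norm_num)
    simpa [smul_eq_mul] using this
  have h2ε : (0:ℝ) < 2 * ε := by positivity
  have e1 : ε⁻¹ = 2 * (2*ε)⁻¹ := by field_simp
  have e2 : (0:ℝ) ≤ (2*ε)⁻¹ := by positivity
  have e3 : (0:ℝ) ≤ (2*ε)⁻¹ * (f (a + (2*ε) • y) k + f (a + (2*ε) • y') k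
      - 2 * f (a + ε • (y + y')) k) :=
    mul_nonneg e2 (by linarith)
  rw [e1]
  nlinarith [e3]

end Stmt13Aux

namespace Stmt13Aux
open Matrix

variable {n : ℕ} {D : Set (Fin n → ℝ)} {f : (Fin n → ℝ) → (Fin n → ℝ)}
  {a : Fin n → ℝ} {g : (Fin n → ℝ) → (Fin n → ℝ)}

lemma hb_row (N : (Fin n → ℝ) → ℝ)
    (Nhom : ∀ c : ℝ, 0 < c → ∀ y, N (c • y) = c * N y)
    (Nadd : ∀ y y', N (y + y') ≤ N y + N y')
    (N0 : 0 ≤ N 0) :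
    ∃ q : Fin n → ℝ, ∀ y, ∑ l, q l * y l ≤ N y := by
  set F : (Fin n → ℝ) →ₗ.[ℝ] ℝ := ⟨⊥, 0⟩ with hF
  have hf : ∀ x : F.domain, F x ≤ N x.1 := by
    rintro ⟨x, hx⟩
    have hx0 : x = 0 := (Submodule.mem_bot ℝ).mp hx
    subst hx0
    change (0:ℝ) ≤ N 0
    exact N0
  obtain ⟨G, hG1, hG2⟩ := exists_extension_of_le_sublinear F N Nhom Nadd hf
  refine ⟨fun l => G (fun j => if l = j then 1 else 0), fun y => ?_⟩
  have h1 : G y = ∑ l, y l * G (fun j => if l = j then 1 else 0) := by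
    conv_lhs => rw [pi_eq_sum_univ y]
    rw [map_sum]
    exact Finset.sum_congr rfl fun l _ => by rw [_root_.map_smul]; rfl
  calc ∑ l, G (fun j => if l = j then 1 else 0) * y l = G y := by
        rw [h1]; exact Finset.sum_congr rfl fun l _ => mul_comm _ _
    _ ≤ N y := hG2 y

lemma subdiff_nonneg (hDo : IsOpen D) (ha : a ∈ D)
    (hmono : ∀ x ∈ D, ∀ y ∈ D, x ≤ y → f x ≤ f y)
    {P : Matrix (Fin n) (Fin n) ℝ} (hP : P ∈ Subdiff f D a) (k l : Fin n) : 0 ≤ P k l := by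
  obtain ⟨δ, hδ, hball⟩ := Metric.isOpen_iff.mp hDo a ha
  set x := a - (δ/2) • (Pi.single l 1 : Fin n → ℝ) with hx
  have hxa : x - a = -((δ/2) • (Pi.single l 1 : Fin n → ℝ)) := by rw [hx]; abel
  have hxD : x ∈ D := by
    apply hball
    rw [Metric.mem_ball, dist_eq_norm, hxa, norm_neg, norm_smul]
    rw [Pi.norm_single]
    simp only [norm_one, mul_one, Real.norm_eq_abs]
    rw [abs_of_pos (by positivity)]
    linarith
  have hle : x ≤ a := by
    intro j
    rw [hx]
    simp only [Pi.sub_apply, Pi.smul_apply, smul_eq_mul]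
    have : 0 ≤ (δ/2) * (Pi.single l 1 : Fin n → ℝ) j := by
      rcases eq_or_ne j l with rfl | hj
      · simp; positivity
      · simp [Pi.single_apply, hj]
    linarith
  have h1 := hP x hxD k
  have h2 : f x k - f a k ≤ 0 := by
    have := hmono x hxD a ha hle k
    linarith
  rw [hxa] at h1
  have h3 : (P *ᵥ -((δ/2) • (Pi.single l 1 : Fin n → ℝ))) k = -((δ/2) * P k l) := by
    rw [Matrix.mulVec_neg, Matrix.mulVec_smul]
    simp only [Pi.neg_apply, Pi.smul_apply, smul_eq_mul]
    rw [Matrix.mulVec_single]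
    simp
  rw [h3] at h1
  have h4 := h1  -- -((δ/2) * P k l) ≤ (f x - f a) k
  have h5 : (f x - f a) k = f x k - f a k := rfl
  rw [h5] at h4
  nlinarith

lemma subdiff_powerbound (hDo : IsOpen D) (ha : a ∈ D)
    (hmono : ∀ x ∈ D, ∀ y ∈ D, x ≤ y → f x ≤ f y)
    (hg : ∀ y : Fin n → ℝ,
      Tendsto (fun ε : ℝ => ε⁻¹ • (f (a + ε • y) - f a)) (𝓝[>] (0:ℝ)) (𝓝 (g y)))
    (hb : ∀ x : Fin n → ℝ, ∃ u : Fin n → ℝ, ∀ m : ℕ, g^[m] x ≤ u)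
    {P : Matrix (Fin n) (Fin n) ℝ} (hP : P ∈ Subdiff f D a)
    (hPnn : ∀ p q, 0 ≤ P p q) (x : Fin n → ℝ) :
    ∃ u : Fin n → ℝ, ∀ m : ℕ, mvIt P m x ≤ u := by
  obtain ⟨u, hu⟩ := hb x
  have key : ∀ m, mvIt P m x ≤ g^[m] x := by
    intro m
    induction m with
    | zero => exact le_rfl
    | succ m ih =>
      rw [mvIt_succ', Function.iterate_succ_apply']
      calc P *ᵥ mvIt P m x ≤ P *ᵥ g^[m] x := mulVec_mono' hPnn ih
        _ ≤ g (g^[m] x) := subdiff_le_g hDo ha hg hP _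
  exact ⟨u, fun m => (key m).trans (hu m)⟩

end Stmt13Aux


namespace Stmt13Aux
open Matrix

variable {ι : Type*} [Fintype ι]

lemma mvIt_le_of_le {κ : Type*} [Fintype κ] (e : ι → κ) (he : Function.Injective e)
    {A : Matrix ι ι ℝ} {B : Matrix κ κ ℝ}
    (hA : ∀ p q, 0 ≤ A p q) (hB : ∀ p q, 0 ≤ B p q)
    (hAB : ∀ p q, A p q ≤ B (e p) (e q))
    (m : ℕ) {x : ι → ℝ} {y : κ → ℝ} (hx : 0 ≤ x) (hy : 0 ≤ y)
    (hxy : ∀ q, x q ≤ y (e q)) :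
    ∀ p, mvIt A m x p ≤ mvIt B m y (e p) := by
  induction m with
  | zero => exact hxy
  | succ m ih =>
    intro p
    rw [mvIt_succ', mvIt_succ']
    calc (A *ᵥ mvIt A m x) p = ∑ q, A p q * mvIt A m x q := rfl
    _ ≤ ∑ q, B (e p) (e q) * mvIt B m y (e q) := by
        refine Finset.sum_le_sum fun q _ => mul_le_mul (hAB p q) (ih q)
          (mvIt_nonneg' hA m hx q) (hB _ _)
    _ = ∑ q ∈ Finset.univ.image e, B (e p) q * mvIt B m y q := by
        rw [Finset.sum_image (fun a _ b _ h => he h)]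
    _ ≤ ∑ q, B (e p) q * mvIt B m y q := by
        refine Finset.sum_le_sum_of_subset_of_nonneg (Finset.subset_univ _) ?_
        exact fun q _ _ => mul_nonneg (hB _ _) (mvIt_nonneg' hB m hy q)
    _ = (B *ᵥ mvIt B m y) (e p) := rfl

lemma mvIt_succ (A : Matrix ι ι ℝ) (m : ℕ) (x : ι → ℝ) :
    mvIt A (m+1) x = mvIt A m (A *ᵥ x) := Function.iterate_add_apply _ m 1 x

lemma mvIt_sub (A : Matrix ι ι ℝ) (m : ℕ) (x y : ι → ℝ) :
    mvIt A m (x - y) = mvIt A m x - mvIt A m y := by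
  induction m with
  | zero => rfl
  | succ m ih => rw [mvIt_succ', ih, Matrix.mulVec_sub, mvIt_succ', mvIt_succ']

lemma mvIt_neg (A : Matrix ι ι ℝ) (m : ℕ) (x : ι → ℝ) :
    mvIt A m (-x) = - mvIt A m x := by
  induction m with
  | zero => rfl
  | succ m ih => rw [mvIt_succ', ih, Matrix.mulVec_neg, mvIt_succ']

lemma single_le_one [DecidableEq ι] (q : ι) : (Pi.single q 1 : ι → ℝ) ≤ fun _ => 1 := by
  intro l
  simp only [Pi.single_apply]
  split <;> norm_num

end Stmt13Aux

namespace Stmt13Aux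
open Matrix

variable {n : ℕ}

/-- Inside a class, access can be realised by a chain staying in the class. -/
lemma chain_in_class {P : Matrix (Fin n) (Fin n) ℝ} {i₀ : Fin n} {C : Set (Fin n)}
    (hC : C = {j | AccessM P i₀ j ∧ AccessM P j i₀})
    {p q : Fin n} (hq : q ∈ C) (hpq : AccessM P p q) :
    p ∈ C → Relation.ReflTransGen (fun a b => a ∈ C ∧ b ∈ C ∧ 0 < P a b) p q := by
  induction hpq using Relation.ReflTransGen.head_induction_on with
  | refl => exact fun _ => Relation.ReflTransGen.refl
  | head hab hbq ih =>
    rename_i a b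
    intro haC
    have haC' : AccessM P i₀ a ∧ AccessM P a i₀ := by rwa [hC] at haC
    have hqC' : AccessM P i₀ q ∧ AccessM P q i₀ := by rwa [hC] at hq
    have hbC : b ∈ C := by
      rw [hC]
      exact ⟨haC'.1.tail hab, Relation.ReflTransGen.trans hbq hqC'.2⟩
    exact Relation.ReflTransGen.head ⟨haC, hbC, hab⟩ (ih hbC)

/-- From a chain inside `C`, positivity of an iterated entry of the restricted matrix. -/
lemma pos_pow_of_chain {P : Matrix (Fin n) (Fin n) ℝ} (hPnn : ∀ p q, 0 ≤ P p q)
    {C : Set (Fin n)} {p q : Fin n} (hp : p ∈ C) (hq : q ∈ C)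
    (h : Relation.ReflTransGen (fun a b => a ∈ C ∧ b ∈ C ∧ 0 < P a b) p q) :
    ∃ m, 0 < mvIt (Matrix.of fun a b : C => P a.1 b.1) m
      (Pi.single (⟨q, hq⟩ : C) 1) ⟨p, hp⟩ := by
  set A := (Matrix.of fun a b : C => P a.1 b.1) with hA
  have hAnn : ∀ a b : C, 0 ≤ A a b := fun a b => hPnn a.1 b.1
  induction h using Relation.ReflTransGen.head_induction_on with
  | refl =>
    exact ⟨0, by simp [mvIt]⟩
  | head hab hbq ih =>
    rename_i a b
    obtain ⟨m, hm⟩ := ih hab.2.1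
    refine ⟨m + 1, ?_⟩
    rw [mvIt_succ']
    have hterm : 0 < A ⟨a, hab.1⟩ ⟨b, hab.2.1⟩ *
        mvIt A m (Pi.single (⟨q, hq⟩ : C) 1) ⟨b, hab.2.1⟩ := mul_pos hab.2.2 hm
    show 0 < ∑ c, A ⟨a, hab.1⟩ c * mvIt A m (Pi.single (⟨q, hq⟩ : C) 1) c
    refine Finset.sum_pos' (fun c _ => mul_nonneg (hAnn ⟨a, hab.1⟩ c)
      (mvIt_nonneg' hAnn m (single_nonneg' _) c)) ⟨⟨b, hab.2.1⟩, Finset.mem_univ _, hterm⟩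

end Stmt13Aux

namespace Stmt13Aux
open Matrix

lemma transfer {n : ℕ} (D : Set (Fin n → ℝ)) (hDo : IsOpen D) (hDc : Convex ℝ D)
    (f : (Fin n → ℝ) → (Fin n → ℝ))
    (hconv : ∀ i, ConvexOn ℝ D (fun x => f x i))
    (hmono : ∀ x ∈ D, ∀ y ∈ D, x ≤ y → f x ≤ f y)
    (v w : Fin n → ℝ) (hv : v ∈ D) (hw : w ∈ D) (hfv : f v = v) (hfw : f w = w)
    (gv gw : (Fin n → ℝ) → (Fin n → ℝ))
    (hgv : ∀ y : Fin n → ℝ,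
      Tendsto (fun ε : ℝ => ε⁻¹ • (f (v + ε • y) - f v)) (𝓝[>] (0:ℝ)) (𝓝 (gv y)))
    (hgw : ∀ y : Fin n → ℝ,
      Tendsto (fun ε : ℝ => ε⁻¹ • (f (w + ε • y) - f w)) (𝓝[>] (0:ℝ)) (𝓝 (gw y)))
    (hbv : ∀ x : Fin n → ℝ, ∃ u : Fin n → ℝ, ∀ k : ℕ, gv^[k] x ≤ u)
    (hbw : ∀ x : Fin n → ℝ, ∃ u : Fin n → ℝ, ∀ k : ℕ, gw^[k] x ≤ u)
    (i j : Fin n)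
    (h : ∃ P ∈ Subdiff f D v, i ∈ CriticalNodes P ∧ j ∈ CriticalNodes P ∧ 0 < P i j) :
    ∃ P ∈ Subdiff f D w, i ∈ CriticalNodes P ∧ j ∈ CriticalNodes P ∧ 0 < P i j := by
  classical
  obtain ⟨P, hP, hi, hj, hPij⟩ := h
  have hPnn : ∀ p q, 0 ≤ P p q := subdiff_nonneg hDo hv hmono hP
  set z : Fin n → ℝ := w - v with hz
  have hPz : P *ᵥ z ≤ z := by
    have h1 := hP w hw
    rw [hfv, hfw] at h1
    exact h1
  -- Step 1 : on critical nodes, the subgradient is tight along `z = w - v`.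
  have hcrit : ∀ k ∈ CriticalNodes P, (P *ᵥ z) k = z k := by
    intro k hk
    obtain ⟨C, ⟨⟨i₀, hC⟩, hSR⟩, hkC⟩ := hk
    by_contra hne
    have hlt : (P *ᵥ z) k < z k := lt_of_le_of_ne (hPz k) hne
    set d : Fin n → ℝ := z - P *ᵥ z with hd
    have hdnn : 0 ≤ d := by
      intro l
      have : (0:ℝ) ≤ z l - (P *ᵥ z) l := by linarith [hPz l]
      exact this
    have hdk : 0 < d k := by
      have : (0:ℝ) < z k - (P *ᵥ z) k := by linarith
      exact this
    obtain ⟨u₀, hu₀⟩ := subdiff_powerbound hDo hv hmono hgv hbv hP hPnn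
      (fun l => max (-z l) 0)
    have hlow : ∀ M, -u₀ ≤ mvIt P M z := by
      intro M
      have h1 : (-(fun l => max (-z l) 0) : Fin n → ℝ) ≤ z := by
        intro l
        simp only [Pi.neg_apply]
        rcases le_total (-z l) 0 with hc | hc
        · rw [max_eq_right hc]; linarith
        · rw [max_eq_left hc]; linarith
      have h2 := mvIt_mono' hPnn M h1
      rw [mvIt_neg] at h2
      intro l
      have h3 := hu₀ M l
      have h4 := h2 l
      simp only [Pi.neg_apply] at h4 ⊢
      linarith
    have h1 : ∀ m, mvIt P m d = mvIt P m z - mvIt P (m+1) z := by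
      intro m
      rw [hd, mvIt_sub]
      congr 1
    have htel : ∀ M, ∑ m ∈ Finset.range M, (mvIt P m d) k ≤ z k + u₀ k := by
      intro M
      have h3 : ∀ m, (mvIt P m d) k =
          (fun m => (mvIt P m z) k) m - (fun m => (mvIt P m z) k) (m+1) := by
        intro m
        rw [h1 m]
        rfl
      rw [Finset.sum_congr rfl fun m _ => h3 m,
        Finset.sum_range_sub' (fun m => (mvIt P m z) k) M]
      have h4 := hlow M k
      simp only [Pi.neg_apply] at h4
      have h5 : (mvIt P 0 z) k = z k := rfl
      simp only [h5]
      linarith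
    have hsum : ∀ M, ∑ m ∈ Finset.range M, d k * mvIt P m (Pi.single k 1) k ≤ z k + u₀ k := by
      intro M
      refine le_trans (Finset.sum_le_sum fun m _ => ?_) (htel M)
      have hle : (fun l => d k * (Pi.single k 1 : Fin n → ℝ) l) ≤ d := by
        intro l
        show d k * (Pi.single k 1 : Fin n → ℝ) l ≤ d l
        rcases eq_or_ne l k with rfl | hl
        · simp
        · rw [Pi.single_eq_of_ne hl, mul_zero]
          exact hdnn l
      have h2 := mvIt_mono' hPnn m hle k
      rw [mvIt_mulconst] at h2
      exact h2
    have hsummable : Summable (fun m => mvIt P m (Pi.single k 1) k) := by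
      refine summable_of_sum_range_le
        (c := (z k + u₀ k) / d k)
        (fun m => mvIt_nonneg' hPnn m (single_nonneg' k) k) (fun M => ?_)
      rw [le_div_iff₀ hdk]
      calc (∑ m ∈ Finset.range M, mvIt P m (Pi.single k 1) k) * d k
          = ∑ m ∈ Finset.range M, d k * mvIt P m (Pi.single k 1) k := by
            rw [Finset.sum_mul]
            exact Finset.sum_congr rfl fun m _ => mul_comm _ _
        _ ≤ z k + u₀ k := hsum M
    have hdiagP : Tendsto (fun m => mvIt P m (Pi.single k 1) k) atTop (𝓝 0) :=
      hsummable.tendsto_atTop_zero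
    set A := (Matrix.of fun a b : C => P a.1 b.1) with hA
    have hAnn : ∀ a b : C, 0 ≤ A a b := fun a b => hPnn _ _
    have hdiagA : Tendsto (fun m => mvIt A m (Pi.single (⟨k, hkC⟩ : C) 1) ⟨k, hkC⟩)
        atTop (𝓝 0) := by
      refine squeeze_zero (fun m => mvIt_nonneg' hAnn m (single_nonneg' _) _)
        (fun m => ?_) hdiagP
      refine mvIt_le_of_le (fun a : C => a.1) Subtype.val_injective hAnn hPnn
        (fun a b => le_rfl) m (single_nonneg' _) (single_nonneg' _) (fun q => ?_) _
      rcases eq_or_ne q (⟨k, hkC⟩ : C) with rfl | hq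
      · simp
      · rw [Pi.single_eq_of_ne hq]
        have hq' : q.1 ≠ k := fun hc => hq (Subtype.ext hc)
        rw [Pi.single_eq_of_ne hq']
    have hirr : ∀ p q : C, ∃ m, 0 < mvIt A m (Pi.single q 1) p := by
      rintro ⟨p, hp⟩ ⟨q', hq'⟩
      have hacc : AccessM P p q' := by
        have hp' : AccessM P i₀ p ∧ AccessM P p i₀ := by rw [hC] at hp; exact hp
        have hq'' : AccessM P i₀ q' ∧ AccessM P q' i₀ := by rw [hC] at hq'; exact hq'
        exact Relation.ReflTransGen.trans hp'.2 hq''.1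
      exact pos_pow_of_chain hPnn hp hq' (chain_in_class hC hq' hacc hp)
    have hcore := core hAnn hirr ⟨k, hkC⟩ hdiagA
    have hSR' : SpecRad A = 1 := by
      have hh : SpecRad A = SpecRadOn P C := specRad_congr A
      rw [hh, hSR]
    rw [hSR'] at hcore
    exact lt_irrefl 1 hcore
  -- Step 2/3 : build the subgradient at w.
  have hrows : ∀ k : Fin n, ∃ q : Fin n → ℝ, ∀ y, ∑ l, q l * y l ≤ gw y k := by
    intro k
    refine hb_row (fun y => gw y k) (fun c hc y => ?_)
      (fun y y' => g_subadd hDo hw hconv hgw y y' k) ?_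
    · show gw (c • y) k = c * gw y k
      rw [g_homog hgw hc y]
      rfl
    · show (0:ℝ) ≤ gw 0 k
      rw [g_zero hgw]
      simp
  choose qrow hqrow using hrows
  set Q : Matrix (Fin n) (Fin n) ℝ :=
    Matrix.of (fun k l => if k ∈ CriticalNodes P then P k l else qrow k l) with hQdef
  have hQP : ∀ k, k ∈ CriticalNodes P → ∀ l, Q k l = P k l := by
    intro k hk l
    show (if k ∈ CriticalNodes P then P k l else qrow k l) = P k l
    rw [if_pos hk]
  have hQq : ∀ k, k ∉ CriticalNodes P → ∀ l, Q k l = qrow k l := by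
    intro k hk l
    show (if k ∈ CriticalNodes P then P k l else qrow k l) = qrow k l
    rw [if_neg hk]
  have hQ : Q ∈ Subdiff f D w := by
    intro x hx k
    by_cases hk : k ∈ CriticalNodes P
    · have h1 := hP x hx k
      have hQx : (Q *ᵥ (x - w)) k = (P *ᵥ (x - w)) k := by
        show ∑ l, Q k l * (x - w) l = ∑ l, P k l * (x - w) l
        exact Finset.sum_congr rfl fun l _ => by rw [hQP k hk l]
      have h2 : (P *ᵥ (x - w)) k = (P *ᵥ (x - v)) k - (P *ᵥ z) k := by
        rw [show x - w = (x - v) - z from by rw [hz]; abel, Matrix.mulVec_sub]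
        rfl
      have h3 := hcrit k hk
      have h4 : (f x - f v) k = f x k - v k := by rw [hfv]; rfl
      have h5 : (f x - f w) k = f x k - w k := by rw [hfw]; rfl
      have h6 : z k = w k - v k := rfl
      rw [h4] at h1
      rw [hQx, h2, h3, h5, h6]
      linarith
    · have hQx : (Q *ᵥ (x - w)) k = ∑ l, qrow k l * (x - w) l := by
        show ∑ l, Q k l * (x - w) l = _
        exact Finset.sum_congr rfl fun l _ => by rw [hQq k hk l]
      rw [hQx]
      exact (hqrow k (x - w)).trans (g_le_chord hDc hw hconv hgw hx k)
  have hQnn : ∀ p q, 0 ≤ Q p q := subdiff_nonneg hDo hw hmono hQ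
  obtain ⟨u₁, hu₁⟩ := subdiff_powerbound hDo hw hmono hgw hbw hQ hQnn (fun _ => 1)
  -- Step 4 : critical nodes of P stay critical for Q.
  have hmem : ∀ k, k ∈ CriticalNodes P → k ∈ CriticalNodes Q := by
    intro k hk
    obtain ⟨C, ⟨⟨i₀, hC⟩, hSR⟩, hkC⟩ := hk
    have hCcrit : ∀ l ∈ C, l ∈ CriticalNodes P := fun l hl => ⟨C, ⟨⟨i₀, hC⟩, hSR⟩, hl⟩
    have hQchain : ∀ p q : Fin n, p ∈ C → q ∈ C → AccessM Q p q := by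
      intro p q hp hq
      have hacc : AccessM P p q := by
        have hp' : AccessM P i₀ p ∧ AccessM P p i₀ := by rw [hC] at hp; exact hp
        have hq' : AccessM P i₀ q ∧ AccessM P q i₀ := by rw [hC] at hq; exact hq
        exact Relation.ReflTransGen.trans hp'.2 hq'.1
      have hchain := chain_in_class hC hq hacc hp
      refine Relation.ReflTransGen.mono (fun a b hab' => ?_) p q hchain
      obtain ⟨ha, hb, hab⟩ := hab'
      show 0 < Q a b
      rw [hQP a (hCcrit a ha) b]
      exact hab
    set C' : Set (Fin n) := {l | AccessM Q k l ∧ AccessM Q l k} with hC'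
    have hkC' : k ∈ C' := ⟨Relation.ReflTransGen.refl, Relation.ReflTransGen.refl⟩
    have hsub : ∀ l ∈ C, l ∈ C' := fun l hl =>
      ⟨hQchain k l hkC hl, hQchain l k hl hkC⟩
    refine ⟨C', ⟨⟨k, rfl⟩, ?_⟩, hkC'⟩
    set B := (Matrix.of fun a b : C' => Q a.1 b.1) with hB
    have hBnn : ∀ a b : C', 0 ≤ B a b := fun a b => hQnn _ _
    have hle1 : SpecRad B ≤ 1 := by
      refine specRad_le_one hBnn (c := Finset.univ.sup' ⟨k, Finset.mem_univ k⟩ u₁) ?_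
      intro m p
      have h1 := mvIt_le_of_le (fun a : C' => a.1) Subtype.val_injective hBnn hQnn
        (fun a b => le_rfl) m (fun _ => zero_le_one) (fun _ => zero_le_one)
        (fun q => le_rfl) p
      exact h1.trans ((hu₁ m p.1).trans (Finset.le_sup' u₁ (Finset.mem_univ p.1)))
    have hnlt : ¬ SpecRad B < 1 := by
      intro hltB
      have hrowB := gel hBnn hltB (⟨k, hkC'⟩ : C')
      have hdiagB : Tendsto (fun m => mvIt B m (Pi.single (⟨k, hkC'⟩ : C') 1) ⟨k, hkC'⟩)
          atTop (𝓝 0) := by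
        refine squeeze_zero (fun m => mvIt_nonneg' hBnn m (single_nonneg' _) _)
          (fun m => ?_) hrowB
        exact mvIt_mono' hBnn m (single_le_one _) _
      set A := (Matrix.of fun a b : C => P a.1 b.1) with hA
      have hAnn : ∀ a b : C, 0 ≤ A a b := fun a b => hPnn _ _
      set e : C → C' := fun a => ⟨a.1, hsub a.1 a.2⟩ with he'
      have he : Function.Injective e := by
        intro a b hab
        have : (e a).1 = (e b).1 := by rw [hab]
        exact Subtype.ext this
      have hdiagA : Tendsto (fun m => mvIt A m (Pi.single (⟨k, hkC⟩ : C) 1) ⟨k, hkC⟩)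
          atTop (𝓝 0) := by
        refine squeeze_zero (fun m => mvIt_nonneg' hAnn m (single_nonneg' _) _)
          (fun m => ?_) hdiagB
        have hAB : ∀ a b : C, A a b ≤ B (e a) (e b) := by
          intro a b
          show P a.1 b.1 ≤ Q a.1 b.1
          rw [hQP a.1 (hCcrit a.1 a.2) b.1]
        have hxy : ∀ q : C, (Pi.single (⟨k, hkC⟩ : C) 1 : C → ℝ) q ≤
            (Pi.single (⟨k, hkC'⟩ : C') 1 : C' → ℝ) (e q) := by
          intro q
          rcases eq_or_ne q (⟨k, hkC⟩ : C) with rfl | hq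
          · have h7 : e ⟨k, hkC⟩ = (⟨k, hkC'⟩ : C') := rfl
            rw [h7]
            simp
          · rw [Pi.single_eq_of_ne hq]
            exact single_nonneg' _ _
        have h8 := mvIt_le_of_le e he hAnn hBnn hAB m (single_nonneg' _)
          (single_nonneg' _) hxy ⟨k, hkC⟩
        exact h8
      have hirr : ∀ p q : C, ∃ m, 0 < mvIt A m (Pi.single q 1) p := by
        rintro ⟨p, hp⟩ ⟨q', hq'⟩
        have hacc : AccessM P p q' := by
          have hp' : AccessM P i₀ p ∧ AccessM P p i₀ := by rw [hC] at hp; exact hp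
          have hq'' : AccessM P i₀ q' ∧ AccessM P q' i₀ := by rw [hC] at hq'; exact hq'
          exact Relation.ReflTransGen.trans hp'.2 hq''.1
        exact pos_pow_of_chain hPnn hp hq' (chain_in_class hC hq' hacc hp)
      have hcore := core hAnn hirr ⟨k, hkC⟩ hdiagA
      have hSR' : SpecRad A = 1 := by
        have hh : SpecRad A = SpecRadOn P C := specRad_congr A
        rw [hh, hSR]
      rw [hSR'] at hcore
      exact lt_irrefl 1 hcore
    have hBeq : SpecRad B = 1 := le_antisymm hle1 (not_lt.mp hnlt)
    have hh : SpecRadOn Q C' = SpecRad B := specRad_congr B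
    rw [hh, hBeq]
  refine ⟨Q, hQ, hmem i hi, hmem j hj, ?_⟩
  rw [hQP i hi j]
  exact hPij

end Stmt13Aux

/-- the critical graphs of the subdifferentials at two tangentially
stable fixed points of a convex monotone map coincide. -/
theorem stmt13 {n : ℕ} (D : Set (Fin n → ℝ)) (hDo : IsOpen D) (hDc : Convex ℝ D)
    (f : (Fin n → ℝ) → (Fin n → ℝ)) (hmaps : Set.MapsTo f D D)
    (hconv : ∀ i, ConvexOn ℝ D (fun x => f x i))
    (hmono : ∀ x ∈ D, ∀ y ∈ D, x ≤ y → f x ≤ f y)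
    (v w : Fin n → ℝ) (hv : v ∈ D) (hw : w ∈ D) (hfv : f v = v) (hfw : f w = w)
    (gv gw : (Fin n → ℝ) → (Fin n → ℝ))
    (hgv : ∀ y : Fin n → ℝ,
      Tendsto (fun ε : ℝ => ε⁻¹ • (f (v + ε • y) - f v)) (𝓝[>] (0:ℝ)) (𝓝 (gv y)))
    (hgw : ∀ y : Fin n → ℝ,
      Tendsto (fun ε : ℝ => ε⁻¹ • (f (w + ε • y) - f w)) (𝓝[>] (0:ℝ)) (𝓝 (gw y)))
    (hbv : ∀ x : Fin n → ℝ, ∃ u : Fin n → ℝ, ∀ k : ℕ, gv^[k] x ≤ u)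
    (hbw : ∀ x : Fin n → ℝ, ∃ u : Fin n → ℝ, ∀ k : ℕ, gw^[k] x ≤ u) :
    ∀ i j,
      (∃ P ∈ Subdiff f D v, i ∈ CriticalNodes P ∧ j ∈ CriticalNodes P ∧ 0 < P i j) ↔
      (∃ P ∈ Subdiff f D w, i ∈ CriticalNodes P ∧ j ∈ CriticalNodes P ∧ 0 < P i j) := by
  intro i j
  constructor
  · exact Stmt13Aux.transfer D hDo hDc f hconv hmono v w hv hw hfv hfw gv gw
      hgv hgw hbv hbw i j
  · exact Stmt13Aux.transfer D hDo hDc f hconv hmono w v hw hv hfw hfv gw gv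
      hgw hgv hbw hbv i j
end
end

section
/- Let h : ℝ^n → ℝ^n be a convex monotone positively homogeneous map for which 0 is a t-stable fixed point, and let B = B(h) be the set of indices having no access in G(h) to any critical node. Then the restricted map h_B : ℝ^B → ℝ^B has spectral radius τ(h_B) < 1, where τ(g) = sup{λ ≥ 0 : g(x) = λx for some x ∈ ℝ^B_+ \ {0}}. -/
noncomputable section
open Filter Topology Set
open scoped Classical

section MatrixLemmas
variable {ι : Type*} [Fintype ι]

lemma mulVec_mono {Q : Matrix ι ι ℝ} (hQ : ∀ i j, 0 ≤ Q i j) {x y : ι → ℝ}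
    (hxy : x ≤ y) : Q.mulVec x ≤ Q.mulVec y := fun i =>
  Finset.sum_le_sum fun j _ => mul_le_mul_of_nonneg_left (hxy j) (hQ i j)

lemma pow_entry_nonneg [DecidableEq ι] {Q : Matrix ι ι ℝ} (hQ : ∀ i j, 0 ≤ Q i j) :
    ∀ k i j, 0 ≤ (Q ^ k) i j := by
  intro k
  induction k with
  | zero => intro i j; simp [Matrix.one_apply]; positivity
  | succ k ih =>
      intro i j
      rw [pow_succ, Matrix.mul_apply]
      exact Finset.sum_nonneg fun l _ => mul_nonneg (ih i l) (hQ l j)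

lemma pow_mulVec_ge [DecidableEq ι] {Q : Matrix ι ι ℝ} (hQ : ∀ i j, 0 ≤ Q i j)
    {w : ι → ℝ} (hw : w ≤ Q.mulVec w) : ∀ k, w ≤ (Q ^ k).mulVec w := by
  intro k
  induction k with
  | zero => simp [Matrix.one_mulVec]
  | succ k ih =>
      calc w ≤ (Q ^ k).mulVec w := ih
      _ ≤ (Q ^ k).mulVec (Q.mulVec w) := mulVec_mono (pow_entry_nonneg hQ k) hw
      _ = (Q ^ (k+1)).mulVec w := by rw [Matrix.mulVec_mulVec, ← pow_succ]

lemma abs_mulVec_le (Q : Matrix ι ι ℝ) {v b : ι → ℝ} (hv : ∀ j, |v j| ≤ b j) (i : ι) :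
    |Q.mulVec v i| ≤ ∑ j, |Q i j| * b j := by
  calc |Q.mulVec v i| ≤ ∑ j, |Q i j * v j| := Finset.abs_sum_le_sum_abs _ _
  _ ≤ ∑ j, |Q i j| * b j := Finset.sum_le_sum fun j _ => by
      rw [abs_mul]
      exact mul_le_mul_of_nonneg_left (hv j) (abs_nonneg _)

lemma det_one_sub_eq_zero [DecidableEq ι] {Q : Matrix ι ι ℝ} (hQ : ∀ i j, 0 ≤ Q i j)
    {w : ι → ℝ} (hw : 0 ≤ w) (hQw : w ≤ Q.mulVec w)
    {c : ι → ℝ} (hbd : ∀ k i, ((Q ^ k).mulVec w) i ≤ c i)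
    {i0 : ι} (hw0 : 0 < w i0) : (1 - Q).det = 0 := by
  by_contra hdet
  have hunit : IsUnit (1 - Q).det := isUnit_iff_ne_zero.mpr hdet
  set R := (1 - Q)⁻¹ with hR
  have hRmul : R * (1 - Q) = 1 := Matrix.nonsing_inv_mul _ hunit
  set s : ℕ → ι → ℝ := fun k => ∑ j ∈ Finset.range k, (Q ^ j).mulVec w with hs
  have hgrow : ∀ k : ℕ, (k : ℝ) * w i0 ≤ s k i0 := by
    intro k
    have h1 : ∀ j ∈ Finset.range k, w i0 ≤ ((Q ^ j).mulVec w) i0 := fun j _ =>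
      pow_mulVec_ge hQ hQw j i0
    calc (k : ℝ) * w i0 = ∑ _j ∈ Finset.range k, w i0 := by
          simp [Finset.sum_const, mul_comm]
    _ ≤ ∑ j ∈ Finset.range k, ((Q ^ j).mulVec w) i0 := Finset.sum_le_sum h1
    _ = s k i0 := by simp [hs, Finset.sum_apply]
  have htel : ∀ k : ℕ, (1 - Q).mulVec (s k) = w - (Q ^ k).mulVec w := by
    intro k
    rw [Matrix.sub_mulVec, Matrix.one_mulVec]
    have hQs : Q.mulVec (s k) = ∑ j ∈ Finset.range k, (Q ^ (j+1)).mulVec w := by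
      have : Q.mulVec (s k) = Q.mulVecLin (s k) := rfl
      rw [this, hs]
      simp only [map_sum]
      refine Finset.sum_congr rfl fun j _ => ?_
      show Q.mulVec ((Q ^ j).mulVec w) = _
      rw [Matrix.mulVec_mulVec, ← pow_succ']
    rw [hQs, hs]
    ext i
    simp only [Pi.sub_apply, Finset.sum_apply]
    rw [← Finset.sum_sub_distrib, Finset.sum_range_sub' (fun j => (Q ^ j).mulVec w i)]
    simp [Matrix.one_mulVec]
  -- now bound s k i0
  obtain ⟨K, hK⟩ : ∃ K : ℝ, ∀ k : ℕ, s k i0 ≤ K := by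
    refine ⟨∑ j, |R i0 j| * (w j + c j), fun k => ?_⟩
    have hsk : s k = R.mulVec (w - (Q ^ k).mulVec w) := by
      rw [← htel k, Matrix.mulVec_mulVec, hRmul, Matrix.one_mulVec]
    have habs : ∀ j, |(w - (Q ^ k).mulVec w) j| ≤ w j + c j := by
      intro j
      have h1 : 0 ≤ ((Q ^ k).mulVec w) j :=
        Finset.sum_nonneg fun l _ => mul_nonneg (pow_entry_nonneg hQ k j l) (hw l)
      have h2 : ((Q ^ k).mulVec w) j ≤ c j := hbd k j
      rw [Pi.sub_apply, abs_sub_comm, abs_le]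
      have hwj : (0:ℝ) ≤ w j := hw j
      constructor <;> nlinarith [hwj]
    calc s k i0 ≤ |s k i0| := le_abs_self _
    _ = |R.mulVec (w - (Q ^ k).mulVec w) i0| := by rw [hsk]
    _ ≤ ∑ j, |R i0 j| * (w j + c j) := abs_mulVec_le R habs i0
  obtain ⟨k, hk⟩ := exists_nat_gt (K / w i0)
  have h3 := (hgrow k).trans (hK k)
  have h4 := (div_lt_iff₀ hw0).mp hk
  linarith

end MatrixLemmas
section SR
variable {ι : Type*} [Fintype ι] [DecidableEq ι]


lemma pow_le_one_of_pow_bounded {a : ℝ} {M : ℝ}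
    (hb : ∀ k : ℕ, a ^ k ≤ M) : a ≤ 1 := by
  by_contra hlt
  push_neg at hlt
  obtain ⟨k, hk⟩ := pow_unbounded_of_one_lt M hlt
  exact absurd (hb k) (not_le.mpr hk)

lemma specRad_core {Q : Matrix ι ι ℝ}
    (hQ : ∀ i j, 0 ≤ Q i j) {c : ℝ} (hent : ∀ (k : ℕ) i j, (Q ^ k) i j ≤ c)
    (hdet : (1 - Q).det = 0) :
    sSup {r : ℝ | ∃ μ : ℂ, μ ∈ spectrum ℂ (Q.map (fun a => (a : ℂ))) ∧ r = ‖μ‖}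
      = 1 := by
  set Qc := Q.map (fun a => (a : ℂ)) with hQc
  have hQcpow : ∀ k : ℕ, Qc ^ k = (Q ^ k).map (fun a => (a : ℂ)) := by
    intro k
    have h : Qc = Complex.ofRealHom.mapMatrix Q := rfl
    rw [h, ← map_pow]
    rfl
  have hub : ∀ r ∈ {r : ℝ | ∃ μ : ℂ, μ ∈ spectrum ℂ Qc ∧ r = ‖μ‖}, r ≤ 1 := by
    rintro r ⟨μ, hμ, rfl⟩
    rw [spectrum.mem_iff] at hμ
    have hdet0 : (algebraMap ℂ (Matrix ι ι ℂ) μ - Qc).det = 0 := by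
      by_contra hne
      exact hμ ((Matrix.isUnit_iff_isUnit_det _).mpr (isUnit_iff_ne_zero.mpr hne))
    obtain ⟨v, hv, hAv⟩ := (Matrix.exists_mulVec_eq_zero_iff).mpr hdet0
    have heig : Qc.mulVec v = μ • v := by
      have h1 : (algebraMap ℂ (Matrix ι ι ℂ) μ - Qc).mulVec v
          = μ • v - Qc.mulVec v := by
        rw [Matrix.sub_mulVec, Algebra.algebraMap_eq_smul_one,
          Matrix.smul_mulVec, Matrix.one_mulVec]
      rw [h1] at hAv
      exact (sub_eq_zero.mp hAv).symm
    have hpow : ∀ k : ℕ, (Qc ^ k).mulVec v = μ ^ k • v := by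
      intro k
      induction k with
      | zero => simp [Matrix.one_mulVec]
      | succ k ih =>
          rw [pow_succ, ← Matrix.mulVec_mulVec, heig, Matrix.mulVec_smul, ih,
            smul_smul, pow_succ, mul_comm]
    obtain ⟨j0, hj0⟩ := Function.ne_iff.mp hv
    have hj0pos : 0 < ‖v j0‖ := by
      exact norm_pos_iff.mpr hj0
    have hM : ∀ k : ℕ, ‖μ‖ ^ k * ‖v j0‖
        ≤ c * ∑ j, ‖v j‖ := by
      intro k
      have h2 : ((Qc ^ k).mulVec v) j0 = μ ^ k * v j0 := by
        rw [hpow k]; simp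
      have h3 : ‖((Qc ^ k).mulVec v) j0‖
          ≤ c * ∑ j, ‖v j‖ := by
        rw [hQcpow k]
        have h4 : ((Q ^ k).map (fun a => (a : ℂ))).mulVec v j0
            = ∑ j, ((Q ^ k) j0 j : ℂ) * v j := by
          simp [Matrix.mulVec, dotProduct, Matrix.map_apply]
        rw [h4]
        calc ‖∑ j, ((Q ^ k) j0 j : ℂ) * v j‖
            ≤ ∑ j, ‖((Q ^ k) j0 j : ℂ) * v j‖ :=
              norm_sum_le _ _
        _ ≤ ∑ j, c * ‖v j‖ := by
              refine Finset.sum_le_sum fun j _ => ?_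
              rw [norm_mul, Complex.norm_real, Real.norm_eq_abs, abs_of_nonneg (pow_entry_nonneg hQ k j0 j)]
              exact mul_le_mul_of_nonneg_right (hent k j0 j) (norm_nonneg _)
        _ = c * ∑ j, ‖v j‖ := by rw [Finset.mul_sum]
      calc ‖μ‖ ^ k * ‖v j0‖
          = ‖((Qc ^ k).mulVec v) j0‖ := by rw [h2, norm_mul, norm_pow]
      _ ≤ c * ∑ j, ‖v j‖ := h3
    refine pow_le_one_of_pow_bounded
      (M := (c * ∑ j, ‖v j‖) / ‖v j0‖) fun k => ?_
    rw [le_div_iff₀ hj0pos]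
    exact hM k
  have hmem : (1:ℝ) ∈ {r : ℝ | ∃ μ : ℂ, μ ∈ spectrum ℂ Qc ∧ r = ‖μ‖} := by
    refine ⟨1, ?_, by simp⟩
    rw [spectrum.mem_iff]
    intro hunit
    rw [map_one] at hunit
    have h1 : (1 : Matrix ι ι ℂ) - Qc = (1 - Q).map (Complex.ofRealHom : ℝ →+* ℂ) := by
      ext i j
      simp only [Matrix.map_apply, Matrix.sub_apply, Matrix.one_apply, hQc,
        Complex.ofRealHom_eq_coe]
      split <;> simp
    have h2 : ((1 : Matrix ι ι ℂ) - Qc).det = 0 := by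
      rw [h1, ← RingHom.mapMatrix_apply, ← RingHom.map_det, hdet, map_zero]
    rw [Matrix.isUnit_iff_isUnit_det, h2] at hunit
    exact not_isUnit_zero hunit
  exact le_antisymm (Real.sSup_le hub zero_le_one)
    (le_csSup ⟨1, mem_upperBounds.mpr hub⟩ hmem)

end SR
lemma exists_final_node {α : Type*} [Fintype α] (r : α → α → Prop) (S : Set α)
    (hne : S.Nonempty) (hr : ∀ i j, r i j → j ∈ S) :
    ∃ i0 ∈ S, ∀ j, Relation.ReflTransGen r i0 j → Relation.ReflTransGen r j i0 := by
  classical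
  set R : α → Finset α := fun i => Finset.univ.filter (Relation.ReflTransGen r i ·) with hR
  obtain ⟨i0, hi0S, hmin⟩ := Finset.exists_min_image
    (Finset.univ.filter (· ∈ S)) (fun i => (R i).card)
    (by obtain ⟨i, hi⟩ := hne; exact ⟨i, by simp [hi]⟩)
  rw [Finset.mem_filter] at hi0S
  refine ⟨i0, hi0S.2, fun j hj => ?_⟩
  by_contra hback
  have hjS : j ∈ S := by
    rcases (Relation.ReflTransGen.cases_tail hj) with heq | ⟨c, _, hcj⟩
    · exact absurd (heq ▸ Relation.ReflTransGen.refl) hback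
    · exact hr c j hcj
  have hsub : R j ⊆ R i0 := by
    intro k hk
    rw [hR] at hk ⊢
    simp only [Finset.mem_filter, Finset.mem_univ, true_and] at hk ⊢
    exact hj.trans hk
  have hssub : R j ⊂ R i0 := by
    refine ⟨hsub, fun hsub2 => ?_⟩
    have : i0 ∈ R j := hsub2 (by
      simp only [hR, Finset.mem_filter, Finset.mem_univ, true_and]
      exact Relation.ReflTransGen.refl)
    simp only [hR, Finset.mem_filter, Finset.mem_univ, true_and] at this
    exact hback this
  have hlt := Finset.card_lt_card hssub
  have := hmin j (by simp [hjS])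
  omega

lemma pos_coord_of_ne_zero {α : Type*} [Fintype α] {x : α → ℝ} (hnn : 0 ≤ x)
    (hne : x ≠ 0) : ∃ i, 0 < x i := by
  by_contra hc
  push_neg at hc
  exact hne (funext fun i => le_antisymm (hc i) (hnn i))
section Support
variable {n : ℕ} (h : (Fin n → ℝ) → (Fin n → ℝ))

lemma h_subadd (hconv : ∀ i, ConvexOn ℝ Set.univ (fun x => h x i))
    (hhom : ∀ t : ℝ, 0 < t → ∀ x, h (t • x) = t • h x) (x y : Fin n → ℝ) (i : Fin n) :
    h (x + y) i ≤ h x i + h y i := by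
  have hc := (hconv i).2 (mem_univ x) (mem_univ y)
    (by norm_num : (0:ℝ) ≤ 1/2) (by norm_num : (0:ℝ) ≤ 1/2) (by norm_num)
  have h2 : h (x + y) = (2:ℝ) • h ((1/2 : ℝ) • x + (1/2 : ℝ) • y) := by
    rw [← hhom 2 (by norm_num)]
    congr 1
    rw [smul_add, smul_smul, smul_smul]
    norm_num
  have hc' : h ((1/2 : ℝ) • x + (1/2 : ℝ) • y) i ≤ 1/2 * h x i + 1/2 * h y i := by
    simpa using hc
  rw [h2]
  simp only [Pi.smul_apply, smul_eq_mul]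
  linarith

lemma h_neg_le (hconv : ∀ i, ConvexOn ℝ Set.univ (fun x => h x i))
    (h0 : h 0 = 0) (x : Fin n → ℝ) (i : Fin n) : -(h (-x) i) ≤ h x i := by
  have hc := (hconv i).2 (mem_univ x) (mem_univ (-x))
    (by norm_num : (0:ℝ) ≤ 1/2) (by norm_num : (0:ℝ) ≤ 1/2) (by norm_num)
  have hz : (1/2 : ℝ) • x + (1/2 : ℝ) • (-x) = 0 := by
    rw [smul_neg, add_neg_cancel]
  rw [hz] at hc
  have hc' : (0:ℝ) ≤ 1/2 * h x i + 1/2 * h (-x) i := by simpa [h0] using hc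
  linarith

lemma exists_support_matrix (hconv : ∀ i, ConvexOn ℝ Set.univ (fun x => h x i))
    (hmono : Monotone h)
    (hhom : ∀ t : ℝ, 0 < t → ∀ x, h (t • x) = t • h x)
    (h0 : h 0 = 0) {z : Fin n → ℝ} (hz : z ≠ 0) :
    ∃ P : Matrix (Fin n) (Fin n) ℝ, P ∈ Subdiff h Set.univ 0 ∧ P.mulVec z = h z ∧
      ∀ i j, 0 ≤ P i j := by
  have key : ∀ c : ℝ, ∀ i, c * h z i ≤ h (c • z) i := by
    intro c i
    rcases lt_trichotomy c 0 with hc | hc | hc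
    · have hpos : (0:ℝ) < -c := by linarith
      have h1 : h ((-c) • z) i = (-c) * h z i := by
        rw [hhom (-c) hpos]; simp
      have h2 := h_neg_le h hconv h0 (c • z) i
      have h3 : -(c • z) = (-c) • z := by rw [neg_smul]
      rw [h3, h1] at h2
      linarith
    · subst hc; simp [h0]
    · rw [hhom c hc]; simp
  have hrow : ∀ i : Fin n, ∃ g : (Fin n → ℝ) →ₗ[ℝ] ℝ,
      g z = h z i ∧ ∀ y, g y ≤ h y i := by
    intro i
    set f := LinearPMap.mkSpanSingleton (K := ℝ) (L := ℝ) (σ := RingHom.id ℝ) z (h z i) hz with hf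
    have hfle : ∀ x : f.domain, f x ≤ h (x : Fin n → ℝ) i := by
      rintro ⟨w, hw⟩
      have hw' : w ∈ Submodule.span ℝ {z} := hw
      obtain ⟨c, hc⟩ := Submodule.mem_span_singleton.mp hw'
      have hmem : c • z ∈ f.domain := by rw [hc]; exact hw
      have heq : (⟨w, hw⟩ : f.domain) = ⟨c • z, hmem⟩ := Subtype.ext hc.symm
      rw [heq]
      have happ : f ⟨c • z, hmem⟩ = c • (h z i) :=
        LinearPMap.mkSpanSingleton'_apply z (h z i) _ c hmem
      rw [happ]
      simpa [smul_eq_mul] using key c i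
    obtain ⟨g, hg1, hg2⟩ := exists_extension_of_le_sublinear f (fun y => h y i)
      (fun c hc x => by show h (c • x) i = c * h x i; rw [hhom c hc]; simp)
      (fun x y => h_subadd h hconv hhom x y i) hfle
    refine ⟨g, ?_, hg2⟩
    have hzmem : z ∈ f.domain := Submodule.mem_span_singleton_self z
    have := hg1 ⟨z, hzmem⟩
    rw [LinearPMap.mkSpanSingleton_apply] at this
    exact this
  choose g hg1 hg2 using hrow
  refine ⟨Matrix.of fun i j => g i (fun k => if j = k then 1 else 0), ?_, ?_, ?_⟩
  · intro x _
    have : ∀ i, (Matrix.of fun i j => g i (fun k => if j = k then 1 else 0)).mulVec x i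
        = g i x := by
      intro i
      rw [LinearMap.pi_apply_eq_sum_univ (g i) x]
      simp [Matrix.mulVec, dotProduct, mul_comm]
    intro i
    simp only [Pi.sub_apply, h0, Pi.zero_apply, sub_zero]
    rw [this i]
    exact hg2 i x
  · ext i
    have : ∀ i, (Matrix.of fun i j => g i (fun k => if j = k then 1 else 0)).mulVec z i
        = g i z := by
      intro i
      rw [LinearMap.pi_apply_eq_sum_univ (g i) z]
      simp [Matrix.mulVec, dotProduct, mul_comm]
    rw [this i, hg1 i]
  · intro i j
    have hneg : -(fun k => if j = k then (1:ℝ) else 0) ≤ 0 := by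
      intro k
      simp only [Pi.neg_apply, Pi.zero_apply, neg_nonpos]
      split <;> norm_num
    have h1 : g i (-(fun k => if j = k then (1:ℝ) else 0)) ≤ h (-(fun k => if j = k then (1:ℝ) else 0)) i :=
      hg2 i _
    have h2 : h (-(fun k => if j = k then (1:ℝ) else 0)) i ≤ h 0 i := by
      have := hmono hneg
      exact this i
    rw [map_neg] at h1
    simp only [h0, Pi.zero_apply] at h2
    simp only [Matrix.of_apply]
    linarith

end Support

section Sums
variable {α : Type*} [Fintype α]

lemma sum_subtype_eq_of_vanish (S : Set α) [Fintype ↥S] {g : α → ℝ}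
    (hg : ∀ j ∉ S, g j = 0) : (∑ j : ↥S, g j.1) = ∑ j, g j := by
  rw [← Finset.sum_subtype (Finset.univ.filter (· ∈ S)) (fun x => by simp) g]
  exact Finset.sum_filter_of_ne (fun x _ hx => by
    by_contra hmem
    exact hx (hg x hmem))

lemma sum_subtype_le (S : Set α) [Fintype ↥S] {g : α → ℝ}
    (hg : ∀ j, 0 ≤ g j) : (∑ j : ↥S, g j.1) ≤ ∑ j, g j := by
  rw [← Finset.sum_subtype (Finset.univ.filter (· ∈ S)) (fun x => by simp) g]
  exact Finset.sum_le_sum_of_subset_of_nonneg (Finset.filter_subset _ _)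
    (fun x _ _ => hg x)

end Sums

section Iter
variable {n : ℕ} {h : (Fin n → ℝ) → (Fin n → ℝ)} {P : Matrix (Fin n) (Fin n) ℝ}

lemma pow_mulVec_le_iterate (hmono : Monotone h)
    (hPle : ∀ y, P.mulVec y ≤ h y) (hPnn : ∀ i j, 0 ≤ P i j) :
    ∀ (k : ℕ) (y : Fin n → ℝ), (P ^ k).mulVec y ≤ h^[k] y := by
  intro k
  induction k with
  | zero => intro y; simp [Matrix.one_mulVec]
  | succ k ih =>
      intro y
      calc (P ^ (k+1)).mulVec y = (P ^ k).mulVec (P.mulVec y) := by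
            rw [pow_succ, ← Matrix.mulVec_mulVec]
      _ ≤ (P ^ k).mulVec (h y) := mulVec_mono (pow_entry_nonneg hPnn k) (hPle y)
      _ ≤ h^[k] (h y) := ih (h y)
      _ = h^[k+1] y := (Function.iterate_succ_apply h k y).symm

end Iter

section Key
variable {n : ℕ}

lemma key_lt_one (h : (Fin n → ℝ) → (Fin n → ℝ))
    (hconv : ∀ i, ConvexOn ℝ Set.univ (fun x => h x i))
    (hmono : Monotone h)
    (hhom : ∀ t : ℝ, 0 < t → ∀ x, h (t • x) = t • h x)
    (h0 : h 0 = 0)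
    (horb : ∀ x : Fin n → ℝ, ∃ u : Fin n → ℝ, ∀ k : ℕ, h^[k] x ≤ u)
    (Bset : Set (Fin n))
    (hBedge : ∀ i ∈ Bset, ∀ P ∈ Subdiff h Set.univ 0, ∀ j, 0 < P i j → j ∈ Bset)
    (hBnc : ∀ P ∈ Subdiff h Set.univ 0, ∀ i ∈ Bset, i ∉ CriticalNodes P)
    {lam : ℝ} (hlam : 0 ≤ lam) {xt : Fin n → ℝ} (hxnn : 0 ≤ xt) (hxne : xt ≠ 0)
    (hsupp : ∀ i, i ∉ Bset → xt i = 0)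
    (heig : ∀ i ∈ Bset, h xt i = lam * xt i) :
    lam < 1 := by
  obtain ⟨P, hPsub, hPz, hPnn⟩ := exists_support_matrix h hconv hmono hhom h0 hxne
  have hPle : ∀ y, P.mulVec y ≤ h y := by
    intro y i
    have := hPsub y (mem_univ y) i
    simpa [h0] using this
  -- first: lam ≤ 1
  obtain ⟨u, hu⟩ := horb xt
  obtain ⟨i1, hi1⟩ := pos_coord_of_ne_zero hxnn hxne
  have hSB : ∀ i, 0 < xt i → i ∈ Bset := by
    intro i hpos
    by_contra hniB
    rw [hsupp i hniB] at hpos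
    exact lt_irrefl 0 hpos
  have hge1 : lam • xt ≤ P.mulVec xt := by
    intro i
    by_cases hiB : i ∈ Bset
    · have : P.mulVec xt i = lam * xt i := by rw [hPz]; exact heig i hiB
      rw [this]
      simp [Pi.smul_apply, smul_eq_mul]
    · have hxi : xt i = 0 := hsupp i hiB
      have : 0 ≤ P.mulVec xt i := by
        rw [Matrix.mulVec, dotProduct]
        exact Finset.sum_nonneg fun j _ => mul_nonneg (hPnn i j) (hxnn j)
      simpa [Pi.smul_apply, smul_eq_mul, hxi] using this
  have hgek : ∀ k : ℕ, (lam ^ k) • xt ≤ (P ^ k).mulVec xt := by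
    intro k
    induction k with
    | zero => simp [Matrix.one_mulVec]
    | succ k ih =>
        calc (lam ^ (k+1)) • xt = lam • (lam ^ k • xt) := by
              rw [smul_smul, pow_succ, mul_comm]
        _ ≤ lam • ((P ^ k).mulVec xt) := by
              intro i
              simp only [Pi.smul_apply, smul_eq_mul]
              exact mul_le_mul_of_nonneg_left (ih i) hlam
        _ = (P ^ k).mulVec (lam • xt) := (Matrix.mulVec_smul _ _ _).symm
        _ ≤ (P ^ k).mulVec (P.mulVec xt) := mulVec_mono (pow_entry_nonneg hPnn k) hge1
        _ = (P ^ (k+1)).mulVec xt := by rw [Matrix.mulVec_mulVec, ← pow_succ]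
  have hle1 : lam ≤ 1 := by
    refine pow_le_one_of_pow_bounded (M := u i1 / xt i1) fun k => ?_
    rw [le_div_iff₀ hi1]
    have h1 : (lam ^ k) * xt i1 ≤ (P ^ k).mulVec xt i1 := by
      simpa [Pi.smul_apply, smul_eq_mul] using hgek k i1
    have h2 : (P ^ k).mulVec xt i1 ≤ h^[k] xt i1 :=
      pow_mulVec_le_iterate hmono hPle hPnn k xt i1
    exact h1.trans (h2.trans (hu k i1))
  rcases lt_or_eq_of_le hle1 with hlt | hlam1
  · exact hlt
  -- now lam = 1; derive a contradiction
  exfalso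
  subst hlam1
  -- support set and restricted relation
  set rS : Fin n → Fin n → Prop := fun i j => 0 < xt i ∧ 0 < xt j ∧ 0 < P i j with hrS
  obtain ⟨i0, hi0S, hfinal⟩ := exists_final_node rS {i | 0 < xt i} ⟨i1, hi1⟩
    (fun i j hij => hij.2.1)
  set C : Set (Fin n) := {j | Relation.ReflTransGen rS i0 j ∧ Relation.ReflTransGen rS j i0}
    with hC
  have hi0C : i0 ∈ C := ⟨Relation.ReflTransGen.refl, Relation.ReflTransGen.refl⟩
  have hCpos : ∀ j ∈ C, 0 < xt j := by
    rintro j ⟨hj1, _⟩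
    rcases Relation.ReflTransGen.cases_tail hj1 with heq | ⟨c, _, hcj⟩
    · rw [heq]; exact hi0S
    · exact hcj.2.1
  have hClosed : ∀ i ∈ C, ∀ j, 0 < P i j → 0 < xt j → j ∈ C := by
    intro i hiC j hPij hxj
    have hrij : rS i j := ⟨hCpos i hiC, hxj, hPij⟩
    have h1 : Relation.ReflTransGen rS i0 j := hiC.1.tail hrij
    exact ⟨h1, hfinal j h1⟩
  set w : Fin n → ℝ := fun j => if j ∈ C then xt j else 0 with hw
  have hwnn : 0 ≤ w := by
    intro j
    rw [hw]
    dsimp only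
    split
    · exact hxnn j
    · exact le_refl 0
  have hwsupp : ∀ j, j ∉ C → w j = 0 := by
    intro j hj
    rw [hw]; simp [hj]
  have hPwEq : ∀ i ∈ C, P.mulVec w i = xt i := by
    intro i hiC
    have h1 : P.mulVec w i = P.mulVec xt i := by
      rw [Matrix.mulVec, Matrix.mulVec, dotProduct, dotProduct]
      refine Finset.sum_congr rfl fun j _ => ?_
      by_cases hjC : j ∈ C
      · rw [hw]; simp [hjC]
      · rcases eq_or_lt_of_le (hxnn j) with hxj | hxj
        · rw [hw]; simp [hjC, ← hxj]
        · have : ¬ (0 < P i j) := fun hp => hjC (hClosed i hiC j hp hxj)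
          have hPij : P i j = 0 := le_antisymm (not_lt.mp this) (hPnn i j)
          rw [hw]; simp [hjC, hPij]
    rw [h1, hPz]
    have := heig i (hSB i (hCpos i hiC))
    rw [this, one_mul]
  -- the class of P containing i0
  set C' : Set (Fin n) := {j | AccessM P i0 j ∧ AccessM P j i0} with hC'
  have hCC' : C ⊆ C' := by
    rintro j ⟨hj1, hj2⟩
    exact ⟨Relation.ReflTransGen.mono (fun a b hab => hab.2.2) _ _ hj1,
      Relation.ReflTransGen.mono (fun a b hab => hab.2.2) _ _ hj2⟩
  have hi0C' : i0 ∈ C' := hCC' hi0C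
  letI instF : Fintype ↥C' := Fintype.ofFinite _
  letI instD : DecidableEq ↥C' := Classical.decEq _
  set Q : Matrix ↥C' ↥C' ℝ := Matrix.of fun i j : ↥C' => P i.1 j.1 with hQ
  have hQnn : ∀ i j : ↥C', 0 ≤ Q i j := fun i j => hPnn i.1 j.1
  set w' : ↥C' → ℝ := fun i => w i.1 with hw'
  have hw'nn : 0 ≤ w' := fun i => hwnn i.1
  -- mulVec of Q versus P
  have hQP : ∀ (v : Fin n → ℝ), (∀ j, j ∉ C' → v j = 0) →
      ∀ i : ↥C', Q.mulVec (fun j : ↥C' => v j.1) i = P.mulVec v i.1 := by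
    intro v hv i
    rw [Matrix.mulVec, Matrix.mulVec, dotProduct, dotProduct]
    exact sum_subtype_eq_of_vanish C' (g := fun j => P i.1 j * v j)
      (fun j hj => by show P i.1 j * v j = 0; rw [hv j hj, mul_zero])
  have hwC' : ∀ j, j ∉ C' → w j = 0 := fun j hj => hwsupp j (fun hjC => hj (hCC' hjC))
  have hQw' : ∀ i : ↥C', Q.mulVec w' i = P.mulVec w i.1 := fun i => hQP w hwC' i
  have hwge : w' ≤ Q.mulVec w' := by
    intro i
    rw [hQw' i]
    by_cases hiC : i.1 ∈ C
    · rw [hPwEq i.1 hiC, hw']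
      dsimp only
      rw [hw]
      simp [hiC]
    · have h1 : w' i = 0 := hwsupp i.1 hiC
      rw [h1]
      rw [Matrix.mulVec, dotProduct]
      exact Finset.sum_nonneg fun j _ => mul_nonneg (hPnn i.1 j) (hwnn j)
  -- entrywise comparison of powers
  have hpowcomp : ∀ k : ℕ, ∀ i j : ↥C', (Q ^ k) i j ≤ (P ^ k) i.1 j.1 := by
    intro k
    induction k with
    | zero =>
        intro i j
        by_cases hij : i = j
        · subst hij; simp [Matrix.one_apply]
        · have hij' : i.1 ≠ j.1 := fun hh => hij (Subtype.ext hh)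
          simp [Matrix.one_apply, hij, hij']
    | succ k ih =>
        intro i j
        rw [pow_succ, pow_succ, Matrix.mul_apply, Matrix.mul_apply]
        calc ∑ l : ↥C', (Q ^ k) i l * Q l j
            ≤ ∑ l : ↥C', (P ^ k) i.1 l.1 * P l.1 j.1 := by
              refine Finset.sum_le_sum fun l _ => ?_
              exact mul_le_mul (ih i l) (le_refl _) (hQnn l j)
                (pow_entry_nonneg hPnn k i.1 l.1)
        _ ≤ ∑ l, (P ^ k) i.1 l * P l j.1 :=
              sum_subtype_le C' (g := fun l => (P ^ k) i.1 l * P l j.1)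
                (fun l => mul_nonneg (pow_entry_nonneg hPnn k i.1 l) (hPnn l j.1))
  -- orbit bounds for Q
  obtain ⟨uw, huw⟩ := horb w
  have hQorb : ∀ (k : ℕ) (i : ↥C'), ((Q ^ k).mulVec w') i ≤ uw i.1 := by
    intro k i
    have h1 : ((Q ^ k).mulVec w') i ≤ ((P ^ k).mulVec w) i.1 := by
      rw [Matrix.mulVec, Matrix.mulVec, dotProduct, dotProduct]
      calc ∑ j : ↥C', (Q ^ k) i j * w' j
          ≤ ∑ j : ↥C', (P ^ k) i.1 j.1 * w j.1 := by
            refine Finset.sum_le_sum fun j _ => ?_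
            exact mul_le_mul (hpowcomp k i j) (le_refl _) (hwnn j.1)
              (pow_entry_nonneg hPnn k i.1 j.1)
      _ ≤ ∑ j, (P ^ k) i.1 j * w j :=
            sum_subtype_le C' (g := fun j => (P ^ k) i.1 j * w j)
              (fun j => mul_nonneg (pow_entry_nonneg hPnn k i.1 j) (hwnn j))
    exact h1.trans ((pow_mulVec_le_iterate hmono hPle hPnn k w i.1).trans (huw k i.1))
  -- det (1 - Q) = 0
  have hdet : (1 - Q).det = 0 := by
    refine det_one_sub_eq_zero hQnn hw'nn hwge (c := fun i => uw i.1) hQorb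
      (i0 := ⟨i0, hi0C'⟩) ?_
    show 0 < w i0
    rw [hw]
    simp only [hi0C, if_pos]
    exact hi0S
  -- entry bound for powers of Q
  obtain ⟨uo, huo⟩ := horb (fun _ => (1:ℝ))
  have hent : ∀ (k : ℕ) (i j : ↥C'), (Q ^ k) i j ≤ ∑ b, |uo b| := by
    intro k i j
    have h1 : (P ^ k) i.1 j.1 ≤ ((P ^ k).mulVec (fun _ => (1:ℝ))) i.1 := by
      rw [Matrix.mulVec, dotProduct]
      have : (P ^ k) i.1 j.1 = (P ^ k) i.1 j.1 * 1 := by ring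
      rw [this]
      exact Finset.single_le_sum (f := fun l => (P ^ k) i.1 l * 1)
        (fun l _ => mul_nonneg (pow_entry_nonneg hPnn k i.1 l) zero_le_one)
        (Finset.mem_univ j.1)
    have h2 : ((P ^ k).mulVec (fun _ => (1:ℝ))) i.1 ≤ uo i.1 :=
      (pow_mulVec_le_iterate hmono hPle hPnn k _ i.1).trans (huo k i.1)
    have h3 : uo i.1 ≤ ∑ b, |uo b| := by
      calc uo i.1 ≤ |uo i.1| := le_abs_self _
      _ ≤ ∑ b, |uo b| := Finset.single_le_sum (fun b _ => abs_nonneg (uo b))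
            (Finset.mem_univ i.1)
    exact (hpowcomp k i j).trans (h1.trans (h2.trans h3))
  -- spectral radius of the class is 1
  have hcrit : SpecRadOn P C' = 1 := by
    unfold SpecRadOn SpecRad
    exact specRad_core hQnn hent hdet
  have : i0 ∈ CriticalNodes P := ⟨C', ⟨⟨i0, rfl⟩, hcrit⟩, hi0C'⟩
  exact hBnc P hPsub i0 (hSB i0 hi0S) this

end Key


/-- for a convex monotone positively homogeneous map h with 0 as a
t-stable fixed point, the restriction of h to the coordinates B(h) having no access
to a critical node has spectral radius strictly less than one. -/
theorem stmt15 {n : ℕ} (h : (Fin n → ℝ) → (Fin n → ℝ))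
    (hconv : ∀ i, ConvexOn ℝ Set.univ (fun x => h x i))
    (hmono : Monotone h)
    (hhom : ∀ t : ℝ, 0 < t → ∀ x, h (t • x) = t • h x)
    (h0 : h 0 = 0)
    (horb : ∀ x : Fin n → ℝ, ∃ u : Fin n → ℝ, ∀ k : ℕ, h^[k] x ≤ u) :
    let Edge : Fin n → Fin n → Prop :=
      fun i j => ∃ P ∈ Subdiff h Set.univ 0, 0 < P i j
    let Nc : Set (Fin n) := {i | ∃ P ∈ Subdiff h Set.univ 0, i ∈ CriticalNodes P}
    let A : Set (Fin n) := {i | ∃ j ∈ Nc, Relation.ReflTransGen Edge i j}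
    let B : Set (Fin n) := Aᶜ
    let hB : (B → ℝ) → (B → ℝ) := fun y i =>
      h (fun j => if hj : j ∈ B then y ⟨j, hj⟩ else 0) i.1
    sSup {lam : ℝ | 0 ≤ lam ∧ ∃ x : B → ℝ, 0 ≤ x ∧ x ≠ 0 ∧ hB x = lam • x} < 1 := by
  intro Edge Nc A B hB
  set T : Set ℝ := {lam : ℝ | 0 ≤ lam ∧ ∃ x : B → ℝ, 0 ≤ x ∧ x ≠ 0 ∧ hB x = lam • x}
    with hT
  -- properties of B
  have hBedge : ∀ i ∈ B, ∀ P ∈ Subdiff h Set.univ 0, ∀ j, 0 < P i j → j ∈ B := by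
    intro i hiB P hP j hPij
    intro hjA
    obtain ⟨k, hkNc, hpath⟩ := hjA
    exact hiB ⟨k, hkNc, Relation.ReflTransGen.head ⟨P, hP, hPij⟩ hpath⟩
  have hBnc : ∀ P ∈ Subdiff h Set.univ 0, ∀ i ∈ B, i ∉ CriticalNodes P := by
    intro P hP i hiB hic
    exact hiB ⟨i, ⟨P, hP, hic⟩, Relation.ReflTransGen.refl⟩
  -- every element of T is < 1
  have key' : ∀ lam ∈ T, lam < 1 := by
    rintro lam ⟨hlam, x, hxnn, hxne, heq⟩
    set xt : Fin n → ℝ := fun j => if hj : j ∈ B then x ⟨j, hj⟩ else 0 with hxt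
    have hxtnn : 0 ≤ xt := by
      intro j
      rw [hxt]
      dsimp only
      split
      · exact hxnn _
      · exact le_refl 0
    have hxtne : xt ≠ 0 := by
      obtain ⟨i, hi⟩ := Function.ne_iff.mp hxne
      intro hc
      apply hi
      have : xt i.1 = 0 := by rw [hc]; rfl
      rw [hxt] at this
      simpa [i.2] using this
    have hsupp : ∀ i, i ∉ B → xt i = 0 := by
      intro i hi
      rw [hxt]
      simp [hi]
    have heig : ∀ i ∈ B, h xt i = lam * xt i := by
      intro i hi
      have h1 : hB x ⟨i, hi⟩ = lam * x ⟨i, hi⟩ := by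
        rw [heq]; rfl
      have h2 : hB x ⟨i, hi⟩ = h xt i := rfl
      rw [← h2, h1, hxt]
      simp [hi]
    exact key_lt_one h hconv hmono hhom h0 horb B hBedge hBnc hlam hxtnn hxtne hsupp heig
  rcases T.eq_empty_or_nonempty with hTe | hTne
  · rw [hTe, Real.sSup_empty]; exact one_pos
  have hbdd : BddAbove T := ⟨1, fun lam hl => (key' lam hl).le⟩
  -- homogeneity of hB
  have hBhom : ∀ (t : ℝ), 0 < t → ∀ y : B → ℝ, hB (t • y) = t • hB y := by
    intro t ht y
    funext i
    show h (fun j => if hj : j ∈ B then (t • y) ⟨j, hj⟩ else 0) i.1 = t * hB y i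
    have hext : (fun j => if hj : j ∈ B then (t • y) ⟨j, hj⟩ else 0)
        = t • (fun j => if hj : j ∈ B then y ⟨j, hj⟩ else 0) := by
      funext j
      by_cases hj : j ∈ B
      · simp [hj]
      · simp [hj]
    rw [hext, hhom t ht]
    rfl
  -- normalized eigenvectors
  have hnorm : ∀ lam ∈ T, ∃ x : B → ℝ, 0 ≤ x ∧ ‖x‖ = 1 ∧ hB x = lam • x := by
    rintro lam ⟨hlam, x, hxnn, hxne, heq⟩
    have hc : 0 < ‖x‖ := norm_pos_iff.mpr hxne
    refine ⟨‖x‖⁻¹ • x, ?_, ?_, ?_⟩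
    · intro i
      exact mul_nonneg (inv_nonneg.mpr hc.le) (hxnn i)
    · rw [norm_smul, norm_inv, norm_norm, inv_mul_cancel₀ hc.ne']
    · rw [hBhom _ (inv_pos.mpr hc), heq, smul_comm]
  -- continuity of hB
  have hconth : Continuous h := by
    apply continuous_pi
    intro i
    exact continuousOn_univ.mp ((hconv i).continuousOn isOpen_univ)
  have hcontext : Continuous (fun (y : B → ℝ) (j : Fin n) =>
      if hj : j ∈ B then y ⟨j, hj⟩ else 0) := by
    apply continuous_pi
    intro j
    by_cases hj : j ∈ B
    · simp only [dif_pos hj]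
      exact continuous_apply _
    · simp only [dif_neg hj]
      exact continuous_const
  have hcontB : Continuous hB := by
    apply continuous_pi
    intro i
    exact ((continuous_apply i.1).comp hconth).comp hcontext
  -- T is sequentially closed
  have hclosed : IsClosed T := by
    apply IsSeqClosed.isClosed
    intro f la hfT htend
    have hla : 0 ≤ la := ge_of_tendsto' htend fun k => (hfT k).1
    choose y hynn hynorm hyeig using fun k => hnorm (f k) (hfT k)
    have hmem : ∀ k, y k ∈ Metric.closedBall (0 : B → ℝ) 1 := fun k => by
      rw [Metric.mem_closedBall, dist_zero_right, hynorm k]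
    obtain ⟨a, _, φ, hφ, hconv2⟩ :=
      (isCompact_closedBall (0 : B → ℝ) 1).tendsto_subseq hmem
    have hnormA : ‖a‖ = 1 := by
      have h1 : Tendsto (fun j => ‖y (φ j)‖) atTop (𝓝 ‖a‖) :=
        (continuous_norm.tendsto a).comp hconv2
      have h2 : (fun j => ‖y (φ j)‖) = fun _ => (1:ℝ) := funext fun j => hynorm (φ j)
      rw [h2] at h1
      exact tendsto_nhds_unique h1 tendsto_const_nhds
    have hane : a ≠ 0 := by
      intro hc
      rw [hc, norm_zero] at hnormA
      exact one_ne_zero hnormA.symm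
    have hann : 0 ≤ a := by
      intro i
      exact ge_of_tendsto' (((continuous_apply i).tendsto a).comp hconv2)
        fun j => hynn (φ j) i
    have heiga : hB a = la • a := by
      have h1 : Tendsto (fun j => hB (y (φ j))) atTop (𝓝 (hB a)) :=
        (hcontB.tendsto a).comp hconv2
      have h2 : (fun j => hB (y (φ j))) = fun j => f (φ j) • y (φ j) :=
        funext fun j => hyeig (φ j)
      rw [h2] at h1
      have h3 : Tendsto (fun j => f (φ j) • y (φ j)) atTop (𝓝 (la • a)) :=
        Tendsto.smul (htend.comp hφ.tendsto_atTop) hconv2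
      exact tendsto_nhds_unique h1 h3
    exact ⟨hla, a, hann, hane, heiga⟩
  have := hclosed.csSup_mem hTne hbdd
  exact key' _ this
end
end

section
/- Let D ⊆ ℝ^n be an open convex downward set and f : D → D a convex monotone map with a t-stable fixed point. Then for every z ∈ D with f(z) ≤ z, the limit f^ω(z) = lim_{k→∞} f^k(z) exists, is a fixed point of f, and f^ω(z) agrees with z on the critical node set N^c(f). The resulting map f^ω from {z : f(z) ≤ z} onto the fixed point set is a monotone convex projection. -/
noncomputable section
open Filter Topology Set
open scoped Classical

/-! ### Auxiliary material for the proof -/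

set_option linter.unusedSectionVars false
set_option maxHeartbeats 1600000

namespace S17

variable {ι : Type*} [Fintype ι] [DecidableEq ι]

lemma pow_nonneg {A : Matrix ι ι ℝ} (hA : ∀ a b, 0 ≤ A a b) :
    ∀ m a b, 0 ≤ (A ^ m) a b := by
  intro m
  induction m with
  | zero => intro a b; by_cases h : a = b <;> simp [Matrix.one_apply, h]
  | succ m ih =>
    intro a b
    rw [pow_succ, Matrix.mul_apply]
    exact Finset.sum_nonneg fun k _ => mul_nonneg (ih a k) (hA k b)

lemma mulVec_apply' (A : Matrix ι ι ℝ) (x : ι → ℝ) (a : ι) :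
    A.mulVec x a = ∑ k, A a k * x k := rfl

lemma mulVec_le_mulVec {A : Matrix ι ι ℝ} (hA : ∀ a b, 0 ≤ A a b)
    {x y : ι → ℝ} (h : x ≤ y) : A.mulVec x ≤ A.mulVec y := by
  intro a
  rw [mulVec_apply', mulVec_apply']
  exact Finset.sum_le_sum fun k _ => mul_le_mul_of_nonneg_left (h k) (hA a k)

lemma mulVec_nonneg {A : Matrix ι ι ℝ} (hA : ∀ a b, 0 ≤ A a b)
    {x : ι → ℝ} (hx : 0 ≤ x) : 0 ≤ A.mulVec x := by
  have := mulVec_le_mulVec hA hx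
  simpa using this

lemma pow_mulVec_succ (A : Matrix ι ι ℝ) (x : ι → ℝ) (m : ℕ) :
    (A ^ (m + 1)).mulVec x = (A ^ m).mulVec (A.mulVec x) := by
  rw [Matrix.mulVec_mulVec, ← pow_succ]

lemma pow_mulVec_succ' (A : Matrix ι ι ℝ) (x : ι → ℝ) (m : ℕ) :
    (A ^ (m + 1)).mulVec x = A.mulVec ((A ^ m).mulVec x) := by
  rw [Matrix.mulVec_mulVec, ← pow_succ']

lemma le_pow_mulVec {A : Matrix ι ι ℝ} (hA : ∀ a b, 0 ≤ A a b)
    {h : ι → ℝ} (hsub : h ≤ A.mulVec h) : ∀ m, h ≤ (A ^ m).mulVec h := by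
  intro m
  induction m with
  | zero => simp [Matrix.one_mulVec]
  | succ m ih =>
    rw [pow_mulVec_succ]
    exact le_trans ih (mulVec_le_mulVec (pow_nonneg hA m) hsub)

lemma pow_mulVec_mono {A : Matrix ι ι ℝ} (hA : ∀ a b, 0 ≤ A a b)
    {h : ι → ℝ} (hsub : h ≤ A.mulVec h) {m m' : ℕ} (hm : m ≤ m') :
    (A ^ m).mulVec h ≤ (A ^ m').mulVec h := by
  induction m' with
  | zero => rw [Nat.le_zero.mp hm]
  | succ m' ih =>
    rcases Nat.lt_or_ge m (m' + 1) with h' | h'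
    · refine le_trans (ih (Nat.lt_succ_iff.mp h')) ?_
      rw [pow_mulVec_succ]
      exact mulVec_le_mulVec (pow_nonneg hA m') hsub
    · rw [Nat.le_antisymm hm h']

lemma pow_pos_of_path {A : Matrix ι ι ℝ} (hA : ∀ a b, 0 ≤ A a b) {a b : ι}
    (h : Relation.ReflTransGen (fun x y => 0 < A x y) a b) : ∃ m, 0 < (A ^ m) a b := by
  induction h with
  | refl => exact ⟨0, by simp [Matrix.one_apply]⟩
  | @tail c d hac hcd ih =>
    obtain ⟨m, hm⟩ := ih
    refine ⟨m + 1, ?_⟩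
    rw [pow_succ, Matrix.mul_apply]
    exact Finset.sum_pos' (fun k _ => mul_nonneg (pow_nonneg hA m a k) (hA k d))
      ⟨c, Finset.mem_univ c, mul_pos hm hcd⟩

/-- boost a nonzero nonneg subeigenvector to a positive one, given access. -/
lemma boost {A : Matrix ι ι ℝ} (hA : ∀ a b, 0 ≤ A a b) (h : ι → ℝ)
    (hnn : 0 ≤ h) (hsub : h ≤ A.mulVec h)
    (hreach : ∀ a, ∃ b m, 0 < h b ∧ 0 < (A ^ m) a b) :
    ∃ h' : ι → ℝ, (∀ a, 0 < h' a) ∧ h' ≤ A.mulVec h' := by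
  have hpos : ∀ a, ∃ m, 0 < ((A ^ m).mulVec h) a := by
    intro a
    obtain ⟨b, m, hb, hab⟩ := hreach a
    refine ⟨m, ?_⟩
    rw [mulVec_apply']
    exact Finset.sum_pos' (fun k _ => mul_nonneg (pow_nonneg hA m a k) (hnn k))
      ⟨b, Finset.mem_univ b, mul_pos hab hb⟩
  choose ma hma using hpos
  classical
  set M := Finset.univ.sup ma with hM
  refine ⟨(A ^ M).mulVec h, fun a =>
    lt_of_lt_of_le (hma a) (pow_mulVec_mono hA hsub (Finset.le_sup (Finset.mem_univ a)) a), ?_⟩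
  intro a
  calc ((A ^ M).mulVec h) a ≤ ((A ^ M).mulVec (A.mulVec h)) a :=
        mulVec_le_mulVec (pow_nonneg hA M) hsub a
  _ = ((A ^ M * A).mulVec h) a := by rw [Matrix.mulVec_mulVec]
  _ = ((A * A ^ M).mulVec h) a := by rw [← pow_succ, ← pow_succ']
  _ = (A.mulVec ((A ^ M).mulVec h)) a := by rw [Matrix.mulVec_mulVec]

lemma diverge {A : Matrix ι ι ℝ} (hA : ∀ a b, 0 ≤ A a b) (h : ι → ℝ)
    (hpos : ∀ a, 0 < h a) (hsub : h ≤ A.mulVec h) (i0 : ι)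
    (hret : ∀ j, ∃ q, 0 < (A ^ q) j i0)
    (c : ι → ℝ) (hcnn : 0 ≤ c) (hci : 0 < c i0) (B : ℝ)
    (hB : ∀ K, ∑ m ∈ Finset.range K, ((A ^ m).mulVec c) i0 ≤ B) : False := by
  haveI : Nonempty ι := ⟨i0⟩
  set H : ℝ := ∑ j, h j with hH
  have hjH : ∀ j, h j ≤ H := fun j =>
    Finset.single_le_sum (fun k _ => (hpos k).le) (Finset.mem_univ j)
  have hHpos : 0 < H := lt_of_lt_of_le (hpos i0) (hjH i0)
  have hcard : 0 < (Fintype.card ι : ℝ) := by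
    exact_mod_cast Fintype.card_pos
  set δ : ℝ := h i0 / (Fintype.card ι * H) with hδ
  have hδpos : 0 < δ := div_pos (hpos i0) (mul_pos hcard hHpos)
  have step1 : ∀ m, ∃ j, δ ≤ (A ^ m) i0 j := by
    intro m
    have h1 : h i0 ≤ ∑ j, (A ^ m) i0 j * h j := by
      have := le_pow_mulVec hA hsub m i0
      rwa [mulVec_apply'] at this
    have h2 : ∑ _j : ι, h i0 / (Fintype.card ι : ℝ) ≤ ∑ j, (A ^ m) i0 j * h j := by
      rw [Finset.sum_const, nsmul_eq_mul, Finset.card_univ, mul_div_cancel₀]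
      · exact h1
      · exact ne_of_gt hcard
    obtain ⟨j, _, hj⟩ := Finset.exists_le_of_sum_le Finset.univ_nonempty h2
    refine ⟨j, ?_⟩
    rw [hδ, div_mul_eq_div_div]
    rw [div_le_iff₀ hHpos]
    calc h i0 / (Fintype.card ι : ℝ) ≤ (A ^ m) i0 j * h j := hj
    _ ≤ (A ^ m) i0 j * H := mul_le_mul_of_nonneg_left (hjH j) (pow_nonneg hA m i0 j)
  choose q hq using hret
  set p := Finset.univ.sup q with hp
  set α : ℝ := Finset.univ.inf' Finset.univ_nonempty (fun j => (A ^ (q j)) j i0) with hα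
  have hαpos : 0 < α := by
    rw [hα, Finset.lt_inf'_iff]
    exact fun j _ => hq j
  have step2 : ∀ m, ∃ r ≤ p, δ * α ≤ (A ^ (m + r)) i0 i0 := by
    intro m
    obtain ⟨j, hj⟩ := step1 m
    refine ⟨q j, Finset.le_sup (Finset.mem_univ j), ?_⟩
    have expand : (A ^ (m + q j)) i0 i0 = ∑ k, (A ^ m) i0 k * (A ^ (q j)) k i0 := by
      rw [pow_add, Matrix.mul_apply]
    rw [expand]
    calc δ * α ≤ (A ^ m) i0 j * (A ^ (q j)) j i0 :=
          mul_le_mul hj (Finset.inf'_le _ (Finset.mem_univ j)) hαpos.le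
            (pow_nonneg hA m i0 j)
    _ ≤ ∑ k, (A ^ m) i0 k * (A ^ (q j)) k i0 :=
          Finset.single_le_sum
            (fun k _ => mul_nonneg (pow_nonneg hA m i0 k) (pow_nonneg hA (q j) k i0))
            (Finset.mem_univ j)
  have hterm : ∀ m, (A ^ m) i0 i0 * c i0 ≤ ((A ^ m).mulVec c) i0 := fun m => by
    rw [mulVec_apply']
    exact Finset.single_le_sum
      (fun k _ => mul_nonneg (pow_nonneg hA m i0 k) (hcnn k)) (Finset.mem_univ i0)
  have htermnn : ∀ m, 0 ≤ ((A ^ m).mulVec c) i0 := fun m =>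
    (mulVec_nonneg (pow_nonneg hA m) hcnn) i0
  set ε : ℝ := δ * α * c i0 with hε
  have hεpos : 0 < ε := mul_pos (mul_pos hδpos hαpos) hci
  obtain ⟨T, hT⟩ := exists_nat_gt (B / ε)
  have hBT : B < T * ε := by rwa [div_lt_iff₀ hεpos] at hT
  choose r hrle hrge using step2
  set nseq : ℕ → ℕ := fun t => t * (p + 1) + r (t * (p + 1)) with hnseq
  have hlt : ∀ t, nseq t < (t + 1) * (p + 1) := by
    intro t
    have := hrle (t * (p + 1))
    simp only [hnseq]
    have e : (t + 1) * (p + 1) = t * (p + 1) + (p + 1) := by ring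
    omega
  have hmono : StrictMono nseq := strictMono_nat_of_lt_succ fun t =>
    lt_of_lt_of_le (hlt t) (Nat.le_add_right _ _)
  have hsubset : (Finset.range T).image nseq ⊆ Finset.range (T * (p + 1)) := by
    intro m hm
    obtain ⟨t, ht, rfl⟩ := Finset.mem_image.mp hm
    rw [Finset.mem_range] at ht ⊢
    calc nseq t < (t + 1) * (p + 1) := hlt t
    _ ≤ T * (p + 1) := Nat.mul_le_mul_right _ ht
  have key : (T : ℝ) * ε ≤ ∑ m ∈ Finset.range (T * (p + 1)), ((A ^ m).mulVec c) i0 := by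
    have h1 : ∀ t ∈ Finset.range T, ε ≤ ((A ^ (nseq t)).mulVec c) i0 := by
      intro t _
      calc ε = (δ * α) * c i0 := by rw [hε]
      _ ≤ (A ^ (nseq t)) i0 i0 * c i0 :=
            mul_le_mul_of_nonneg_right (hrge _) hci.le
      _ ≤ _ := hterm _
    calc (T : ℝ) * ε = ∑ _t ∈ Finset.range T, ε := by
          rw [Finset.sum_const, Finset.card_range, nsmul_eq_mul]
    _ ≤ ∑ t ∈ Finset.range T, ((A ^ (nseq t)).mulVec c) i0 := Finset.sum_le_sum h1
    _ = ∑ m ∈ (Finset.range T).image nseq, ((A ^ m).mulVec c) i0 :=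
          (Finset.sum_image (f := fun m => ((A ^ m).mulVec c) i0)
            (fun a _ b _ hab => hmono.injective hab)).symm
    _ ≤ ∑ m ∈ Finset.range (T * (p + 1)), ((A ^ m).mulVec c) i0 :=
          Finset.sum_le_sum_of_subset_of_nonneg hsubset fun m _ _ => htermnn m
  exact absurd (le_trans key (hB _)) (not_le.mpr hBT)

lemma sub_eigen {κ : Type*} [Fintype κ] (A : Matrix κ κ ℝ) (hA : ∀ a b, 0 ≤ A a b)
    (h1 : SpecRad A = 1) :
    ∃ h : κ → ℝ, 0 ≤ h ∧ (∃ b, 0 < h b) ∧ h ≤ A.mulVec h := by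
  letI := Classical.decEq κ
  set M : Matrix κ κ ℂ := A.map (fun a => (a : ℂ)) with hM
  set S : Set ℝ := {r : ℝ | ∃ μ : ℂ, μ ∈ spectrum ℂ M ∧ r = ‖μ‖} with hS
  have h1' : sSup S = 1 := h1
  have hSfin : S.Finite := by
    have hsub : S ⊆ (fun μ : ℂ => ‖μ‖) '' (spectrum ℂ M) := by
      rintro r ⟨μ, hμ, rfl⟩
      exact ⟨μ, hμ, rfl⟩
    exact ((Matrix.finite_spectrum M).image _).subset hsub
  have hSne : S.Nonempty := by
    by_contra hne
    rw [Set.not_nonempty_iff_eq_empty] at hne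
    rw [hne, Real.sSup_empty] at h1'
    norm_num at h1'
  have hmem := hSne.csSup_mem hSfin
  rw [h1'] at hmem
  obtain ⟨μ, hμspec, hμabs⟩ := hmem
  have hdet : (algebraMap ℂ (Matrix κ κ ℂ) μ - M).det = 0 := by
    have hnu := spectrum.mem_iff.mp hμspec
    by_contra hd
    exact hnu ((Matrix.isUnit_iff_isUnit_det _).mpr (isUnit_iff_ne_zero.mpr hd))
  obtain ⟨u, hu0, huv⟩ := (Matrix.exists_mulVec_eq_zero_iff).mpr hdet
  have hMu : M.mulVec u = μ • u := by
    have h2 : (algebraMap ℂ (Matrix κ κ ℂ) μ).mulVec u - M.mulVec u = 0 := by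
      rw [← Matrix.sub_mulVec]; exact huv
    have h3 : (algebraMap ℂ (Matrix κ κ ℂ) μ).mulVec u = μ • u := by
      rw [Algebra.algebraMap_eq_smul_one, Matrix.smul_mulVec, Matrix.one_mulVec]
    rw [h3] at h2
    exact (sub_eq_zero.mp h2).symm
  refine ⟨fun a => ‖u a‖, fun a => norm_nonneg _, ?_, ?_⟩
  · obtain ⟨b, hb⟩ := Function.ne_iff.mp hu0
    exact ⟨b, norm_pos_iff.mpr hb⟩
  · intro a
    have key : ‖u a‖ = ‖(M.mulVec u) a‖ := by
      rw [hMu, Pi.smul_apply, smul_eq_mul, norm_mul, ← hμabs, one_mul]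
    show ‖u a‖ ≤ A.mulVec (fun b => ‖u b‖) a
    rw [key]
    have expand : (M.mulVec u) a = ∑ b, M a b * u b := rfl
    rw [expand]
    calc ‖∑ b, M a b * u b‖ ≤ ∑ b, ‖M a b * u b‖ :=
          norm_sum_le _ _
    _ = ∑ b, A a b * ‖u b‖ := by
          refine Finset.sum_congr rfl fun b _ => ?_
          rw [norm_mul]
          congr 1
          rw [hM]
          simp only [Matrix.map_apply, Complex.norm_real, Real.norm_eq_abs]
          exact abs_of_nonneg (hA a b)
    _ = A.mulVec (fun b => ‖u b‖) a := rfl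

lemma class_path {n : ℕ} {P : Matrix (Fin n) (Fin n) ℝ} {C : Set (Fin n)}
    (hC : IsClass P C) {a b : Fin n} (ha : a ∈ C) (hb : b ∈ C) :
    Relation.ReflTransGen (fun x y : C => 0 < P x.1 y.1) ⟨a, ha⟩ ⟨b, hb⟩ := by
  obtain ⟨i, hi⟩ := hC
  have ha' : AccessM P i a ∧ AccessM P a i := by rw [hi] at ha; exact ha
  have hb' : AccessM P i b ∧ AccessM P b i := by rw [hi] at hb; exact hb
  have hab : Relation.ReflTransGen (fun x y => 0 < P x y) a b :=
    Relation.ReflTransGen.trans ha'.2 hb'.1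
  have main : ∀ b' (_ : Relation.ReflTransGen (fun x y => 0 < P x y) a b'),
      AccessM P b' i → ∀ (hb' : b' ∈ C),
      Relation.ReflTransGen (fun x y : C => 0 < P x.1 y.1) ⟨a, ha⟩ ⟨b', hb'⟩ := by
    intro b' hab'
    induction hab' with
    | refl => intro _ _; exact Relation.ReflTransGen.refl
    | @tail c d hac hcd ih =>
      intro hdi hd'
      have hci : AccessM P c i :=
        Relation.ReflTransGen.trans (Relation.ReflTransGen.single hcd) hdi
      have hcC : c ∈ C := by
        rw [hi]
        exact ⟨Relation.ReflTransGen.trans ha'.1 hac, hci⟩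
      exact Relation.ReflTransGen.tail (ih hci hcC) hcd
  exact main b hab hb'.2 hb

end S17

/-- on an open convex downward domain, a convex monotone map with a
t-stable fixed point admits a limit projection f^ω on the set of points z with
f(z) ≤ z: the orbit of z converges to a fixed point agreeing with z on the critical
nodes, and the resulting map is a monotone convex projection onto the fixed-point
set. -/
theorem stmt17 {n : ℕ} (D : Set (Fin n → ℝ)) (hDo : IsOpen D) (hDc : Convex ℝ D)
    (hDdown : ∀ x ∈ D, ∀ y : Fin n → ℝ, y ≤ x → y ∈ D)
    (f : (Fin n → ℝ) → (Fin n → ℝ)) (hmaps : Set.MapsTo f D D)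
    (hconv : ∀ i, ConvexOn ℝ D (fun x => f x i))
    (hmono : ∀ x ∈ D, ∀ y ∈ D, x ≤ y → f x ≤ f y)
    (v : Fin n → ℝ) (hv : v ∈ D) (hfv : f v = v)
    (gv : (Fin n → ℝ) → (Fin n → ℝ))
    (hgv : ∀ y : Fin n → ℝ,
      Tendsto (fun ε : ℝ => ε⁻¹ • (f (v + ε • y) - f v)) (𝓝[>] (0:ℝ)) (𝓝 (gv y)))
    (hbv : ∀ x : Fin n → ℝ, ∃ u : Fin n → ℝ, ∀ k : ℕ, gv^[k] x ≤ u) :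
    let Nc : Set (Fin n) := {i | ∃ P ∈ Subdiff f D v, i ∈ CriticalNodes P}
    ∃ fω : (Fin n → ℝ) → (Fin n → ℝ),
      (∀ z ∈ D, f z ≤ z →
        Tendsto (fun k : ℕ => f^[k] z) atTop (𝓝 (fω z)) ∧
        f (fω z) = fω z ∧
        (∀ i ∈ Nc, fω z i = z i) ∧
        fω (fω z) = fω z) ∧
      (∀ z ∈ D, f z ≤ z → ∀ z' ∈ D, f z' ≤ z' → z ≤ z' → fω z ≤ fω z') ∧
      (∀ z ∈ D, f z ≤ z → ∀ z' ∈ D, f z' ≤ z' → ∀ t : ℝ, 0 ≤ t → t ≤ 1 →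
        fω (t • z + (1 - t) • z') ≤ t • fω z + (1 - t) • fω z') ∧
      (∀ u ∈ D, f u = u → fω u = u) := by
  intro Nc
  classical
  -- iterates stay in D
  have hD_iter : ∀ z ∈ D, ∀ k : ℕ, f^[k] z ∈ D := fun z hz k => hmaps.iterate k hz
  -- the orbit is decreasing
  have hanti : ∀ z ∈ D, f z ≤ z → ∀ k : ℕ, f^[k + 1] z ≤ f^[k] z := by
    intro z hz hfz k
    induction k with
    | zero => simpa using hfz
    | succ k ih =>
      calc f^[k + 1 + 1] z = f (f^[k + 1] z) := Function.iterate_succ_apply' f (k + 1) z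
      _ ≤ f (f^[k] z) := hmono _ (hD_iter z hz (k + 1)) _ (hD_iter z hz k) ih
      _ = f^[k + 1] z := (Function.iterate_succ_apply' f k z).symm
  have hmem_ev : ∀ y : Fin n → ℝ, ∀ᶠ ε : ℝ in 𝓝[>] (0:ℝ), v + ε • y ∈ D := by
    intro y
    have hc : Continuous fun ε : ℝ => v + ε • y := by continuity
    have h0 : Tendsto (fun ε : ℝ => v + ε • y) (𝓝 0) (𝓝 v) := by
      simpa using hc.tendsto 0
    exact Eventually.filter_mono nhdsWithin_le_nhds (h0.eventually_mem (hDo.mem_nhds hv))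
  have hpos_ev : ∀ᶠ ε : ℝ in 𝓝[>] (0:ℝ), 0 < ε := eventually_mem_nhdsWithin
  -- gv is monotone
  have hgvmono : ∀ y y' : Fin n → ℝ, y ≤ y' → gv y ≤ gv y' := by
    intro y y' hyy i
    have hev : ∀ᶠ ε : ℝ in 𝓝[>] (0:ℝ),
        (ε⁻¹ • (f (v + ε • y) - f v)) i ≤ (ε⁻¹ • (f (v + ε • y') - f v)) i := by
      filter_upwards [hmem_ev y', hpos_ev] with ε hD' hε
      have hle : v + ε • y ≤ v + ε • y' := by
        intro j
        simp only [Pi.add_apply, Pi.smul_apply, smul_eq_mul]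
        have := mul_le_mul_of_nonneg_left (hyy j) hε.le
        linarith
      have hmemy : v + ε • y ∈ D := hDdown _ hD' _ hle
      have hm := hmono _ hmemy _ hD' hle i
      simp only [Pi.smul_apply, Pi.sub_apply, smul_eq_mul]
      have h2 : f (v + ε • y) i - f v i ≤ f (v + ε • y') i - f v i := by linarith
      exact mul_le_mul_of_nonneg_left h2 (inv_nonneg.mpr hε.le)
    exact le_of_tendsto_of_tendsto ((tendsto_pi_nhds.mp (hgv y)) i)
      ((tendsto_pi_nhds.mp (hgv y')) i) hev
  -- gv y + gv (-y) ≥ 0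
  have hgvneg : ∀ y : Fin n → ℝ, -gv (-y) ≤ gv y := by
    intro y
    have hsum : Tendsto
        (fun ε : ℝ => ε⁻¹ • (f (v + ε • y) - f v) + ε⁻¹ • (f (v + ε • (-y)) - f v))
        (𝓝[>] (0:ℝ)) (𝓝 (gv y + gv (-y))) := (hgv y).add (hgv (-y))
    have hnn : ∀ i, (0:ℝ) ≤ (gv y + gv (-y)) i := by
      intro i
      refine ge_of_tendsto ((tendsto_pi_nhds.mp hsum) i) ?_
      filter_upwards [hmem_ev y, hmem_ev (-y), hpos_ev] with ε h1 h2 hε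
      have hmid : v = (1/2 : ℝ) • (v + ε • y) + (1/2 : ℝ) • (v + ε • (-y)) := by
        funext j
        simp only [Pi.add_apply, Pi.smul_apply, Pi.neg_apply, smul_eq_mul]
        ring
      have hcv := (hconv i).2 h1 h2 (by norm_num : (0:ℝ) ≤ 1/2)
        (by norm_num : (0:ℝ) ≤ 1/2) (by norm_num)
      rw [← hmid] at hcv
      have hv' : f v i = v i := by rw [hfv]
      simp only [Pi.add_apply, Pi.smul_apply, Pi.sub_apply, smul_eq_mul] at hcv ⊢
      have h3 : (0:ℝ) ≤ (f (v + ε • y) i - f v i) + (f (v + ε • (-y)) i - f v i) := by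
        linarith
      have h4 := mul_le_mul_of_nonneg_left h3 (inv_nonneg.mpr hε.le)
      rw [mul_zero, mul_add] at h4
      linarith
    intro i
    have := hnn i
    simp only [Pi.neg_apply, Pi.add_apply] at this ⊢
    linarith
  -- gv is dominated by the difference of f
  have hgvle : ∀ y : Fin n → ℝ, v + y ∈ D → gv y ≤ f (v + y) - v := by
    intro y hy i
    refine le_of_tendsto ((tendsto_pi_nhds.mp (hgv y)) i) ?_
    have hIoo : Set.Ioo (0:ℝ) 1 ∈ 𝓝[>] (0:ℝ) :=
      Ioo_mem_nhdsGT_of_mem (by constructor <;> norm_num)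
    filter_upwards [hIoo] with ε hε
    obtain ⟨hε0, hε1⟩ := hε
    have harg : v + ε • y = (1 - ε) • v + ε • (v + y) := by
      funext j
      simp only [Pi.add_apply, Pi.smul_apply, smul_eq_mul]
      ring
    have hcv := (hconv i).2 hv hy (by linarith : (0:ℝ) ≤ 1 - ε) hε0.le (by ring)
    rw [← harg] at hcv
    simp only [Pi.smul_apply, Pi.sub_apply, Pi.add_apply, smul_eq_mul] at hcv ⊢
    have hv' : f v i = v i := by rw [hfv]
    rw [inv_mul_le_iff₀ hε0]
    nlinarith [hcv]
  have hfd : ∀ x ∈ D, gv (x - v) ≤ f x - v := by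
    intro x hx
    have hxe : v + (x - v) = x := by abel
    have h1 := hgvle (x - v) (by rw [hxe]; exact hx)
    rwa [hxe] at h1
  -- iterates of gv bounded below via negation
  have hgv_lb : ∀ x : Fin n → ℝ, ∀ k, -(gv^[k] (-x)) ≤ gv^[k] x := by
    intro x k
    induction k with
    | zero => simp
    | succ k ih =>
      rw [Function.iterate_succ_apply' gv k x, Function.iterate_succ_apply' gv k (-x)]
      calc -(gv (gv^[k] (-x))) ≤ gv (-(gv^[k] (-x))) := by
            have := hgvneg (-(gv^[k] (-x)))
            rwa [neg_neg] at this
      _ ≤ gv (gv^[k] x) := hgvmono _ _ ih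
  -- lower bound for orbits of f
  have hlow : ∀ z ∈ D, f z ≤ z → ∀ k, v + gv^[k] (z - v) ≤ f^[k] z := by
    intro z hz hfz k
    induction k with
    | zero =>
      intro j
      simp only [Function.iterate_zero_apply, Pi.add_apply, Pi.sub_apply]
      ring_nf
      exact le_rfl
    | succ k ih =>
      rw [Function.iterate_succ_apply' gv k (z - v), Function.iterate_succ_apply' f k z]
      have h1 : gv^[k] (z - v) ≤ f^[k] z - v := by
        intro j
        have := ih j
        simp only [Pi.add_apply, Pi.sub_apply] at this ⊢
        linarith
      have h2 : gv (gv^[k] (z - v)) ≤ gv (f^[k] z - v) := hgvmono _ _ h1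
      have h3 : gv (f^[k] z - v) ≤ f (f^[k] z) - v := hfd _ (hD_iter z hz k)
      intro j
      have := h2 j
      have h3j := h3 j
      simp only [Pi.add_apply, Pi.sub_apply] at this h3j ⊢
      linarith
  have hLB : ∀ z ∈ D, f z ≤ z → ∃ L : Fin n → ℝ, ∀ k, L ≤ f^[k] z := by
    intro z hz hfz
    obtain ⟨u, hu⟩ := hbv (-(z - v))
    refine ⟨v - u, fun k j => ?_⟩
    have h1 := hlow z hz hfz k j
    have h2 := hgv_lb (z - v) k j
    have h3 := hu k j
    simp only [Pi.add_apply, Pi.sub_apply, Pi.neg_apply] at h1 h2 h3 ⊢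
    linarith
  have hBdd : ∀ z ∈ D, f z ≤ z → ∀ i, BddBelow (Set.range fun k : ℕ => f^[k] z i) := by
    intro z hz hfz i
    obtain ⟨L, hL⟩ := hLB z hz hfz
    exact ⟨L i, by rintro _ ⟨k, rfl⟩; exact hL k i⟩
  -- definition of the limit map
  set fω : (Fin n → ℝ) → (Fin n → ℝ) := fun z i => ⨅ k : ℕ, f^[k] z i with hfω
  have hconvz : ∀ z ∈ D, f z ≤ z → Tendsto (fun k : ℕ => f^[k] z) atTop (𝓝 (fω z)) := by
    intro z hz hfz
    rw [tendsto_pi_nhds]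
    intro i
    exact tendsto_atTop_ciInf
      (antitone_nat_of_succ_le fun k => hanti z hz hfz k i) (hBdd z hz hfz i)
  have hωle : ∀ z ∈ D, f z ≤ z → fω z ≤ z := by
    intro z hz hfz i
    have := ciInf_le (hBdd z hz hfz i) 0
    simpa using this
  have hωD : ∀ z ∈ D, f z ≤ z → fω z ∈ D := fun z hz hfz =>
    hDdown z hz _ (hωle z hz hfz)
  -- continuity of f on D
  have hfc : ContinuousOn f D :=
    continuousOn_pi.mpr fun i => (hconv i).continuousOn hDo
  have hωfix : ∀ z ∈ D, f z ≤ z → f (fω z) = fω z := by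
    intro z hz hfz
    have h1 : Tendsto (fun k : ℕ => f^[k + 1] z) atTop (𝓝 (fω z)) :=
      (hconvz z hz hfz).comp (tendsto_add_atTop_nat 1)
    have h2 : Tendsto (fun k : ℕ => f (f^[k] z)) atTop (𝓝 (f (fω z))) := by
      have hcw := (hfc (fω z) (hωD z hz hfz)).tendsto
      refine hcw.comp ?_
      exact tendsto_nhdsWithin_of_tendsto_nhds_of_eventually_within _
        (hconvz z hz hfz) (Eventually.of_forall fun k => hD_iter z hz k)
    have heq : (fun k : ℕ => f (f^[k] z)) = fun k : ℕ => f^[k + 1] z := by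
      funext k
      exact (Function.iterate_succ_apply' f k z).symm
    rw [heq] at h2
    exact tendsto_nhds_unique h2 h1
  have hωfixed : ∀ u : Fin n → ℝ, f u = u → fω u = u := by
    intro u hu
    funext i
    have : ∀ k : ℕ, f^[k] u = u := fun k => Function.iterate_fixed hu k
    simp only [hfω, this]
    exact ciInf_const
  -- THE KEY STEP
  have hkey : ∀ z ∈ D, f z ≤ z →
      ∀ i, (∃ P ∈ Subdiff f D v, i ∈ CriticalNodes P) → f z i = z i := by
    intro z hz hfz i hi
    obtain ⟨P, hP, C, ⟨hclass, hrad⟩, hiC⟩ := hi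
    letI : Fintype ↥C := Fintype.ofFinite _
    haveI : Nonempty ↥C := ⟨⟨i, hiC⟩⟩
    set A : Matrix ↥C ↥C ℝ := Matrix.of (fun a b : ↥C => P a.1 b.1) with hA
    -- P is entrywise nonnegative
    have hPnn : ∀ a b, 0 ≤ P a b := by
      intro a b
      have hsingle : (0:Fin n → ℝ) ≤ Pi.single b 1 := by
        intro j
        by_cases h : j = b <;> simp [Pi.single_apply, h]
      have hxle : v - Pi.single b 1 ≤ v := by
        intro j
        have := hsingle j
        simp only [Pi.zero_apply] at this
        simp only [Pi.sub_apply]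
        linarith
      have hxD : v - Pi.single b 1 ∈ D := hDdown v hv _ hxle
      have h1 := hP _ hxD a
      have h2 : f (v - Pi.single b 1) ≤ f v := hmono _ hxD _ hv hxle
      have e1 : (v - Pi.single b 1) - v = -(Pi.single b 1) := by abel
      rw [e1, Matrix.mulVec_neg, Matrix.mulVec_single] at h1
      have h2a := h2 a
      simp only [Pi.neg_apply, Pi.sub_apply] at h1
      have : -(P a b * 1) ≤ f (v - Pi.single b 1) a - f v a := h1
      nlinarith [this]
    have hAnn : ∀ a b : ↥C, 0 ≤ A a b := fun a b => hPnn a.1 b.1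
    -- P dominated by gv
    have hPle : ∀ y : Fin n → ℝ, P.mulVec y ≤ gv y := by
      intro y i'
      refine ge_of_tendsto ((tendsto_pi_nhds.mp (hgv y)) i') ?_
      filter_upwards [hmem_ev y, hpos_ev] with ε hD' hε
      have h1 := hP _ hD' i'
      have e1 : (v + ε • y) - v = ε • y := by abel
      rw [e1, Matrix.mulVec_smul] at h1
      simp only [Pi.smul_apply, Pi.sub_apply, smul_eq_mul] at h1 ⊢
      have h2 := mul_le_mul_of_nonneg_left h1 (inv_nonneg.mpr hε.le)
      rw [← mul_assoc, inv_mul_cancel₀ (ne_of_gt hε), one_mul] at h2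
      exact h2
    have hPpow : ∀ (y : Fin n → ℝ) (k : ℕ), (P ^ k).mulVec y ≤ gv^[k] y := by
      intro y k
      induction k with
      | zero => simp [Matrix.one_mulVec]
      | succ k ih =>
        rw [S17.pow_mulVec_succ', Function.iterate_succ_apply' gv k y]
        exact le_trans (hPle _) (hgvmono _ _ ih)
    -- the defect vector
    set s : Fin n → ℝ := z - v with hs
    set c : Fin n → ℝ := s - P.mulVec s with hc
    have hPs : P.mulVec s ≤ f z - v := by
      have := hP z hz
      rwa [hfv] at this
    have hc0 : (0:Fin n → ℝ) ≤ c := by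
      intro j
      have h1 := hPs j
      have h2 := hfz j
      simp only [hc, hs, Pi.sub_apply, Pi.zero_apply] at h1 ⊢
      linarith
    have hgap : z - f z ≤ c := by
      intro j
      have h1 := hPs j
      simp only [hc, hs, Pi.sub_apply] at h1 ⊢
      linarith
    -- it suffices to prove `c i ≤ 0`
    suffices hci : c i ≤ 0 by
      have h1 := hgap i
      have h2 := hfz i
      simp only [Pi.sub_apply] at h1
      linarith
    by_contra hpos
    push_neg at hpos
    -- lower bound on the powers applied to s
    obtain ⟨u, hu⟩ := hbv (-s)
    have hPlb : ∀ K, -u ≤ (P ^ K).mulVec s := by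
      intro K j
      have h1 := hPpow (-s) K j
      have h2 := hu K j
      have e1 : (P ^ K).mulVec (-s) = -((P ^ K).mulVec s) := Matrix.mulVec_neg _ _
      rw [e1] at h1
      simp only [Pi.neg_apply] at h1 ⊢
      linarith
    -- telescoping sums
    have htel : ∀ K, ∑ m ∈ Finset.range K, ((P ^ m).mulVec c) i
        = s i - ((P ^ K).mulVec s) i := by
      intro K
      induction K with
      | zero => simp [Matrix.one_mulVec]
      | succ K ih =>
        rw [Finset.sum_range_succ, ih]
        have e1 : (P ^ K).mulVec c
            = (P ^ K).mulVec s - (P ^ (K + 1)).mulVec s := by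
          rw [hc, Matrix.mulVec_sub, Matrix.mulVec_mulVec, ← pow_succ]
        rw [e1]
        simp only [Pi.sub_apply]
        ring
    set B : ℝ := s i + u i with hB
    have hBsum : ∀ K, ∑ m ∈ Finset.range K, ((P ^ m).mulVec c) i ≤ B := by
      intro K
      rw [htel K]
      have := hPlb K i
      simp only [Pi.neg_apply] at this
      simp only [hB]
      linarith
    -- pass to the submatrix on the class C
    have hAP : ∀ m (a b : ↥C), (A ^ m) a b ≤ (P ^ m) a.1 b.1 := by
      intro m
      induction m with
      | zero =>
        intro a b
        by_cases h : a = b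
        · subst h; simp [Matrix.one_apply]
        · have h' : a.1 ≠ b.1 := fun hh => h (Subtype.ext hh)
          simp [Matrix.one_apply, h, h']
      | succ m ih =>
        intro a b
        rw [pow_succ, pow_succ, Matrix.mul_apply, Matrix.mul_apply]
        calc ∑ k : ↥C, (A ^ m) a k * A k b
            ≤ ∑ k : ↥C, (P ^ m) a.1 k.1 * P k.1 b.1 := by
              refine Finset.sum_le_sum fun k _ => ?_
              have h1 := ih a k
              have h2 : 0 ≤ (A ^ m) a k := S17.pow_nonneg hAnn m a k
              have h3 : 0 ≤ P k.1 b.1 := hPnn k.1 b.1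
              have h4 : A k b = P k.1 b.1 := rfl
              rw [h4]
              exact mul_le_mul_of_nonneg_right h1 h3
        _ = ∑ k ∈ C.toFinset, (P ^ m) a.1 k * P k b.1 := by
              rw [← Finset.sum_set_coe]
        _ ≤ ∑ k : Fin n, (P ^ m) a.1 k * P k b.1 := by
              refine Finset.sum_le_sum_of_subset_of_nonneg (Finset.subset_univ _)
                fun k _ _ => mul_nonneg (S17.pow_nonneg hPnn m a.1 k) (hPnn k b.1)
    set i0 : ↥C := ⟨i, hiC⟩ with hi0
    set cC : ↥C → ℝ := fun a => c a.1 with hcC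
    have hsum_le : ∀ m, ((A ^ m).mulVec cC) i0 ≤ ((P ^ m).mulVec c) i := by
      intro m
      rw [S17.mulVec_apply', S17.mulVec_apply']
      calc ∑ k : ↥C, (A ^ m) i0 k * cC k
          ≤ ∑ k : ↥C, (P ^ m) i k.1 * c k.1 := by
            refine Finset.sum_le_sum fun k _ => ?_
            exact mul_le_mul_of_nonneg_right (hAP m i0 k) (hc0 k.1)
      _ = ∑ k ∈ C.toFinset, (P ^ m) i k * c k := by rw [← Finset.sum_set_coe]
      _ ≤ ∑ k : Fin n, (P ^ m) i k * c k :=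
            Finset.sum_le_sum_of_subset_of_nonneg (Finset.subset_univ _)
              fun k _ _ => mul_nonneg (S17.pow_nonneg hPnn m i k) (hc0 k)
    -- spectral data
    have hrad' : SpecRad A = 1 := hrad
    obtain ⟨h0, h0nn, ⟨b0, hb0⟩, h0sub⟩ := S17.sub_eigen A hAnn hrad'
    have hreach : ∀ a : ↥C, ∃ b m, 0 < h0 b ∧ 0 < (A ^ m) a b := by
      intro a
      obtain ⟨m, hm⟩ := S17.pow_pos_of_path hAnn (S17.class_path hclass a.2 b0.2)
      exact ⟨b0, m, hb0, by simpa using hm⟩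
    obtain ⟨h', h'pos, h'sub⟩ := S17.boost hAnn h0 h0nn h0sub hreach
    have hret : ∀ j : ↥C, ∃ q, 0 < (A ^ q) j i0 := by
      intro j
      obtain ⟨q, hq⟩ := S17.pow_pos_of_path hAnn (S17.class_path hclass j.2 hiC)
      exact ⟨q, by simpa using hq⟩
    refine S17.diverge hAnn h' h'pos h'sub i0 hret cC (fun a => hc0 a.1) hpos B ?_
    intro K
    calc ∑ m ∈ Finset.range K, ((A ^ m).mulVec cC) i0
        ≤ ∑ m ∈ Finset.range K, ((P ^ m).mulVec c) i :=
          Finset.sum_le_sum fun m _ => hsum_le m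
    _ ≤ B := hBsum K
  -- iterates agree with z on critical nodes
  have hiter_eq : ∀ z ∈ D, f z ≤ z →
      ∀ i, (∃ P ∈ Subdiff f D v, i ∈ CriticalNodes P) → ∀ k, f^[k] z i = z i := by
    intro z hz hfz i hi k
    induction k with
    | zero => simp
    | succ k ih =>
      rw [Function.iterate_succ_apply' f k z]
      have h1 : f (f^[k] z) ≤ f^[k] z := by
        have := hanti z hz hfz k
        rwa [Function.iterate_succ_apply' f k z] at this
      rw [hkey (f^[k] z) (hD_iter z hz k) h1 i hi]
      exact ih
  -- assemble everything
  refine ⟨fω, ?_, ?_, ?_, fun u _ hu => hωfixed u hu⟩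
  · intro z hz hfz
    refine ⟨hconvz z hz hfz, hωfix z hz hfz, ?_, ?_⟩
    · intro i hi
      have heq : ∀ k : ℕ, f^[k] z i = z i := hiter_eq z hz hfz i hi
      simp only [hfω, heq]
      exact ciInf_const
    · exact hωfixed (fω z) (hωfix z hz hfz)
  · intro z hz hfz z' hz' hfz' hle i
    have hcomp : ∀ k : ℕ, f^[k] z ≤ f^[k] z' := by
      intro k
      induction k with
      | zero => simpa using hle
      | succ k ih =>
        rw [Function.iterate_succ_apply' f k z, Function.iterate_succ_apply' f k z']
        exact hmono _ (hD_iter z hz k) _ (hD_iter z' hz' k) ih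
    exact ciInf_mono (hBdd z hz hfz i) fun k => hcomp k i
  · intro z hz hfz z' hz' hfz' t ht ht1
    set w : Fin n → ℝ := t • z + (1 - t) • z' with hw
    have hwD : w ∈ D := hDc hz hz' ht (by linarith) (by ring)
    have hfw : f w ≤ w := by
      intro i
      have hcv := (hconv i).2 hz hz' ht (by linarith : (0:ℝ) ≤ 1 - t) (by ring)
      have h1 := hfz i
      have h2 := hfz' i
      simp only [hw, Pi.add_apply, Pi.smul_apply, smul_eq_mul] at hcv ⊢
      nlinarith [hcv, mul_le_mul_of_nonneg_left h1 ht,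
        mul_le_mul_of_nonneg_left h2 (by linarith : (0:ℝ) ≤ 1 - t)]
    have hcomb : ∀ k : ℕ, f^[k] w ≤ t • f^[k] z + (1 - t) • f^[k] z' := by
      intro k
      induction k with
      | zero => simp [hw]
      | succ k ih =>
        rw [Function.iterate_succ_apply' f k w, Function.iterate_succ_apply' f k z,
          Function.iterate_succ_apply' f k z']
        have hmix : t • f^[k] z + (1 - t) • f^[k] z' ∈ D :=
          hDc (hD_iter z hz k) (hD_iter z' hz' k) ht (by linarith) (by ring)
        have h1 : f (f^[k] w) ≤ f (t • f^[k] z + (1 - t) • f^[k] z') :=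
          hmono _ (hD_iter w hwD k) _ hmix ih
        intro i
        have h2 := (hconv i).2 (hD_iter z hz k) (hD_iter z' hz' k) ht
          (by linarith : (0:ℝ) ≤ 1 - t) (by ring)
        have h3 := h1 i
        simp only [Pi.add_apply, Pi.smul_apply, smul_eq_mul] at h2 h3 ⊢
        linarith
    intro i
    have hwt := (tendsto_pi_nhds.mp (hconvz w hwD hfw)) i
    have hzt := (tendsto_pi_nhds.mp (hconvz z hz hfz)) i
    have hz't := (tendsto_pi_nhds.mp (hconvz z' hz' hfz')) i
    have hrt : Tendsto (fun k : ℕ => t * f^[k] z i + (1 - t) * f^[k] z' i) atTop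
        (𝓝 (t * fω z i + (1 - t) * fω z' i)) :=
      ((hzt.const_mul t).add (hz't.const_mul (1 - t)))
    have := le_of_tendsto_of_tendsto hwt hrt (Eventually.of_forall fun k => by
      have := hcomb k i
      simpa [Pi.add_apply, Pi.smul_apply] using this)
    simpa [Pi.add_apply, Pi.smul_apply] using this
end
end

section
/- Let f : D → D be a convex monotone map (D ⊆ ℝ^n open convex) and let v, w be fixed points of f with w ≤ v. If w ≪ v (strict inequality in every coordinate) or v is Lyapunov stable, then w is Lyapunov stable. -/
noncomputable section
open Filter Topology Set
open scoped Classical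

/-- Lyapunov stability of a fixed point of a self-map of D. -/
def LyapStable {n : ℕ} (f : (Fin n → ℝ) → (Fin n → ℝ)) (D : Set (Fin n → ℝ))
    (v : Fin n → ℝ) : Prop :=
  ∀ U ∈ 𝓝 v, ∃ V ∈ 𝓝 v, V ⊆ D ∧ ∀ x ∈ V, ∀ k : ℕ, 1 ≤ k → f^[k] x ∈ U

section Aux
variable {n : ℕ} {D : Set (Fin n → ℝ)} {f : (Fin n → ℝ) → (Fin n → ℝ)}

lemma iterMem (hmaps : Set.MapsTo f D D) {x} (hx : x ∈ D) (k : ℕ) : f^[k] x ∈ D :=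
  (hmaps.iterate k) hx

lemma iterMono (hmaps : Set.MapsTo f D D)
    (hmono : ∀ x ∈ D, ∀ y ∈ D, x ≤ y → f x ≤ f y)
    {x y} (hx : x ∈ D) (hy : y ∈ D) (hxy : x ≤ y) (k : ℕ) : f^[k] x ≤ f^[k] y := by
  induction k with
  | zero => simpa using hxy
  | succ k ih =>
    rw [Function.iterate_succ_apply', Function.iterate_succ_apply']
    exact hmono _ (iterMem hmaps hx k) _ (iterMem hmaps hy k) ih

lemma iterLeSelf (hmaps : Set.MapsTo f D D)
    (hmono : ∀ x ∈ D, ∀ y ∈ D, x ≤ y → f x ≤ f y)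
    {y₀} (hy₀ : y₀ ∈ D) (h : f y₀ ≤ y₀) (k : ℕ) : f^[k] y₀ ≤ y₀ := by
  induction k with
  | zero => simp
  | succ k ih =>
    rw [Function.iterate_succ_apply']
    exact le_trans (hmono _ (iterMem hmaps hy₀ k) _ hy₀ ih) h

lemma iterScale (hDc : Convex ℝ D) (hmaps : Set.MapsTo f D D)
    (hconv : ∀ i, ConvexOn ℝ D (fun x => f x i))
    (hmono : ∀ x ∈ D, ∀ y ∈ D, x ≤ y → f x ≤ f y)
    {w} (hw : w ∈ D) (hfw : f w = w)
    {s : ℝ} (hs0 : 0 ≤ s) (hs1 : s ≤ 1) {u} (hu : u ∈ D) (k : ℕ) :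
    ∀ i, f^[k] ((1 - s) • w + s • u) i ≤ (1 - s) * w i + s * f^[k] u i := by
  have hyD : (1 - s) • w + s • u ∈ D := hDc hw hu (by linarith) hs0 (by ring)
  induction k with
  | zero =>
    intro i
    simp [Pi.add_apply, Pi.smul_apply, smul_eq_mul]
  | succ k ih =>
    intro i
    have hmD : (1 - s) • w + s • f^[k] u ∈ D :=
      hDc hw (iterMem hmaps hu k) (by linarith) hs0 (by ring)
    have h1 : f (f^[k] ((1 - s) • w + s • u)) ≤ f ((1 - s) • w + s • f^[k] u) := by
      refine hmono _ (iterMem hmaps hyD k) _ hmD (fun j => ?_)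
      have := ih j
      simpa [Pi.add_apply, Pi.smul_apply, smul_eq_mul] using this
    have h2 := (hconv i).2 hw (iterMem hmaps hu k) (by linarith : (0:ℝ) ≤ 1 - s) hs0 (by ring)
    simp only [smul_eq_mul] at h2
    rw [Function.iterate_succ_apply', Function.iterate_succ_apply']
    refine le_trans (h1 i) (le_trans h2 ?_)
    rw [hfw]

lemma iterMid (hDc : Convex ℝ D) (hmaps : Set.MapsTo f D D)
    (hconv : ∀ i, ConvexOn ℝ D (fun x => f x i))
    (hmono : ∀ x ∈ D, ∀ y ∈ D, x ≤ y → f x ≤ f y)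
    {w} (hw : w ∈ D) (hfw : f w = w)
    {y y'} (hy : y ∈ D) (hy' : y' ∈ D) (hmid : ∀ i, w i = (y i + y' i) / 2) (k : ℕ) :
    ∀ i, w i ≤ (f^[k] y i + f^[k] y' i) / 2 := by
  induction k with
  | zero => intro i; simpa using (hmid i).le
  | succ k ih =>
    intro i
    have hmD : (1/2 : ℝ) • f^[k] y + (1/2 : ℝ) • f^[k] y' ∈ D :=
      hDc (iterMem hmaps hy k) (iterMem hmaps hy' k) (by norm_num) (by norm_num) (by norm_num)
    have hwm : w ≤ (1/2 : ℝ) • f^[k] y + (1/2 : ℝ) • f^[k] y' := by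
      intro j
      have := ih j
      simp only [Pi.add_apply, Pi.smul_apply, smul_eq_mul]
      linarith
    have h1 := (hmono _ hw _ hmD hwm) i
    have h2 := (hconv i).2 (iterMem hmaps hy k) (iterMem hmaps hy' k)
      (by norm_num : (0:ℝ) ≤ 1/2) (by norm_num : (0:ℝ) ≤ 1/2) (by norm_num)
    simp only [smul_eq_mul] at h2
    rw [hfw] at h1
    rw [Function.iterate_succ_apply', Function.iterate_succ_apply']
    linarith

lemma lemA (hDc : Convex ℝ D) (hmaps : Set.MapsTo f D D)
    (hconv : ∀ i, ConvexOn ℝ D (fun x => f x i))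
    (hmono : ∀ x ∈ D, ∀ y ∈ D, x ≤ y → f x ≤ f y)
    {w} (hw : w ∈ D) (hfw : f w = w)
    {r : ℝ} (hr : 0 < r) (hball : Metric.ball w r ⊆ D)
    {c : Fin n → ℝ} (hbd : ∀ y ∈ Metric.ball w r, ∀ k, f^[k] y ≤ c) :
    ∀ U ∈ 𝓝 w, ∃ V ∈ 𝓝 w, V ⊆ D ∧ ∀ x ∈ V, ∀ k : ℕ, 1 ≤ k → f^[k] x ∈ U := by
  intro U hU
  obtain ⟨ε, hε, hεU⟩ := Metric.mem_nhds_iff.1 hU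
  set M := ‖c - w‖ with hM
  have hM0 : (0:ℝ) ≤ M := norm_nonneg _
  set s : ℝ := min (1/2) (ε / (2 * (M + 1))) with hs
  have hs0 : 0 < s := lt_min (by norm_num) (by positivity)
  have hs1 : s ≤ 1 := (min_le_left _ _).trans (by norm_num)
  have hsM : s * M < ε := by
    have h1 : s ≤ ε / (2 * (M + 1)) := min_le_right _ _
    have h2 : ε / (2 * (M + 1)) * M < ε := by
      rw [div_mul_eq_mul_div, div_lt_iff₀ (by positivity)]
      nlinarith
    calc s * M ≤ ε / (2 * (M + 1)) * M := mul_le_mul_of_nonneg_right h1 hM0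
    _ < ε := h2
  have hsr : s * r ≤ r := by nlinarith
  -- the uniform box estimate for points of the small ball
  have key : ∀ y ∈ Metric.ball w (s * r), ∀ k, ∀ i,
      |f^[k] y i - w i| ≤ s * (c i - w i) := by
    have hup : ∀ y ∈ Metric.ball w (s * r), ∀ k, ∀ i,
        f^[k] y i ≤ w i + s * (c i - w i) := by
      intro y hy k i
      set u : Fin n → ℝ := w + s⁻¹ • (y - w) with hu
      have huball : u ∈ Metric.ball w r := by
        rw [mem_ball_iff_norm]
        have : u - w = s⁻¹ • (y - w) := by rw [hu]; abel
        rw [this, norm_smul, Real.norm_eq_abs, abs_of_pos (by positivity)]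
        rw [mem_ball_iff_norm] at hy
        calc s⁻¹ * ‖y - w‖ < s⁻¹ * (s * r) :=
              mul_lt_mul_of_pos_left hy (by positivity)
          _ = r := by field_simp
      have huD : u ∈ D := hball huball
      have hyu : (1 - s) • w + s • u = y := by
        funext j
        simp only [hu, Pi.add_apply, Pi.smul_apply, Pi.sub_apply, smul_eq_mul]
        field_simp
        ring
      have h := iterScale hDc hmaps hconv hmono hw hfw hs0.le hs1 huD k i
      rw [hyu] at h
      have hc := hbd u huball k i
      nlinarith [hc, hs0.le]
    intro y hy k i
    have hy' : w + (w - y) ∈ Metric.ball w (s * r) := by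
      rw [mem_ball_iff_norm] at hy ⊢
      have : w + (w - y) - w = -(y - w) := by abel
      rw [this, norm_neg]; exact hy
    have hyD : y ∈ D := hball (Metric.ball_subset_ball hsr hy)
    have hy'D : w + (w - y) ∈ D := hball (Metric.ball_subset_ball hsr hy')
    have hmid : ∀ j, w j = (y j + (w + (w - y)) j) / 2 := by
      intro j; simp only [Pi.add_apply, Pi.sub_apply]; ring
    have hlow := iterMid hDc hmaps hconv hmono hw hfw hyD hy'D hmid k i
    have h1 := hup y hy k i
    have h2 := hup _ hy' k i
    rw [abs_le]
    constructor <;> linarith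
  refine ⟨Metric.ball w (s * r), Metric.ball_mem_nhds _ (by positivity), ?_, ?_⟩
  · exact fun y hy => hball (Metric.ball_subset_ball hsr hy)
  · intro y hy k _
    apply hεU
    rw [Metric.mem_ball, dist_eq_norm]
    rw [pi_norm_lt_iff hε]
    intro i
    have h := key y hy k i
    have hcM : c i - w i ≤ M := by
      calc c i - w i ≤ |c i - w i| := le_abs_self _
        _ = ‖(c - w) i‖ := by simp [Real.norm_eq_abs]
        _ ≤ ‖c - w‖ := norm_le_pi_norm _ i
    have : |f^[k] y i - w i| ≤ s * M :=
      h.trans (mul_le_mul_of_nonneg_left hcM hs0.le)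
    calc ‖(f^[k] y - w) i‖ = |f^[k] y i - w i| := by simp [Real.norm_eq_abs]
      _ ≤ s * M := this
      _ < ε := hsM

end Aux

/-- if v and w are fixed points of a convex monotone map with w ≤ v,
and either w ≪ v or v is Lyapunov stable, then w is Lyapunov stable. -/
theorem stmt18 {n : ℕ} (D : Set (Fin n → ℝ)) (hDo : IsOpen D) (hDc : Convex ℝ D)
    (f : (Fin n → ℝ) → (Fin n → ℝ)) (hmaps : Set.MapsTo f D D)
    (hconv : ∀ i, ConvexOn ℝ D (fun x => f x i))
    (hmono : ∀ x ∈ D, ∀ y ∈ D, x ≤ y → f x ≤ f y)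
    (v w : Fin n → ℝ) (hv : v ∈ D) (hw : w ∈ D) (hfv : f v = v) (hfw : f w = w)
    (hwv : w ≤ v)
    (hcase : (∀ i, w i < v i) ∨ LyapStable f D v) :
    LyapStable f D w := by
  obtain ⟨ρw, hρw, hρwD⟩ := Metric.isOpen_iff.1 hDo w hw
  rcases hcase with hlt | hLv
  · rcases Nat.eq_zero_or_pos n with hn | hn
    · -- trivial case n = 0
      subst hn
      exact lemA hDc hmaps hconv hmono hw hfw hρw hρwD
        (c := w) (fun y hy k j => j.elim0)
    · have hne : Nonempty (Fin n) := ⟨⟨0, hn⟩⟩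
      set δ : Fin n → ℝ := v - w with hδdef
      have hδ : ∀ i, 0 < δ i := fun i => sub_pos.2 (hlt i)
      set t : ℝ := min 1 (ρw / (2 * (‖δ‖ + 1))) with ht
      have ht0 : 0 < t := lt_min one_pos (by positivity)
      have ht1 : t ≤ 1 := min_le_left _ _
      have htδ : t * ‖δ‖ < ρw := by
        have h1 : t ≤ ρw / (2 * (‖δ‖ + 1)) := min_le_right _ _
        have h2 : ρw / (2 * (‖δ‖ + 1)) * ‖δ‖ < ρw := by
          rw [div_mul_eq_mul_div, div_lt_iff₀ (by positivity)]
          nlinarith [norm_nonneg δ]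
        calc t * ‖δ‖ ≤ ρw / (2 * (‖δ‖ + 1)) * ‖δ‖ :=
              mul_le_mul_of_nonneg_right h1 (norm_nonneg δ)
          _ < ρw := h2
      set y₀ : Fin n → ℝ := w + t • δ with hy₀
      have hy₀ball : y₀ ∈ Metric.ball w ρw := by
        rw [mem_ball_iff_norm]
        have : y₀ - w = t • δ := by rw [hy₀]; abel
        rw [this, norm_smul, Real.norm_eq_abs, abs_of_pos ht0]
        exact htδ
      have hy₀D : y₀ ∈ D := hρwD hy₀ball
      have hcomb : (1 - t) • w + t • v = y₀ := by
        funext j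
        simp only [hy₀, hδdef, Pi.add_apply, Pi.smul_apply, Pi.sub_apply, smul_eq_mul]
        ring
      have hfy₀ : f y₀ ≤ y₀ := by
        intro i
        have h2 := (hconv i).2 hw hv (by linarith : (0:ℝ) ≤ 1 - t) ht0.le (by ring)
        simp only [smul_eq_mul] at h2
        rw [hcomb] at h2
        have hwc : f w i = w i := by rw [hfw]
        have hvc : f v i = v i := by rw [hfv]
        have : (1 - t) * f w i + t * f v i = y₀ i := by
          rw [hwc, hvc, ← hcomb]
          simp only [Pi.add_apply, Pi.smul_apply, smul_eq_mul]
        linarith [h2, this.le]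
      -- radius
      have huniv : (Finset.univ : Finset (Fin n)).Nonempty := Finset.univ_nonempty
      set δm : ℝ := Finset.univ.inf' huniv δ with hδm
      have hδm0 : 0 < δm := by
        rw [hδm, Finset.lt_inf'_iff]
        exact fun i _ => hδ i
      have hδmle : ∀ i, δm ≤ δ i := fun i => Finset.inf'_le _ (Finset.mem_univ i)
      have hδmnorm : δm ≤ ‖δ‖ := by
        obtain ⟨i⟩ := hne
        calc δm ≤ δ i := hδmle i
          _ ≤ |δ i| := le_abs_self _
          _ ≤ ‖δ‖ := by simpa [Real.norm_eq_abs] using norm_le_pi_norm δ i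
      have hrρ : t * δm < ρw := lt_of_le_of_lt
        (mul_le_mul_of_nonneg_left hδmnorm ht0.le) htδ
      refine lemA hDc hmaps hconv hmono hw hfw (mul_pos ht0 hδm0)
        (fun y hy => hρwD (Metric.ball_subset_ball hrρ.le hy)) (c := y₀) ?_
      intro y hy k
      have hyD : y ∈ D := hρwD (Metric.ball_subset_ball hrρ.le hy)
      have hyy₀ : y ≤ y₀ := by
        intro i
        rw [mem_ball_iff_norm] at hy
        have h1 : |y i - w i| ≤ ‖y - w‖ := by
          simpa [Real.norm_eq_abs] using norm_le_pi_norm (y - w) i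
        have h2 : y i - w i ≤ t * δm := by
          have := le_abs_self (y i - w i)
          linarith
        have h3 : t * δm ≤ t * δ i := mul_le_mul_of_nonneg_left (hδmle i) ht0.le
        have : y₀ i = w i + t * δ i := by
          simp only [hy₀, Pi.add_apply, Pi.smul_apply, smul_eq_mul]
        linarith
      calc f^[k] y ≤ f^[k] y₀ := iterMono hmaps hmono hyD hy₀D hyy₀ k
        _ ≤ y₀ := iterLeSelf hmaps hmono hy₀D hfy₀ k
  · obtain ⟨Vv, hVv, hVvD, horb⟩ := hLv (Metric.ball v 1) (Metric.ball_mem_nhds _ one_pos)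
    obtain ⟨ρ', hρ'0, hρ'V⟩ := Metric.mem_nhds_iff.1 hVv
    set r : ℝ := min ρ' (min ρw 1) with hr
    have hr0 : 0 < r := lt_min hρ'0 (lt_min hρw one_pos)
    have hrρw : r ≤ ρw := (min_le_right _ _).trans (min_le_left _ _)
    have hr1 : r ≤ 1 := (min_le_right _ _).trans (min_le_right _ _)
    have hrρ' : r ≤ ρ' := min_le_left _ _
    refine lemA hDc hmaps hconv hmono hw hfw hr0
      (fun y hy => hρwD (Metric.ball_subset_ball hrρw hy))
      (c := fun i => v i + 1) ?_
    intro y hy k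
    have hyD : y ∈ D := hρwD (Metric.ball_subset_ball hrρw hy)
    rw [mem_ball_iff_norm] at hy
    have habs : ∀ i, |y i - w i| < r := fun i => lt_of_le_of_lt
      (by simpa [Real.norm_eq_abs] using norm_le_pi_norm (y - w) i) hy
    set z : Fin n → ℝ := y + (v - w) with hz
    have hzv : z - v = y - w := by rw [hz]; abel
    have hzV : z ∈ Vv := by
      apply hρ'V
      rw [mem_ball_iff_norm, hzv]
      exact lt_of_lt_of_le hy hrρ'
    have hzD : z ∈ D := hVvD hzV
    have hyz : y ≤ z := by
      intro i
      simp only [hz, Pi.add_apply, Pi.sub_apply]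
      linarith [hwv i]
    cases k with
    | zero =>
      intro i
      show y i ≤ v i + 1
      have := habs i
      have h1 : y i - w i < 1 := lt_of_le_of_lt (le_abs_self _) (lt_of_lt_of_le this hr1)
      linarith [hwv i]
    | succ m =>
      intro i
      show f^[m+1] y i ≤ v i + 1
      have h1 : f^[m+1] y i ≤ f^[m+1] z i := iterMono hmaps hmono hyD hzD hyz (m+1) i
      have h2 : f^[m+1] z ∈ Metric.ball v 1 := horb z hzV (m+1) (by omega)
      rw [mem_ball_iff_norm] at h2
      have h3 : |f^[m+1] z i - v i| < 1 := lt_of_le_of_lt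
        (by simpa [Real.norm_eq_abs] using norm_le_pi_norm (f^[m+1] z - v) i) h2
      have := le_abs_self (f^[m+1] z i - v i)
      linarith
end
end
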